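/- arXiv:2106.04083 — 8 statements merged into one kernel-verified Lean document; each statement's English description precedes it below -/
import Mathlib

section
/- Let d_1, d_2, …, d_n be positive integers with sum D, and write D = dn + r with 0 ≤ r < n. Then the potential P(d_1, …, d_n) = Σ_{i<j} min{d_i, d_j} is at most P(d, …, d, d+1, …, d+1), where d appears n−r times and d+1 appears r times. -/
namespace AvgConn

open Finset

/-- `t m = m * (m-1)`, twice the number of pairs from `m` elements. -/
def t (m : ℕ) : ℕ := m * (m - 1)

lemma t_add (m : ℕ) : t m + m = m * m := by
  cases m with
  | zero => simp [t]
  | succ c => simp only [t, Nat.succ_sub_one]; ring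

lemma t_smooth (r u s : ℕ) : t (r + u) + t (r + s) ≤ t (r + u + s) + t r := by
  have h1 := t_add (r + u)
  have h2 := t_add (r + s)
  have h3 := t_add (r + u + s)
  have h4 := t_add r
  nlinarith [h1, h2, h3, h4]

lemma t_superadd (a b : ℕ) : t a + t b ≤ t (a + b) := by
  have := t_smooth 0 a b
  simpa [t] using this

/-- Twice the balanced potential for total sum `S` on `n` vertices. -/
def G (n S : ℕ) : ℕ := (S / n) * t n + t (S % n)

lemma G_step (n S k : ℕ) (hn : 0 < n) (hk1 : 1 ≤ k) (hkn : k ≤ n) (hkS : k ≤ S) :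
    t k + G n (S - k) ≤ G n S := by
  have hS : n * (S / n) + S % n = S := Nat.div_add_mod S n
  have hr : S % n < n := Nat.mod_lt _ hn
  rcases le_or_gt k (S % n) with h | h
  · -- k ≤ S % n
    have hSk : S - k = n * (S / n) + (S % n - k) := by omega
    have hd : (S - k) / n = S / n := by
      have e0 : (S % n - k) / n = 0 := Nat.div_eq_of_lt (by omega)
      rw [hSk, Nat.mul_add_div hn, e0, Nat.add_zero]
    have hm : (S - k) % n = S % n - k := by
      rw [hSk, Nat.mul_add_mod]; exact Nat.mod_eq_of_lt (by omega)
    have hkey : t k + t (S % n - k) ≤ t (S % n) := by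
      have h2 := t_superadd k (S % n - k)
      rwa [show k + (S % n - k) = S % n by omega] at h2
    simp only [G, hd, hm]
    omega
  · -- S % n < k, so S / n ≥ 1
    have hq1 : 1 ≤ S / n := by
      rcases Nat.eq_zero_or_pos (S / n) with h0 | h0
      · exfalso
        rw [h0, Nat.mul_zero, Nat.zero_add] at hS
        omega
      · exact h0
    have hnq : n * (S / n) = n * (S / n - 1) + n := by
      have h' : S / n = (S / n - 1) + 1 := by omega
      calc n * (S / n) = n * ((S / n - 1) + 1) := by rw [← h']
        _ = n * (S / n - 1) + n := by ring
    have hSk : S - k = n * (S / n - 1) + (n + S % n - k) := by omega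
    have hmlt : n + S % n - k < n := by omega
    have hd : (S - k) / n = S / n - 1 := by
      have e0 : (n + S % n - k) / n = 0 := Nat.div_eq_of_lt hmlt
      rw [hSk, Nat.mul_add_div hn, e0, Nat.add_zero]
    have hm : (S - k) % n = n + S % n - k := by
      rw [hSk, Nat.mul_add_mod]; exact Nat.mod_eq_of_lt hmlt
    have hkey : t k + t (n + S % n - k) ≤ t n + t (S % n) := by
      have h2 := t_smooth (S % n) (k - S % n) (n - k)
      rw [show S % n + (k - S % n) + (n - k) = n by omega,
        show S % n + (k - S % n) = k by omega,
        show S % n + (n - k) = n + S % n - k by omega] at h2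
      exact h2
    have hqt : (S / n) * t n = (S / n - 1) * t n + t n := by
      have h' : S / n = (S / n - 1) + 1 := by omega
      calc (S / n) * t n = ((S / n - 1) + 1) * t n := by rw [← h']
        _ = (S / n - 1) * t n + t n := by ring
    simp only [G, hd, hm]
    omega

/-- Key lemma: twice the potential is at most `G n S`. -/
lemma key (n : ℕ) (hn : 0 < n) : ∀ S : ℕ, ∀ d : Fin n → ℕ, (∑ i, d i) = S →
    2 * (∑ i : Fin n, ∑ j ∈ Finset.Ioi i, min (d i) (d j)) ≤ G n S := by
  intro S
  induction S using Nat.strong_induction_on with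
  | _ S ih =>
    intro d hsum
    rcases Nat.eq_zero_or_pos S with h0 | hSpos
    · subst h0
      have hz : ∀ i ∈ (univ : Finset (Fin n)), d i = 0 :=
        (Finset.sum_eq_zero_iff).mp hsum
      have hz' : ∀ i : Fin n, d i = 0 := fun i => hz i (mem_univ i)
      simp [hz', G, t]
    · set x : Fin n → ℕ := fun i => if d i = 0 then 0 else 1 with hx
      set k := ∑ i, x i with hk
      have hxle : ∀ i, x i ≤ d i := by
        intro i; simp only [hx]; split_ifs with h <;> omega
      have hx01 : ∀ i, x i = 0 ∨ x i = 1 := by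
        intro i; simp only [hx]; split_ifs <;> simp
      have hk1 : 1 ≤ k := by
        by_contra hc
        have hk0 : (∑ i, x i) = 0 := by omega
        have hz : ∀ i : Fin n, d i = 0 := by
          intro i
          have h := (Finset.sum_eq_zero_iff).mp hk0 i (mem_univ i)
          simp only [hx] at h
          by_contra hd0
          simp [hd0] at h
        have hS0 : S = 0 := by
          rw [← hsum]; exact Finset.sum_eq_zero (fun i _ => hz i)
        omega
      have hkn : k ≤ n := by
        have h2 : k ≤ ∑ _i : Fin n, 1 := by
          rw [hk]
          exact Finset.sum_le_sum (fun i _ => by rcases hx01 i with h | h <;> omega)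
        simpa using h2
      have hkS : k ≤ S := by
        rw [hk, ← hsum]
        exact Finset.sum_le_sum (fun i _ => hxle i)
      set d' : Fin n → ℕ := fun i => d i - 1 with hd'
      have hsum' : ∑ i, d' i = S - k := by
        have hpt : ∀ i ∈ (univ : Finset (Fin n)), d i = d' i + x i := by
          intro i _; simp only [hd', hx]; split_ifs with h <;> omega
        have h2 : S = ∑ i, (d' i + x i) := by
          rw [← hsum]; exact Finset.sum_congr rfl hpt
        rw [Finset.sum_add_distrib] at h2
        omega
      -- Step 1: removing one from every vertex
      have step1 : (∑ i : Fin n, ∑ j ∈ Finset.Ioi i, min (d i) (d j)) ≤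
          (∑ i : Fin n, ∑ j ∈ Finset.Ioi i, min (d' i) (d' j)) +
          (∑ i : Fin n, ∑ j ∈ Finset.Ioi i, x i * x j) := by
        rw [← Finset.sum_add_distrib]
        apply Finset.sum_le_sum
        intro i _
        rw [← Finset.sum_add_distrib]
        apply Finset.sum_le_sum
        intro j _
        simp only [hd', hx]
        split_ifs with h1 h2 <;> omega
      -- Step 2: the pair count
      have step2 : 2 * (∑ i : Fin n, ∑ j ∈ Finset.Ioi i, x i * x j) = t k := by
        have hoff : ∑ i : Fin n, ∑ j ∈ Finset.Ioi i, (x j * x i + x i * x j)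
            = ∑ i : Fin n, ∑ j ∈ ({i}ᶜ : Finset (Fin n)), x j * x i := by
          have h := Finset.sum_sum_Ioi_add_eq_sum_sum_off_diag (f := fun i j => x i * x j)
          convert h using 4
        have hL : ∑ i : Fin n, ∑ j ∈ Finset.Ioi i, (x j * x i + x i * x j) =
            2 * (∑ i : Fin n, ∑ j ∈ Finset.Ioi i, x i * x j) := by
          rw [Finset.mul_sum]
          refine Finset.sum_congr rfl fun i _ => ?_
          rw [Finset.mul_sum]
          exact Finset.sum_congr rfl fun j _ => by ring
        have hR : ∑ i : Fin n, ∑ j ∈ ({i}ᶜ : Finset (Fin n)), x j * x i = (k - 1) * k := by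
          have hpt : ∀ i ∈ (univ : Finset (Fin n)),
              (∑ j ∈ ({i}ᶜ : Finset (Fin n)), x j * x i) = (k - 1) * x i := by
            intro i _
            rw [← Finset.sum_mul]
            have hcompl : (∑ j ∈ ({i}ᶜ : Finset (Fin n)), x j) + x i = k := by
              rw [hk]
              simpa using Finset.sum_compl_add_sum ({i} : Finset (Fin n)) x
            rcases hx01 i with h | h
            · rw [h]; ring
            · rw [h]
              have h2 : (∑ j ∈ ({i}ᶜ : Finset (Fin n)), x j) = k - 1 := by omega
              rw [h2]
          rw [Finset.sum_congr rfl hpt, ← Finset.mul_sum, ← hk]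
        rw [hL] at hoff
        rw [hoff, hR]
        rcases Nat.eq_zero_or_pos k with h | h
        · simp [h, t]
        · simp only [t]
          have : k - 1 + 1 = k := by omega
          nlinarith [this]
      -- Combine with the induction hypothesis
      have ihh := ih (S - k) (by omega) d' hsum'
      have hstep := G_step n S k hn hk1 hkn hkS
      omega

theorem potential_le_balanced (n q r : ℕ) (hn : 0 < n) (hr : r < n)
    (d : Fin n → ℕ) (hpos : ∀ i, 0 < d i) (hsum : ∑ i, d i = q * n + r) :
    ∑ i : Fin n, ∑ j ∈ Finset.Ioi i, min (d i) (d j) ≤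
      ∑ i : Fin n, ∑ j ∈ Finset.Ioi i,
        min (if (i : ℕ) < n - r then q else q + 1)
          (if (j : ℕ) < n - r then q else q + 1) := by
  have hG : G n (q * n + r) = q * t n + t r := by
    have hd : (q * n + r) / n = q := by
      have e0 : r / n = 0 := Nat.div_eq_of_lt hr
      rw [mul_comm, Nat.mul_add_div hn, e0, Nat.add_zero]
    have hm : (q * n + r) % n = r := by
      rw [mul_comm, Nat.mul_add_mod]; exact Nat.mod_eq_of_lt hr
    simp [G, hd, hm]
  have h1 := key n hn (q * n + r) d hsum
  rw [hG] at h1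
  -- compute the RHS
  have hrhs : ∀ i : Fin n, ∀ j ∈ Finset.Ioi i,
      min (if (i : ℕ) < n - r then q else q + 1) (if (j : ℕ) < n - r then q else q + 1)
        = q + (if (i : ℕ) < n - r then 0 else 1) := by
    intro i j hj
    have hij' : i < j := Finset.mem_Ioi.mp hj
    have hij : (i : ℕ) < (j : ℕ) := hij'
    split_ifs <;> omega
  have hrw : (∑ i : Fin n, ∑ j ∈ Finset.Ioi i,
      min (if (i : ℕ) < n - r then q else q + 1) (if (j : ℕ) < n - r then q else q + 1))
      = ∑ m ∈ Finset.range n, (n - 1 - m) * (q + (if m < n - r then 0 else 1)) := by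
    rw [← Fin.sum_univ_eq_sum_range (fun m => (n - 1 - m) * (q + (if m < n - r then 0 else 1))) n]
    refine Finset.sum_congr rfl fun i _ => ?_
    rw [Finset.sum_congr rfl (hrhs i), Finset.sum_const, Fin.card_Ioi, smul_eq_mul]
  rw [hrw]
  -- split into the two pieces
  have hsplit : ∑ m ∈ Finset.range n, (n - 1 - m) * (q + (if m < n - r then 0 else 1))
      = q * (∑ m ∈ Finset.range n, (n - 1 - m)) +
        ∑ m ∈ Finset.range n, (if m < n - r then 0 else (n - 1 - m)) := by
    rw [Finset.mul_sum, ← Finset.sum_add_distrib]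
    refine Finset.sum_congr rfl fun m _ => ?_
    split_ifs <;> ring
  have hA : 2 * (∑ m ∈ Finset.range n, (n - 1 - m)) = n * (n - 1) := by
    rw [Finset.sum_range_reflect (fun m => m) n]
    have := Finset.sum_range_id_mul_two n
    omega
  have hB : 2 * (∑ m ∈ Finset.range n, (if m < n - r then 0 else (n - 1 - m))) = r * (r - 1) := by
    have hnr : n - r ≤ n := Nat.sub_le n r
    have hsplit2 : (∑ m ∈ Finset.Ico 0 (n - r), (if m < n - r then 0 else (n - 1 - m)))
        + (∑ m ∈ Finset.Ico (n - r) n, (if m < n - r then 0 else (n - 1 - m)))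
        = ∑ m ∈ Finset.range n, (if m < n - r then 0 else (n - 1 - m)) := by
      rw [Finset.range_eq_Ico]
      exact Finset.sum_Ico_consecutive _ (Nat.zero_le _) hnr
    have h01 : (∑ m ∈ Finset.Ico 0 (n - r), (if m < n - r then 0 else (n - 1 - m))) = 0 := by
      apply Finset.sum_eq_zero
      intro m hm
      rw [Finset.mem_Ico] at hm
      simp [hm.2]
    have h02 : (∑ m ∈ Finset.Ico (n - r) n, (if m < n - r then 0 else (n - 1 - m)))
        = ∑ i ∈ Finset.range r, (r - 1 - i) := by
      rw [Finset.sum_Ico_eq_sum_range]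
      have hnn : n - (n - r) = r := by omega
      rw [hnn]
      refine Finset.sum_congr rfl fun i hi => ?_
      rw [Finset.mem_range] at hi
      have hni : ¬ ((n - r) + i < n - r) := by omega
      simp only [hni, if_false]
      omega
    have h03 : ∑ i ∈ Finset.range r, (r - 1 - i) = ∑ i ∈ Finset.range r, i :=
      Finset.sum_range_reflect (fun m => m) r
    have := Finset.sum_range_id_mul_two r
    omega
  rw [hsplit]
  have ht : t n = n * (n - 1) := rfl
  have htr : t r = r * (r - 1) := rfl
  set A := ∑ m ∈ Finset.range n, (n - 1 - m) with hAd
  set B := ∑ m ∈ Finset.range n, (if m < n - r then 0 else (n - 1 - m)) with hBd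
  have h2 : 2 * (q * A + B) = q * t n + t r := by
    rw [ht, htr]
    have h3 : 2 * (q * A + B) = q * (2 * A) + 2 * B := by ring
    rw [h3, hA, hB]
  omega

end AvgConn
end

section
/- If s positive integers d_1, …, d_s each exceed k and have sum equal to k(n−s) for some n > s, then Σ_{1≤i<j≤s} min{d_i, d_j} ≤ (d)·C(s,2) + C(r,2), where k(n−s) = ds + r with 0 ≤ r < s. -/
namespace AvgConn

open Finset

lemma two_mul_choose_two (n : ℕ) : 2 * n.choose 2 = n * (n - 1) := by
  rw [Nat.choose_two_right, Nat.mul_div_cancel']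
  rcases n with _ | m
  · simp
  · simpa [Nat.mul_comm] using Nat.even_mul_succ_self m |>.two_dvd

lemma merge (s a b : ℕ) (ha : a ≤ s) (hb : b ≤ s) :
    ((a + b) % s) * (s - (a + b) % s) ≤ a * (s - a) + b * (s - b) := by
  rcases Nat.eq_zero_or_pos s with rfl | hs
  · interval_cases a <;> interval_cases b <;> simp
  rcases lt_or_ge (a + b) s with h | h
  · rw [Nat.mod_eq_of_lt h]
    zify [ha, hb, h.le]
    nlinarith
  · rcases eq_or_lt_of_le h with h' | h'
    · rw [← h', Nat.mod_self]; simp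
    rcases lt_or_ge (a + b) (2 * s) with h2 | h2
    · have : (a + b) % s = a + b - s := by
        rw [Nat.mod_eq_sub_mod h, Nat.mod_eq_of_lt (by omega)]
      rw [this]
      have h3 : a + b - s ≤ s := by omega
      zify [ha, hb, h, h3]
      nlinarith
    · have : a = s ∧ b = s := by omega
      rw [this.1, this.2]
      simp

lemma key_s2 (s : ℕ) (hs : 0 < s) (f : ℕ → ℕ) (hf : ∀ t, f t ≤ s) (M : ℕ) :
    ((∑ t ∈ range M, f t) % s) * (s - (∑ t ∈ range M, f t) % s)
      ≤ ∑ t ∈ range M, f t * (s - f t) := by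
  induction M with
  | zero => simp
  | succ m ih =>
    rw [sum_range_succ, sum_range_succ]
    have hstep : ∀ x : ℕ, x ≤ s → (x % s) * (s - x % s) = x * (s - x) := by
      intro x hx
      rcases eq_or_lt_of_le hx with rfl | hx'
      · simp
      · rw [Nat.mod_eq_of_lt hx']
    calc ((∑ t ∈ range m, f t + f m) % s) * (s - (∑ t ∈ range m, f t + f m) % s)
        = (((∑ t ∈ range m, f t) % s + f m % s) % s) *
            (s - ((∑ t ∈ range m, f t) % s + f m % s) % s) := by
          rw [← Nat.add_mod]
      _ ≤ ((∑ t ∈ range m, f t) % s) * (s - (∑ t ∈ range m, f t) % s)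
            + (f m % s) * (s - f m % s) :=
          merge s _ _ (Nat.mod_lt _ hs).le (Nat.mod_lt _ hs).le
      _ ≤ (∑ t ∈ range m, f t * (s - f t)) + f m * (s - f m) := by
          rw [hstep (f m) (hf m)]
          exact Nat.add_le_add_right ih _

theorem potential_bound_high_degree_vertices (k n s q r : ℕ) (hs : 0 < s)
    (hns : s < n) (d : Fin s → ℕ) (hd : ∀ i, k < d i)
    (hsum : ∑ i, d i = k * (n - s)) (hq : k * (n - s) = q * s + r) (hr : r < s) :
    ∑ i : Fin s, ∑ j ∈ Finset.Ioi i, min (d i) (d j) ≤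
      q * s.choose 2 + r.choose 2 := by
  set N := k * (n - s) with hN
  set m : ℕ → ℕ := fun t => (univ.filter (fun i : Fin s => t < d i)).card with hm
  have hm_le : ∀ t, m t ≤ s := by
    intro t
    simpa using card_filter_le univ (fun i : Fin s => t < d i)
  have hd_le : ∀ i, d i ≤ N := by
    intro i
    rw [← hsum]
    exact single_le_sum (fun j _ => Nat.zero_le _) (mem_univ i)
  have hm_sum_eq : ∀ t, m t = ∑ i : Fin s, (if t < d i then 1 else 0) :=
    fun t => card_filter _ _
  have hsum_m : ∑ t ∈ range N, m t = N := by
    calc ∑ t ∈ range N, m t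
        = ∑ t ∈ range N, ∑ i : Fin s, (if t < d i then 1 else 0) := by
          simp_rw [hm_sum_eq]
      _ = ∑ i : Fin s, ∑ t ∈ range N, (if t < d i then 1 else 0) := sum_comm
      _ = ∑ i : Fin s, d i := by
          refine Finset.sum_congr rfl fun i _ => ?_
          rw [← card_filter]
          have : (range N).filter (fun t => t < d i) = range (d i) := by
            ext t
            simp only [mem_filter, mem_range]
            exact ⟨fun h => h.2, fun h => ⟨lt_of_lt_of_le h (hd_le i), h⟩⟩
          rw [this, card_range]
      _ = N := hsum
  -- double sum identity
  have hdouble : ∑ t ∈ range N, m t * m t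
      = ∑ i : Fin s, ∑ j : Fin s, min (d i) (d j) := by
    calc ∑ t ∈ range N, m t * m t
        = ∑ t ∈ range N, (∑ i : Fin s, (if t < d i then 1 else 0)) *
            (∑ j : Fin s, (if t < d j then 1 else 0)) := by
          simp_rw [hm_sum_eq]
      _ = ∑ t ∈ range N, ∑ i : Fin s, ∑ j : Fin s,
            (if t < d i then 1 else 0) * (if t < d j then 1 else 0) := by
          simp_rw [Finset.sum_mul_sum]
      _ = ∑ i : Fin s, ∑ t ∈ range N, ∑ j : Fin s,
            (if t < d i then 1 else 0) * (if t < d j then 1 else 0) := sum_comm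
      _ = ∑ i : Fin s, ∑ j : Fin s, ∑ t ∈ range N,
            (if t < d i then 1 else 0) * (if t < d j then 1 else 0) := by
          exact Finset.sum_congr rfl fun i _ => sum_comm
      _ = ∑ i : Fin s, ∑ j : Fin s, min (d i) (d j) := by
          refine Finset.sum_congr rfl fun i _ => Finset.sum_congr rfl fun j _ => ?_
          have h1 : ∀ t : ℕ, (if t < d i then 1 else 0) * (if t < d j then 1 else 0)
              = if t < min (d i) (d j) then (1:ℕ) else 0 := by
            intro t
            by_cases h1 : t < d i <;> by_cases h2 : t < d j <;>
              simp [h1, h2, lt_min_iff]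
          simp_rw [h1]
          rw [← card_filter]
          have : (range N).filter (fun t => t < min (d i) (d j))
              = range (min (d i) (d j)) := by
            ext t
            simp only [mem_filter, mem_range]
            constructor
            · exact fun h => h.2
            · intro h
              exact ⟨lt_of_lt_of_le h (le_trans (min_le_left _ _) (hd_le i)), h⟩
          rw [this, card_range]
  -- 2 * pair sum + N = double sum
  have h2P : 2 * (∑ i : Fin s, ∑ j ∈ Finset.Ioi i, min (d i) (d j)) + N
      = ∑ i : Fin s, ∑ j : Fin s, min (d i) (d j) := by
    have hoff := Finset.sum_sum_Ioi_add_eq_sum_sum_off_diag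
      (fun i j : Fin s => min (d i) (d j))
    have hL : ∑ i : Fin s, ∑ j ∈ Ioi i, (min (d j) (d i) + min (d i) (d j))
        = 2 * (∑ i : Fin s, ∑ j ∈ Finset.Ioi i, min (d i) (d j)) := by
      rw [Finset.mul_sum]
      refine Finset.sum_congr rfl fun i _ => ?_
      rw [Finset.mul_sum]
      refine Finset.sum_congr rfl fun j _ => ?_
      rw [min_comm (d j) (d i)]
      ring
    have hR : ∀ i : Fin s, ∑ j ∈ ({i} : Finset (Fin s))ᶜ, min (d j) (d i) + d i
        = ∑ j : Fin s, min (d j) (d i) := by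
      intro i
      have := Finset.sum_compl_add_sum ({i} : Finset (Fin s))
        (fun j => min (d j) (d i))
      simpa using this
    calc 2 * (∑ i : Fin s, ∑ j ∈ Finset.Ioi i, min (d i) (d j)) + N
        = (∑ i : Fin s, ∑ j ∈ ({i} : Finset (Fin s))ᶜ, min (d j) (d i))
            + ∑ i : Fin s, d i := by
          rw [← hL, hoff, hsum]
      _ = ∑ i : Fin s, (∑ j ∈ ({i} : Finset (Fin s))ᶜ, min (d j) (d i) + d i) := by
          rw [← Finset.sum_add_distrib]
      _ = ∑ i : Fin s, ∑ j : Fin s, min (d j) (d i) := by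
          exact Finset.sum_congr rfl fun i _ => hR i
      _ = ∑ i : Fin s, ∑ j : Fin s, min (d i) (d j) := by
          rw [sum_comm]
  -- square + cross identity
  have hsq : (∑ t ∈ range N, m t * m t) + (∑ t ∈ range N, m t * (s - m t))
      = s * N := by
    rw [← Finset.sum_add_distrib]
    have : ∀ t ∈ range N, m t * m t + m t * (s - m t) = m t * s := by
      intro t _
      rw [Nat.mul_sub]
      have h1 : m t * m t ≤ m t * s := Nat.mul_le_mul_left _ (hm_le t)
      omega
    rw [Finset.sum_congr rfl this, ← Finset.sum_mul, hsum_m, Nat.mul_comm]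
  have hNr : N % s = r := by
    rw [hq, Nat.add_comm, Nat.add_mul_mod_self_right, Nat.mod_eq_of_lt hr]
  have hkey : r * (s - r) ≤ ∑ t ∈ range N, m t * (s - m t) := by
    have := key_s2 s hs m hm_le N
    rwa [hsum_m, hNr] at this
  -- final arithmetic
  have hX : 2 * (q * s.choose 2 + r.choose 2) = q * (s * (s - 1)) + r * (r - 1) := by
    rw [Nat.mul_add, Nat.mul_left_comm 2 q, two_mul_choose_two, two_mul_choose_two]
  have hfin : 2 * (∑ i : Fin s, ∑ j ∈ Finset.Ioi i, min (d i) (d j))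
      ≤ q * (s * (s - 1)) + r * (r - 1) := by
    set P := ∑ i : Fin s, ∑ j ∈ Finset.Ioi i, min (d i) (d j) with hP
    set T := ∑ t ∈ range N, m t * (s - m t) with hT
    have e1 : 2 * P + N + T = s * N := by
      rw [h2P, ← hdouble] at *
      omega
    have e2 : N = q * s + r := hq
    rcases Nat.eq_zero_or_pos r with rfl | hrpos
    · simp only [Nat.zero_mul, Nat.add_zero, Nat.mul_zero]
      zify [hs] at e1 e2 ⊢
      nlinarith [hkey, Nat.zero_le T]
    · zify [hs, hr.le, hrpos] at e1 e2 hkey ⊢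
      nlinarith [hkey]
  omega

end AvgConn
end

section
/- Let k ≥ 2 and let G be a minimally k-edge-connected graph of order n ≥ 2k+1 that is degree-partitioned. Then the average edge-connectivity of G satisfies λ̄(G) ≤ k + k(n−2)²/(8n(n−1)) < (9/8)k. -/
namespace AvgConn

/-- The degree of a vertex, as the cardinality of its neighbourhood. -/
noncomputable def deg {V : Type*} (G : SimpleGraph V) (v : V) : ℕ :=
  (G.neighborSet v).ncard

/-- `localEdgeConn G u v` is the maximum number of pairwise edge-disjoint `u`–`v` paths. -/
noncomputable def localEdgeConn {V : Type*} (G : SimpleGraph V) (u v : V) : ℕ :=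
  sSup {m | ∃ f : Fin m → G.Walk u v, (∀ i, (f i).IsPath) ∧
    ∀ i j, i ≠ j → ∀ e ∈ (f i).edges, e ∉ (f j).edges}

/-- The edge connectivity of `G`: the least number of edges whose removal disconnects `G`. -/
noncomputable def edgeConn {V : Type*} (G : SimpleGraph V) : ℕ :=
  sInf {n | ∃ F : Set (Sym2 V), F ⊆ G.edgeSet ∧ F.ncard = n ∧
    ¬ (G.deleteEdges F).Connected}

/-- `G` is minimally `k`-edge-connected. -/
noncomputable def MinimallyKEdgeConnected {V : Type*} (G : SimpleGraph V) (k : ℕ) : Prop :=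
  edgeConn G = k ∧ ∀ e ∈ G.edgeSet, edgeConn (G.deleteEdges {e}) < k

/-- `G` is degree-partitioned (for `k`): every vertex has degree at least `k`, and `G` is
bipartite with partite sets the vertices of degree `k` and the vertices of degree exceeding `k`. -/
noncomputable def DegreePartitioned {V : Type*} (G : SimpleGraph V) (k : ℕ) : Prop :=
  (∀ v, k ≤ deg G v) ∧
    ∀ u v, G.Adj u v → (deg G u = k ∧ k < deg G v) ∨ (k < deg G u ∧ deg G v = k)

lemma firstEdge_mem {V : Type*} {G : SimpleGraph V} {u v : V} (p : G.Walk u v) (h : ¬ p.Nil) :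
    s(u, p.getVert 1) ∈ p.edges := by
  cases p with
  | nil => simp at h
  | cons hadj q => simp [SimpleGraph.Walk.getVert_cons_succ]

lemma not_nil_of_ne {V : Type*} {G : SimpleGraph V} {u v : V} (h : u ≠ v) (p : G.Walk u v) :
    ¬ p.Nil := by
  cases p with
  | nil => exact absurd rfl h
  | cons hadj q => simp

lemma aux_card {V : Type*} [Fintype V] (G : SimpleGraph V) {u v : V} (h : u ≠ v) {m : ℕ}
    (f : Fin m → G.Walk u v)
    (hd : ∀ i j, i ≠ j → ∀ e ∈ (f i).edges, e ∉ (f j).edges) : m ≤ deg G u := by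
  classical
  have hdeg : deg G u = (G.neighborFinset u).card := by
    rw [deg, SimpleGraph.neighborFinset_def, Set.ncard_eq_toFinset_card']
  have hadj : ∀ i : Fin m, G.Adj u ((f i).getVert 1) := by
    intro i
    have hl : 0 < (f i).length := by
      rcases Nat.eq_zero_or_pos (f i).length with h0 | h0
      · exact absurd ((f i).eq_of_length_eq_zero h0) h
      · exact h0
    simpa using (f i).adj_getVert_succ (i := 0) hl
  have hinj : Function.Injective (fun i : Fin m => (f i).getVert 1) := by
    intro i j hij
    by_contra hne
    have h1 : s(u, (f i).getVert 1) ∈ (f i).edges := firstEdge_mem _ (not_nil_of_ne h _)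
    have h2 : s(u, (f j).getVert 1) ∈ (f j).edges := firstEdge_mem _ (not_nil_of_ne h _)
    simp only [] at hij
    rw [hij] at h1
    exact hd i j hne _ h1 h2
  calc m = (Finset.univ : Finset (Fin m)).card := by simp
    _ ≤ (G.neighborFinset u).card :=
        Finset.card_le_card_of_injOn (fun i => (f i).getVert 1)
          (fun i _ => (G.mem_neighborFinset u _).2 (hadj i)) (fun i _ j _ hij => hinj hij)
    _ = deg G u := hdeg.symm

lemma localEdgeConn_le_deg_left {V : Type*} [Fintype V] (G : SimpleGraph V) {u v : V}
    (h : u ≠ v) : localEdgeConn G u v ≤ deg G u := by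
  have h0 : 0 ∈ {m | ∃ f : Fin m → G.Walk u v, (∀ i, (f i).IsPath) ∧
      ∀ i j, i ≠ j → ∀ e ∈ (f i).edges, e ∉ (f j).edges} :=
    ⟨Fin.elim0, fun i => i.elim0, fun i => i.elim0⟩
  apply csSup_le ⟨0, h0⟩
  rintro m ⟨f, -, hd⟩
  exact aux_card G h f hd

lemma localEdgeConn_le_deg_right {V : Type*} [Fintype V] (G : SimpleGraph V) {u v : V}
    (h : u ≠ v) : localEdgeConn G u v ≤ deg G v := by
  have h0 : 0 ∈ {m | ∃ f : Fin m → G.Walk u v, (∀ i, (f i).IsPath) ∧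
      ∀ i j, i ≠ j → ∀ e ∈ (f i).edges, e ∉ (f j).edges} :=
    ⟨Fin.elim0, fun i => i.elim0, fun i => i.elim0⟩
  apply csSup_le ⟨0, h0⟩
  rintro m ⟨f, -, hd⟩
  exact aux_card G h.symm (fun i => (f i).reverse)
    (fun i j hij e he hj => by
      simp only [SimpleGraph.Walk.edges_reverse, List.mem_reverse] at he hj
      exact hd i j hij e he hj)

lemma sum_deg_B_le {V : Type*} [Fintype V] [DecidableEq V] (G : SimpleGraph V) (k : ℕ)
    (hdp : DegreePartitioned G k) :
    ∑ v ∈ Finset.univ.filter (fun v => deg G v ≠ k), deg G v ≤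
      k * (Finset.univ.filter (fun v => deg G v = k)).card := by
  classical
  set A := Finset.univ.filter (fun v => deg G v = k) with hA
  set B := Finset.univ.filter (fun v => deg G v ≠ k) with hB
  have hdegF : ∀ v, deg G v = (Finset.univ.filter (fun u => G.Adj v u)).card := by
    intro v
    rw [deg, Set.ncard_eq_toFinset_card']
    congr 1
    ext u
    simp [SimpleGraph.mem_neighborSet]
  have key : ∀ v ∈ B, Finset.univ.filter (fun u => G.Adj v u)
      = A.filter (fun u => G.Adj v u) := by
    intro v hv
    have hvB : deg G v ≠ k := by simpa [hB] using hv
    ext u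
    simp only [Finset.mem_filter, Finset.mem_univ, true_and, hA]
    constructor
    · intro h
      rcases hdp.2 v u h with ⟨h1, _⟩ | ⟨_, h2⟩
      · exact absurd h1 hvB
      · exact ⟨h2, h⟩
    · tauto
  calc ∑ v ∈ B, deg G v
      = ∑ v ∈ B, ∑ u ∈ A, (if G.Adj v u then 1 else 0) := by
        refine Finset.sum_congr rfl fun v hv => ?_
        rw [hdegF v, key v hv, Finset.card_filter]
    _ = ∑ u ∈ A, ∑ v ∈ B, (if G.Adj v u then 1 else 0) := Finset.sum_comm
    _ ≤ ∑ u ∈ A, deg G u := by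
        refine Finset.sum_le_sum fun u hu => ?_
        calc ∑ v ∈ B, (if G.Adj v u then 1 else 0)
            = (B.filter (fun v => G.Adj v u)).card := (Finset.card_filter _ _).symm
          _ ≤ (Finset.univ.filter (fun v => G.Adj v u)).card :=
              Finset.card_le_card (Finset.filter_subset_filter _ (Finset.subset_univ B))
          _ = deg G u := by
              rw [hdegF u]
              congr 1
              apply Finset.filter_congr
              intro x _
              simp [SimpleGraph.adj_comm]
    _ = ∑ u ∈ A, k := by
        refine Finset.sum_congr rfl fun u hu => ?_
        simpa [hA] using (Finset.mem_filter.1 hu).2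
    _ = k * A.card := by rw [Finset.sum_const, smul_eq_mul, mul_comm]

set_option maxHeartbeats 1000000 in
theorem avg_edge_connectivity_of_degree_partitioned_min_k_edge_connected
    {V : Type*} [Fintype V] [DecidableEq V] (k : ℕ) (hk : 2 ≤ k)
    (G : SimpleGraph V) (hn : 2 * k + 1 ≤ Fintype.card V)
    (hG : MinimallyKEdgeConnected G k) (hdp : DegreePartitioned G k) :
    (∑ p ∈ Finset.univ.offDiag, (localEdgeConn G p.1 p.2 : ℝ)) /
        ((Fintype.card V : ℝ) * ((Fintype.card V : ℝ) - 1)) ≤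
      (k : ℝ) + k * ((Fintype.card V : ℝ) - 2) ^ 2 /
        (8 * (Fintype.card V : ℝ) * ((Fintype.card V : ℝ) - 1)) ∧
    (∑ p ∈ Finset.univ.offDiag, (localEdgeConn G p.1 p.2 : ℝ)) /
        ((Fintype.card V : ℝ) * ((Fintype.card V : ℝ) - 1)) < 9 / 8 * k := by
  classical
  set n := Fintype.card V with hn'
  set A := Finset.univ.filter (fun v => deg G v = k) with hA
  set B := Finset.univ.filter (fun v => deg G v ≠ k) with hB
  set a := A.card with ha'
  set b := B.card with hb'
  have hmemA : ∀ x : V, x ∈ A ↔ deg G x = k := by intro x; simp [hA]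
  have hmemB : ∀ x : V, x ∈ B ↔ deg G x ≠ k := by intro x; simp [hB]
  have hab : a + b = n := by
    rw [ha', hb', hA, hB, Finset.card_filter_add_card_filter_not, Finset.card_univ]
  have hn5 : 5 ≤ n := le_trans (by omega) hn
  -- A and B are nonempty
  obtain ⟨v⟩ : Nonempty V := Fintype.card_pos_iff.1 (by omega)
  obtain ⟨w, hw⟩ : (G.neighborSet v).Nonempty := by
    rw [← Set.ncard_pos (Set.toFinite _)]
    exact lt_of_lt_of_le (by omega) (hdp.1 v)
  have hexA : ∃ x, deg G x = k := by
    rcases hdp.2 v w hw with ⟨h1, _⟩ | ⟨_, h2⟩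
    exacts [⟨v, h1⟩, ⟨w, h2⟩]
  have hexB : ∃ x, deg G x ≠ k := by
    rcases hdp.2 v w hw with ⟨_, h2⟩ | ⟨h1, _⟩
    exacts [⟨w, by omega⟩, ⟨v, by omega⟩]
  have ha1 : 1 ≤ a := Finset.card_pos.2 ⟨hexA.choose, (hmemA _).2 hexA.choose_spec⟩
  have hb1 : 1 ≤ b := Finset.card_pos.2 ⟨hexB.choose, (hmemB _).2 hexB.choose_spec⟩
  -- the sum splits
  have hBsub : B.offDiag ⊆ Finset.univ.offDiag := Finset.offDiag_mono (Finset.subset_univ B)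
  set S : ℕ := ∑ p ∈ Finset.univ.offDiag, localEdgeConn G p.1 p.2 with hS
  have hcard1 : (Finset.univ : Finset V).offDiag.card = n * n - n := by
    have h := Finset.offDiag_card (s := (Finset.univ : Finset V))
    rwa [Finset.card_univ] at h
  have hcard2 : B.offDiag.card = b * b - b := Finset.offDiag_card (s := B)
  have h1 : ∑ p ∈ Finset.univ.offDiag \ B.offDiag, localEdgeConn G p.1 p.2
      ≤ ((n * n - n) - (b * b - b)) * k := by
    have hcardsd : (Finset.univ.offDiag \ B.offDiag).card = (n * n - n) - (b * b - b) := by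
      rw [Finset.card_sdiff_of_subset hBsub, hcard1, hcard2]
    calc ∑ p ∈ Finset.univ.offDiag \ B.offDiag, localEdgeConn G p.1 p.2
        ≤ ∑ _p ∈ Finset.univ.offDiag \ B.offDiag, k := by
          refine Finset.sum_le_sum fun p hp => ?_
          obtain ⟨hp1, hp2⟩ := Finset.mem_sdiff.1 hp
          have hne : p.1 ≠ p.2 := (Finset.mem_offDiag.1 hp1).2.2
          have hor : deg G p.1 = k ∨ deg G p.2 = k := by
            by_contra hcon
            push_neg at hcon
            exact hp2 (Finset.mem_offDiag.2
              ⟨(hmemB _).2 hcon.1, (hmemB _).2 hcon.2, hne⟩)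
          rcases hor with h | h
          · exact h ▸ localEdgeConn_le_deg_left G hne
          · exact h ▸ localEdgeConn_le_deg_right G hne
      _ = ((n * n - n) - (b * b - b)) * k := by rw [Finset.sum_const, smul_eq_mul, hcardsd]
  have h2 : ∑ p ∈ B.offDiag, localEdgeConn G p.1 p.2 ≤ (b - 1) * (k * a) := by
    calc ∑ p ∈ B.offDiag, localEdgeConn G p.1 p.2
        ≤ ∑ p ∈ B.offDiag, deg G p.1 := by
          refine Finset.sum_le_sum fun p hp => ?_
          exact localEdgeConn_le_deg_left G (Finset.mem_offDiag.1 hp).2.2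
      _ = ∑ p ∈ B ×ˢ B, (if p.1 ≠ p.2 then deg G p.1 else 0) := by
          rw [← Finset.sum_filter]; congr 1; ext p; simp [Finset.mem_offDiag, and_assoc]
      _ = ∑ x ∈ B, ∑ y ∈ B, (if x ≠ y then deg G x else 0) := by
          rw [Finset.sum_product]
      _ = ∑ x ∈ B, (b - 1) * deg G x := by
          refine Finset.sum_congr rfl fun x hx => ?_
          rw [← Finset.sum_filter, Finset.filter_ne, Finset.sum_const,
            Finset.card_erase_of_mem hx, smul_eq_mul]
      _ = (b - 1) * ∑ x ∈ B, deg G x := by rw [Finset.mul_sum]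
      _ ≤ (b - 1) * (k * a) := Nat.mul_le_mul_left _ (sum_deg_B_le G k hdp)
  have hNat : S ≤ ((n * n - n) - (b * b - b)) * k + (b - 1) * (k * a) := by
    rw [hS, ← Finset.sum_sdiff hBsub]
    exact Nat.add_le_add h1 h2
  -- cast everything to ℝ
  have hbn : b * b - b ≤ n * n - n := by
    have := Finset.card_le_card hBsub
    rwa [hcard1, hcard2] at this
  have hbb : b ≤ b * b := Nat.le_mul_of_pos_left b (by omega)
  have hnn : n ≤ n * n := Nat.le_mul_of_pos_left n (by omega)
  have hreal : (S : ℝ) ≤ ((n : ℝ) * n - n - ((b : ℝ) * b - b)) * k + ((b : ℝ) - 1) * (k * a) := by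
    have := (Nat.cast_le (α := ℝ)).2 hNat
    rw [Nat.cast_add, Nat.cast_mul, Nat.cast_mul, Nat.cast_sub hbn, Nat.cast_sub hbb,
      Nat.cast_sub hnn, Nat.cast_sub hb1, Nat.cast_mul] at this
    push_cast at this ⊢
    linarith
  have habR : (a : ℝ) + b = n := by exact_mod_cast congrArg (Nat.cast : ℕ → ℝ) hab
  have hn5R : (5 : ℝ) ≤ n := by exact_mod_cast hn5
  have hk2R : (2 : ℝ) ≤ k := by exact_mod_cast hk
  have ha1R : (1 : ℝ) ≤ a := by exact_mod_cast ha1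
  have hb1R : (1 : ℝ) ≤ b := by exact_mod_cast hb1
  have hD : (0 : ℝ) < (n : ℝ) * ((n : ℝ) - 1) := by nlinarith
  have hnab : (n : ℝ) = (a : ℝ) + (b : ℝ) := habR.symm
  have key : (S : ℝ) ≤ k * ((n : ℝ) * ((n : ℝ) - 1)) + k * ((n : ℝ) - 2) ^ 2 / 8 := by
    rw [hnab] at hreal ⊢
    nlinarith [mul_nonneg (by positivity : (0:ℝ) ≤ (k:ℝ))
      (sq_nonneg ((a : ℝ) - 1 - 3 * ((b : ℝ) - 1)))]
  have hn0 : (n : ℝ) ≠ 0 := ne_of_gt (by linarith)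
  have hn1 : (n : ℝ) - 1 ≠ 0 := ne_of_gt (by linarith)
  have hScast : ∑ p ∈ Finset.univ.offDiag, (localEdgeConn G p.1 p.2 : ℝ) = (S : ℝ) :=
    (Nat.cast_sum _ _).symm
  have goal1 : (∑ p ∈ Finset.univ.offDiag, (localEdgeConn G p.1 p.2 : ℝ)) /
      ((n : ℝ) * ((n : ℝ) - 1)) ≤
      (k : ℝ) + k * ((n : ℝ) - 2) ^ 2 / (8 * (n : ℝ) * ((n : ℝ) - 1)) := by
    rw [hScast, div_le_iff₀ hD]
    have hsimp : ((k : ℝ) + k * ((n : ℝ) - 2) ^ 2 / (8 * (n : ℝ) * ((n : ℝ) - 1)))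
        * ((n : ℝ) * ((n : ℝ) - 1))
        = k * ((n : ℝ) * ((n : ℝ) - 1)) + k * ((n : ℝ) - 2) ^ 2 / 8 := by
      field_simp
    rw [hsimp]
    exact key
  have hlt : (k : ℝ) + k * ((n : ℝ) - 2) ^ 2 / (8 * (n : ℝ) * ((n : ℝ) - 1)) < 9 / 8 * k := by
    have h8 : (0 : ℝ) < 8 * (n : ℝ) * ((n : ℝ) - 1) := by nlinarith
    have : (k : ℝ) * ((n : ℝ) - 2) ^ 2 / (8 * (n : ℝ) * ((n : ℝ) - 1)) < k / 8 := by
      rw [div_lt_div_iff₀ h8 (by norm_num : (0:ℝ) < 8)]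
      nlinarith
    linarith
  exact ⟨goal1, lt_of_le_of_lt goal1 hlt⟩

end AvgConn
end

section
/- Let 3 ≤ k ≤ p and let u, v be nonadjacent vertices of G_{k,p}. If S is a minimal vertex separator of u and v in G_{k,p}, then |S| = k or |S| = 2k−2. -/
namespace AvgConn

/-- The graph `G_{k,p}` on `W ∪ X`, where `W` and `X` are copies of `Fin p` (`W` given by
`Sum.inl`, `X` by `Sum.inr`), and `w_i` is adjacent to `x_{(i+j) mod p}` for `0 ≤ j ≤ k-1`. -/
def Gkp (k p : ℕ) : SimpleGraph (Fin p ⊕ Fin p) :=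
  SimpleGraph.fromRel (fun a b => ∃ i x : Fin p, a = Sum.inl i ∧ b = Sum.inr x ∧
    ∃ j, j < k ∧ (x : ℕ) = ((i : ℕ) + j) % p)

/-- `S` is a vertex separator of `u` and `v`: `u, v ∉ S` and every `u`–`v` walk meets `S`. -/
def IsSeparator {V : Type*} (G : SimpleGraph V) (u v : V) (S : Set V) : Prop :=
  u ∉ S ∧ v ∉ S ∧ ∀ w : G.Walk u v, ∃ x ∈ w.support, x ∈ S

/-- `S` is a minimal vertex separator of `u` and `v`. -/
def IsMinimalSeparator {V : Type*} (G : SimpleGraph V) (u v : V) (S : Set V) : Prop :=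
  IsSeparator G u v S ∧ ∀ T ⊂ S, ¬ IsSeparator G u v T

/-! ### Generic component machinery -/

variable {V : Type*} {G : SimpleGraph V} {S : Set V} {u v : V}

/-- The set of vertices reachable from `u` by walks avoiding `S`. -/
def compOut (G : SimpleGraph V) (S : Set V) (u : V) : Set V :=
  {z | ∃ w : G.Walk u z, ∀ y ∈ w.support, y ∉ S}

lemma IsSeparator.symm (h : IsSeparator G u v S) : IsSeparator G v u S := by
  obtain ⟨h1, h2, h3⟩ := h
  refine ⟨h2, h1, fun w => ?_⟩
  obtain ⟨x, hx, hxS⟩ := h3 w.reverse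
  exact ⟨x, by simpa [SimpleGraph.Walk.support_reverse] using hx, hxS⟩

lemma IsMinimalSeparator.symm (h : IsMinimalSeparator G u v S) :
    IsMinimalSeparator G v u S :=
  ⟨h.1.symm, fun T hT hsep => h.2 T hT hsep.symm⟩

lemma mem_compOut_self (hu : u ∉ S) : u ∈ compOut G S u :=
  ⟨SimpleGraph.Walk.nil, by simp [hu]⟩

lemma compOut_notMem (hz : v ∈ compOut G S u) : v ∉ S := by
  obtain ⟨w, hw⟩ := hz
  exact hw v (SimpleGraph.Walk.end_mem_support w)

lemma compOut_closed {z z' : V} (hz : z ∈ compOut G S u) (hadj : G.Adj z z')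
    (hz' : z' ∉ S) : z' ∈ compOut G S u := by
  obtain ⟨w, hw⟩ := hz
  refine ⟨w.append (hadj.toWalk), fun y hy => ?_⟩
  rw [SimpleGraph.Walk.support_append] at hy
  rcases List.mem_append.mp hy with h | h
  · exact hw y h
  · have : y = z' := by simpa using h
    exact this ▸ hz'

lemma compOut_support_subset {z : V} (w : G.Walk u z) (hw : ∀ y ∈ w.support, y ∉ S) :
    ∀ y ∈ w.support, y ∈ compOut G S u := by
  classical
  intro y hy
  exact ⟨w.takeUntil y hy, fun t ht => hw t (w.support_takeUntil_subset hy ht)⟩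

/-- Two vertices of `compOut` are joined by a walk inside `compOut`. -/
lemma compOut_conn {z z' : V} (hz : z ∈ compOut G S u) (hz' : z' ∈ compOut G S u) :
    ∃ w : G.Walk z z', ∀ y ∈ w.support, y ∈ compOut G S u := by
  classical
  obtain ⟨w1, hw1⟩ := hz
  obtain ⟨w2, hw2⟩ := hz'
  refine ⟨w1.reverse.append w2, fun y hy => ?_⟩
  rw [SimpleGraph.Walk.support_append] at hy
  rcases List.mem_append.mp hy with h | h
  · rw [SimpleGraph.Walk.support_reverse] at h
    exact compOut_support_subset w1 hw1 y (List.mem_reverse.mp h)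
  · exact compOut_support_subset w2 hw2 y (List.mem_of_mem_tail h)

lemma compOut_disjoint (hsep : IsSeparator G u v S) {z : V}
    (hz : z ∈ compOut G S u) (hz' : z ∈ compOut G S v) : False := by
  obtain ⟨w1, hw1⟩ := hz
  obtain ⟨w2, hw2⟩ := hz'
  obtain ⟨x, hx, hxS⟩ := hsep.2.2 (w1.append w2.reverse)
  rw [SimpleGraph.Walk.support_append] at hx
  rcases List.mem_append.mp hx with h | h
  · exact hw1 x h hxS
  · have := hw2 x (by
      have := List.mem_of_mem_tail h
      rwa [SimpleGraph.Walk.support_reverse, List.mem_reverse] at this)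
    exact this hxS

/-- Each vertex of a minimal separator has a neighbor in `compOut G S u`. -/
lemma minsep_adj (hS : IsMinimalSeparator G u v S) {s : V} (hs : s ∈ S) :
    ∃ a ∈ compOut G S u, G.Adj s a := by
  classical
  have hdiff : S \ {s} ⊂ S := Set.sdiff_singleton_ssubset.mpr hs
  have hns := hS.2 _ hdiff
  rw [IsSeparator] at hns
  push_neg at hns
  have hu : u ∉ S \ {s} := fun h => hS.1.1 h.1
  have hv : v ∉ S \ {s} := fun h => hS.1.2.1 h.1
  obtain ⟨w0, hw0⟩ := hns hu hv
  -- w0 : walk u v avoiding S \ {s}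
  set P : G.Walk u v := w0.toPath.1 with hP
  have hPpath : P.IsPath := w0.toPath.2
  have hPavoid : ∀ y ∈ P.support, y ∉ S \ {s} := by
    intro y hy
    exact hw0 y (SimpleGraph.Walk.support_toPath_subset w0 hy)
  -- S must meet P
  obtain ⟨x, hx, hxS⟩ := hS.1.2.2 P
  have hxs : x = s := by
    by_contra hne
    exact hPavoid x hx ⟨hxS, hne⟩
  subst hxs
  -- take the prefix of P up to s
  have hsu : x ≠ u := fun h => hS.1.1 (h ▸ hxS)
  set q := P.takeUntil x hx with hq
  have hqpath : q.IsPath := hPpath.takeUntil hx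
  have hqsup : ∀ y ∈ q.support, y ∉ S \ {x} := fun y hy =>
    hPavoid y (P.support_takeUntil_subset hx hy)
  obtain ⟨y, hadj, t, ht⟩ := SimpleGraph.Walk.exists_eq_cons_of_ne hsu q.reverse
  have hrevpath : q.reverse.IsPath := hqpath.reverse
  have hxnot : x ∉ t.support := by
    rw [ht] at hrevpath
    exact fun hmem => (SimpleGraph.Walk.cons_isPath_iff _ _).mp hrevpath |>.2 hmem
  have htsup : ∀ y' ∈ t.support, y' ∉ S := by
    intro y' hy'
    have h1 : y' ∈ q.support := by
      have : y' ∈ q.reverse.support := by rw [ht]; simp [hy']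
      rwa [SimpleGraph.Walk.support_reverse, List.mem_reverse] at this
    have h2 : y' ≠ x := fun h => hxnot (h ▸ hy')
    exact fun hS' => hqsup y' h1 ⟨hS', h2⟩
  refine ⟨y, ⟨t.reverse, fun y' hy' => ?_⟩, hadj⟩
  rw [SimpleGraph.Walk.support_reverse, List.mem_reverse] at hy'
  exact htsup y' hy'

/-! ### Adjacency in `Gkp` -/

/-- The band relation on indices. -/
def Band (k p : ℕ) (i x : Fin p) : Prop := ∃ j, j < k ∧ (x : ℕ) ≡ (i : ℕ) + j [MOD p]

lemma band_iff {k p : ℕ} (i x : Fin p) :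
    (∃ j, j < k ∧ (x : ℕ) = ((i : ℕ) + j) % p) ↔ Band k p i x := by
  constructor
  · rintro ⟨j, hj, hx⟩
    exact ⟨j, hj, by rw [Nat.ModEq, hx, Nat.mod_mod]⟩
  · rintro ⟨j, hj, hx⟩
    exact ⟨j, hj, by rw [Nat.ModEq] at hx; rw [← hx, Nat.mod_eq_of_lt x.isLt]⟩

lemma adj_inl_inr {k p : ℕ} (i x : Fin p) :
    (Gkp k p).Adj (Sum.inl i) (Sum.inr x) ↔ Band k p i x := by
  rw [Gkp, SimpleGraph.fromRel_adj]
  constructor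
  · rintro ⟨-, h | h⟩
    · obtain ⟨i', x', hi, hx, hb⟩ := h
      cases hi; cases hx
      exact (band_iff _ _).mp hb
    · obtain ⟨i', x', hi, hx, hb⟩ := h
      exact absurd hi (by simp)
  · intro hb
    exact ⟨by simp, Or.inl ⟨i, x, rfl, rfl, (band_iff _ _).mpr hb⟩⟩

lemma adj_inr_inl {k p : ℕ} (i x : Fin p) :
    (Gkp k p).Adj (Sum.inr x) (Sum.inl i) ↔ Band k p i x := by
  rw [(Gkp k p).adj_comm]; exact adj_inl_inr i x

lemma not_adj_inl_inl {k p : ℕ} (i i' : Fin p) :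
    ¬ (Gkp k p).Adj (Sum.inl i) (Sum.inl i') := by
  rw [Gkp, SimpleGraph.fromRel_adj]
  rintro ⟨-, h | h⟩ <;> obtain ⟨a, b, h1, h2, -⟩ := h <;> simp at h1 h2

lemma not_adj_inr_inr {k p : ℕ} (x x' : Fin p) :
    ¬ (Gkp k p).Adj (Sum.inr x) (Sum.inr x') := by
  rw [Gkp, SimpleGraph.fromRel_adj]
  rintro ⟨-, h | h⟩ <;> obtain ⟨a, b, h1, h2, -⟩ := h <;> simp at h1 h2

/-- Any neighbor of `inl i` is `inr` and vice versa. -/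
lemma adj_inl_cases {k p : ℕ} {i : Fin p} {z : Fin p ⊕ Fin p}
    (h : (Gkp k p).Adj (Sum.inl i) z) : ∃ x, z = Sum.inr x ∧ Band k p i x := by
  cases z with
  | inl i' => exact absurd h (not_adj_inl_inl i i')
  | inr x => exact ⟨x, rfl, (adj_inl_inr i x).mp h⟩

lemma adj_inr_cases {k p : ℕ} {x : Fin p} {z : Fin p ⊕ Fin p}
    (h : (Gkp k p).Adj (Sum.inr x) z) : ∃ i, z = Sum.inl i ∧ Band k p i x := by
  cases z with
  | inl i => exact ⟨i, rfl, (adj_inr_inl i x).mp h⟩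
  | inr x' => exact absurd h (not_adj_inr_inr x x')

/-! ### Modular arithmetic helpers -/

lemma mod_window_inj {p g a b : ℕ} (h : a ≡ b [MOD p]) (ha1 : g < a) (ha2 : a ≤ g + p)
    (hb1 : g < b) (hb2 : b ≤ g + p) : a = b := by
  rcases le_total a b with hab | hab
  · have hd : p ∣ b - a := (Nat.modEq_iff_dvd' hab).mp h
    have : b - a < p := by omega
    have := Nat.eq_zero_of_dvd_of_lt hd this
    omega
  · have hd : p ∣ a - b := (Nat.modEq_iff_dvd' hab).mp h.symm
    have : a - b < p := by omega
    have := Nat.eq_zero_of_dvd_of_lt hd this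
    omega

lemma exists_lift {p : ℕ} (hp : 0 < p) (g : ℕ) (i : Fin p) :
    ∃ n, g < n ∧ n ≤ g + p ∧ (n : ℕ) ≡ (i : ℕ) [MOD p] := by
  refine ⟨g + 1 + ((i : ℕ) + p - (g + 1) % p) % p, by omega, ?_, ?_⟩
  · have h1 : ((i : ℕ) + p - (g + 1) % p) % p < p := Nat.mod_lt _ hp
    omega
  · have hq : (g + 1) % p ≤ p := le_of_lt (Nat.mod_lt _ hp)
    calc g + 1 + ((i : ℕ) + p - (g + 1) % p) % p
        ≡ g + 1 + ((i : ℕ) + p - (g + 1) % p) [MOD p] :=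
          Nat.ModEq.add_left _ (Nat.mod_modEq _ p)
      _ ≡ (g + 1) % p + ((i : ℕ) + p - (g + 1) % p) [MOD p] :=
          Nat.ModEq.add_right _ (Nat.mod_modEq _ p).symm
      _ = (i : ℕ) + p := by omega
      _ ≡ (i : ℕ) [MOD p] := by simp [Nat.ModEq]

/-! ### Neighborhood cardinality -/

lemma neighborSet_inl {k p : ℕ} (i : Fin p) :
    (Gkp k p).neighborSet (Sum.inl i) = Sum.inr '' {x | Band k p i x} := by
  ext z
  constructor
  · intro hz
    obtain ⟨x, rfl, hb⟩ := adj_inl_cases hz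
    exact ⟨x, hb, rfl⟩
  · rintro ⟨x, hb, rfl⟩
    exact (adj_inl_inr i x).mpr hb

lemma neighborSet_inr {k p : ℕ} (x : Fin p) :
    (Gkp k p).neighborSet (Sum.inr x) = Sum.inl '' {i | Band k p i x} := by
  ext z
  constructor
  · intro hz
    obtain ⟨i, rfl, hb⟩ := adj_inr_cases hz
    exact ⟨i, hb, rfl⟩
  · rintro ⟨i, hb, rfl⟩
    exact (adj_inr_inl i x).mpr hb

lemma ncard_band_right {k p : ℕ} (hk : 0 < k) (hkp : k ≤ p) (i : Fin p) :
    {x : Fin p | Band k p i x}.ncard = k := by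
  have hp : 0 < p := lt_of_lt_of_le hk hkp
  have : {x : Fin p | Band k p i x} =
      (fun j : ℕ => (⟨((i : ℕ) + j) % p, Nat.mod_lt _ hp⟩ : Fin p)) '' Set.Iio k := by
    ext x
    simp only [Set.mem_setOf_eq, Set.mem_image, Set.mem_Iio]
    constructor
    · rintro ⟨j, hj, hmod⟩
      refine ⟨j, hj, ?_⟩
      apply Fin.ext
      simpa [Nat.ModEq, Nat.mod_eq_of_lt x.isLt] using hmod.symm
    · rintro ⟨j, hj, rfl⟩
      exact ⟨j, hj, by simp [Nat.ModEq, Nat.mod_mod]⟩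
  rw [this, Set.ncard_image_of_injOn, show (Set.Iio k : Set ℕ) = ↑(Finset.range k) by ext; simp,
    Set.ncard_coe_finset, Finset.card_range]
  · intro a ha b hb hab
    have hv : ((i : ℕ) + a) % p = ((i : ℕ) + b) % p := congrArg Fin.val hab
    simp only [Set.mem_Iio] at ha hb
    have h2 : (i : ℕ) + a + 1 ≡ (i : ℕ) + b + 1 [MOD p] := by
      have : ((i : ℕ) + a) ≡ ((i : ℕ) + b) [MOD p] := by
        calc ((i : ℕ) + a) ≡ ((i : ℕ) + a) % p [MOD p] := (Nat.mod_modEq _ p).symm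
          _ = ((i : ℕ) + b) % p := hv
          _ ≡ ((i : ℕ) + b) [MOD p] := Nat.mod_modEq _ p
      exact this.add_right 1
    have := mod_window_inj h2 (g := (i:ℕ)) (by omega) (by omega) (by omega) (by omega)
    omega

lemma modEq_eq_of_lt {p a b : ℕ} (h : a ≡ b [MOD p]) (ha : a < p) (hb : b < p) : a = b := by
  rw [Nat.ModEq, Nat.mod_eq_of_lt ha, Nat.mod_eq_of_lt hb] at h
  exact h

lemma ncard_band_left {k p : ℕ} (hk : 0 < k) (hkp : k ≤ p) (x : Fin p) :
    {i : Fin p | Band k p i x}.ncard = k := by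
  have hp : 0 < p := lt_of_lt_of_le hk hkp
  have key : ∀ j, j < k → ((x : ℕ) + p - j) % p + j ≡ (x : ℕ) [MOD p] := by
    intro j hj
    calc ((x : ℕ) + p - j) % p + j ≡ ((x : ℕ) + p - j) + j [MOD p] :=
          Nat.ModEq.add_right _ (Nat.mod_modEq _ p)
      _ = (x : ℕ) + p := by omega
      _ ≡ (x : ℕ) [MOD p] := by simp [Nat.ModEq]
  have himg : {i : Fin p | Band k p i x} =
      (fun j : ℕ => (⟨((x : ℕ) + p - j) % p, Nat.mod_lt _ hp⟩ : Fin p)) '' Set.Iio k := by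
    ext i
    simp only [Set.mem_setOf_eq, Set.mem_image, Set.mem_Iio]
    constructor
    · rintro ⟨j, hj, hmod⟩
      refine ⟨j, hj, ?_⟩
      apply Fin.ext
      have h2 : ((x : ℕ) + p - j) % p + j ≡ (i : ℕ) + j [MOD p] := (key j hj).trans hmod
      have h3 : ((x : ℕ) + p - j) % p ≡ (i : ℕ) [MOD p] := Nat.ModEq.add_right_cancel' _ h2
      exact modEq_eq_of_lt h3 (Nat.mod_lt _ hp) i.isLt
    · rintro ⟨j, hj, rfl⟩
      exact ⟨j, hj, (key j hj).symm⟩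
  rw [himg, Set.ncard_image_of_injOn, show (Set.Iio k : Set ℕ) = ↑(Finset.range k) by ext; simp,
    Set.ncard_coe_finset, Finset.card_range]
  intro a ha b hb hab
  simp only [Set.mem_Iio] at ha hb
  have hv : ((x : ℕ) + p - a) % p = ((x : ℕ) + p - b) % p := congrArg Fin.val hab
  have h2 : ((x : ℕ) + p - a) ≡ ((x : ℕ) + p - b) [MOD p] := by
    calc ((x : ℕ) + p - a) ≡ ((x : ℕ) + p - a) % p [MOD p] := (Nat.mod_modEq _ p).symm
      _ = ((x : ℕ) + p - b) % p := hv
      _ ≡ ((x : ℕ) + p - b) [MOD p] := Nat.mod_modEq _ p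
  have := mod_window_inj h2 (g := (x : ℕ)) (by omega) (by omega) (by omega) (by omega)
  omega

/-! ### The singleton case -/

lemma S_eq_neighborSet (hS : IsMinimalSeparator G u v S)
    (hNu : (G.neighborSet u : Set V) ⊆ S) : S = G.neighborSet u := by
  apply Set.Subset.antisymm _ hNu
  intro s hs
  obtain ⟨a, ha, hadj⟩ := minsep_adj hS hs
  have hau : a = u := by
    by_contra hne
    obtain ⟨w, hw⟩ := ha
    obtain ⟨y, hadj', t, ht⟩ := SimpleGraph.Walk.exists_eq_cons_of_ne (Ne.symm hne) w
    have hy : y ∈ w.support := by rw [ht]; simp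
    exact hw y hy (hNu hadj')
  exact hau ▸ hadj.symm

/-! ### The mirror automorphism -/

section Mirror

variable {k p : ℕ}

/-- Negation on `Fin p`. -/
def negF (p : ℕ) (hp : 0 < p) (i : Fin p) : Fin p := ⟨(p - (i : ℕ)) % p, Nat.mod_lt _ hp⟩

lemma negF_invol (hp : 0 < p) (i : Fin p) : negF p hp (negF p hp i) = i := by
  apply Fin.ext
  have hi := i.isLt
  simp only [negF]
  rcases Nat.eq_zero_or_pos (i : ℕ) with h | h
  · simp [h, Nat.sub_zero, Nat.mod_self]
  · have h1 : (p - (i : ℕ)) % p = p - (i : ℕ) := Nat.mod_eq_of_lt (by omega)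
    rw [h1]
    have h2 : p - (p - (i : ℕ)) = (i : ℕ) := by omega
    rw [h2, Nat.mod_eq_of_lt hi]

lemma band_negF (hp : 0 < p) {i x : Fin p} (h : Band k p i x) :
    Band k p (negF p hp x) (negF p hp i) := by
  obtain ⟨j, hj, hmod⟩ := h
  refine ⟨j, hj, ?_⟩
  have hi := i.isLt; have hx := x.isLt
  have key : (p - (i : ℕ)) + ((x : ℕ) + (i : ℕ)) ≡ ((p - (x : ℕ)) + j) + ((x : ℕ) + (i : ℕ)) [MOD p] := by
    have e1 : (p - (i : ℕ)) + ((x : ℕ) + (i : ℕ)) = p + (x : ℕ) := by omega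
    have e2 : ((p - (x : ℕ)) + j) + ((x : ℕ) + (i : ℕ)) = p + ((i : ℕ) + j) := by omega
    rw [e1, e2]
    exact hmod.add_left p
  have key2 : (p - (i : ℕ)) ≡ (p - (x : ℕ)) + j [MOD p] := Nat.ModEq.add_right_cancel' _ key
  calc ((negF p hp i) : ℕ) = (p - (i : ℕ)) % p := rfl
    _ ≡ p - (i : ℕ) [MOD p] := Nat.mod_modEq _ p
    _ ≡ (p - (x : ℕ)) + j [MOD p] := key2
    _ ≡ (p - (x : ℕ)) % p + j [MOD p] := Nat.ModEq.add_right _ (Nat.mod_modEq _ p).symm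
    _ = ((negF p hp x) : ℕ) + j := rfl

/-- The mirror automorphism of `Gkp`. -/
def mirror (k p : ℕ) (hp : 0 < p) : Gkp k p ≃g Gkp k p where
  toFun := Sum.elim (fun i => Sum.inr (negF p hp i)) (fun m => Sum.inl (negF p hp m))
  invFun := Sum.elim (fun i => Sum.inr (negF p hp i)) (fun m => Sum.inl (negF p hp m))
  left_inv := by rintro (i | m) <;> simp [negF_invol hp]
  right_inv := by rintro (i | m) <;> simp [negF_invol hp]
  map_rel_iff' := by
    rintro (i | m) (i' | m') <;> simp only [Equiv.coe_fn_mk, Sum.elim_inl, Sum.elim_inr]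
    · constructor
      · intro h; exact absurd h (not_adj_inr_inr _ _)
      · intro h; exact absurd h (not_adj_inl_inl _ _)
    · rw [adj_inr_inl, adj_inl_inr]
      constructor
      · intro h
        have := band_negF hp h
        rwa [negF_invol hp, negF_invol hp] at this
      · exact band_negF hp
    · rw [adj_inl_inr, adj_inr_inl]
      constructor
      · intro h
        have := band_negF hp h
        rwa [negF_invol hp, negF_invol hp] at this
      · exact band_negF hp
    · constructor
      · intro h; exact absurd h (not_adj_inl_inl _ _)
      · intro h; exact absurd h (not_adj_inr_inr _ _)

end Mirror

/-! ### Transport along a graph isomorphism -/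

section Transport

variable {f : G ≃g G}

lemma isSeparator_image (f : G ≃g G) (h : IsSeparator G u v S) :
    IsSeparator G (f u) (f v) (f '' S) := by
  obtain ⟨h1, h2, h3⟩ := h
  refine ⟨fun hc => ?_, fun hc => ?_, fun w => ?_⟩
  · obtain ⟨y, hy, hey⟩ := hc
    exact h1 (by rwa [f.toEquiv.injective hey] at hy)
  · obtain ⟨y, hy, hey⟩ := hc
    exact h2 (by rwa [f.toEquiv.injective hey] at hy)
  · have w2 : G.Walk u v :=
      (w.map (f.symm : G →g G)).copy (by simp) (by simp)
    obtain ⟨x, hx, hxS⟩ := h3 ((w.map (f.symm : G →g G)).copy (by simp) (by simp))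
    rw [SimpleGraph.Walk.support_copy, SimpleGraph.Walk.support_map] at hx
    obtain ⟨y, hy, rfl⟩ := List.mem_map.mp hx
    refine ⟨y, hy, ?_⟩
    exact ⟨f.symm y, hxS, by simp⟩

lemma isMinimalSeparator_image (f : G ≃g G) (h : IsMinimalSeparator G u v S) :
    IsMinimalSeparator G (f u) (f v) (f '' S) := by
  refine ⟨isSeparator_image f h.1, fun T hT hsep => ?_⟩
  have hinj : Function.Injective (f.symm : V → V) := (RelIso.toEquiv f.symm).injective
  have hT' : ((f.symm : V → V) '' T : Set V) ⊂ S := by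
    have h1 : ((f.symm : V → V) '' T) ⊂ ((f.symm : V → V) '' (f '' S)) :=
      ((hinj.injOn).image_ssubset_image_iff (Set.subset_univ _) (Set.subset_univ _)).mpr hT
    have h2 : ((f.symm : V → V) '' ((f : V → V) '' S)) = S := by
      rw [Set.image_image]
      simp
    rwa [h2] at h1
  apply h.2 _ hT'
  have h3 := isSeparator_image (G := G) f.symm hsep
  simpa using h3

end Transport

lemma compOut_image (f : G ≃g G) (S : Set V) (u : V) :
    compOut G ((f : V → V) '' S) (f u) = (f : V → V) '' compOut G S u := by
  ext z
  constructor
  · rintro ⟨w, hw⟩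
    refine ⟨f.symm z, ⟨(w.map (f.symm : G →g G)).copy (by simp) rfl, ?_⟩, by simp⟩
    intro y hy hyS
    rw [SimpleGraph.Walk.support_copy, SimpleGraph.Walk.support_map] at hy
    obtain ⟨x, hx, rfl⟩ := List.mem_map.mp hy
    exact hw x hx ⟨f.symm x, hyS, by simp⟩
  · rintro ⟨y, ⟨w, hw⟩, rfl⟩
    refine ⟨w.map (f : G →g G), ?_⟩
    intro x hx hxS
    rw [SimpleGraph.Walk.support_map] at hx
    obtain ⟨t, ht, rfl⟩ := List.mem_map.mp hx
    obtain ⟨s, hs, hst⟩ := hxS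
    exact hw t ht (by rwa [f.toEquiv.injective hst] at hs)

/-! ### ncard splitting -/

lemma ncard_split (X : Set (Fin p ⊕ Fin p)) :
    X.ncard = (X ∩ Set.range Sum.inl).ncard + (X ∩ Set.range Sum.inr).ncard := by
  rw [← Set.ncard_union_eq]
  · congr 1
    ext z
    cases z with
    | inl i => simp [Set.mem_union, Set.mem_inter_iff]
    | inr x => simp [Set.mem_union, Set.mem_inter_iff]
  · rw [Set.disjoint_iff]
    rintro z ⟨⟨h1, i, hi⟩, ⟨h2, x, hx⟩⟩
    rw [← hi] at hx
    exact absurd hx (by simp)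

lemma mirror_image_inter_inr (hp : 0 < p) (X : Set (Fin p ⊕ Fin p)) :
    ((mirror k p hp : _ → _) '' X ∩ Set.range Sum.inr)
      = (mirror k p hp : _ → _) '' (X ∩ Set.range Sum.inl) := by
  ext z
  constructor
  · rintro ⟨⟨y, hy, rfl⟩, x, hx⟩
    cases y with
    | inl i => exact ⟨Sum.inl i, ⟨hy, ⟨i, rfl⟩⟩, rfl⟩
    | inr m =>
        exfalso
        have : (mirror k p hp) (Sum.inr m) = Sum.inl (negF p hp m) := rfl
        rw [this] at hx
        exact absurd hx (by simp)
  · rintro ⟨y, ⟨hy, i, rfl⟩, rfl⟩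
    exact ⟨⟨Sum.inl i, hy, rfl⟩, negF p hp i, rfl⟩

lemma mirror_image_inter_inl (hp : 0 < p) (X : Set (Fin p ⊕ Fin p)) :
    ((mirror k p hp : _ → _) '' X ∩ Set.range Sum.inl)
      = (mirror k p hp : _ → _) '' (X ∩ Set.range Sum.inr) := by
  ext z
  constructor
  · rintro ⟨⟨y, hy, rfl⟩, x, hx⟩
    cases y with
    | inr m => exact ⟨Sum.inr m, ⟨hy, ⟨m, rfl⟩⟩, rfl⟩
    | inl i =>
        exfalso
        have : (mirror k p hp) (Sum.inl i) = Sum.inr (negF p hp i) := rfl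
        rw [this] at hx
        exact absurd hx (by simp)
  · rintro ⟨y, ⟨hy, m, rfl⟩, rfl⟩
    exact ⟨⟨Sum.inr m, hy, rfl⟩, negF p hp m, rfl⟩

/-- Every vertex of `compOut` has a neighbor inside `compOut`, provided `u` has one. -/
lemma compOut_exists_adj {z : V} (hz : z ∈ compOut G S u)
    (hwit : ∃ a, G.Adj u a ∧ a ∉ S) : ∃ z' ∈ compOut G S u, G.Adj z z' := by
  classical
  by_cases hzu : z = u
  · subst hzu
    obtain ⟨a, ha, haS⟩ := hwit
    exact ⟨a, compOut_closed hz ha haS, ha⟩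
  · obtain ⟨w, hw⟩ := hz
    obtain ⟨y, hadj, t, ht⟩ := SimpleGraph.Walk.exists_eq_cons_of_ne hzu w.reverse
    have hy : y ∈ w.support := by
      have : y ∈ w.reverse.support := by rw [ht]; simp
      rwa [SimpleGraph.Walk.support_reverse, List.mem_reverse] at this
    exact ⟨y, compOut_support_subset w hw y hy, hadj⟩

/-- Walk-induction: if every vertex of the component carries an interval inside `M`,
and adjacent vertices have overlapping intervals, then everything between two interval
points lies in `M`. -/
lemma walk_conn_interval (M : Set ℕ) (I : V → Set ℕ)
    (hI1 : ∀ z ∈ compOut G S u, I z ⊆ M)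
    (hI2 : ∀ z ∈ compOut G S u, ∀ a ∈ I z, ∀ b ∈ I z, ∀ c, a ≤ c → c ≤ b → c ∈ I z)
    (hedge : ∀ z ∈ compOut G S u, ∀ z' ∈ compOut G S u, G.Adj z z' → (I z ∩ I z').Nonempty) :
    ∀ z ∈ compOut G S u, ∀ z' ∈ compOut G S u, ∀ a ∈ I z, ∀ b ∈ I z',
      ∀ c, a ≤ c → c ≤ b → c ∈ M := by
  have main : ∀ (z z' : V) (w : G.Walk z z'), (∀ y ∈ w.support, y ∈ compOut G S u) →
      ∀ a ∈ I z, ∀ b ∈ I z', ∀ c, a ≤ c → c ≤ b → c ∈ M := by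
    intro z z' w
    induction w with
    | nil =>
        intro hsup a ha b hb c hac hcb
        have hz := hsup _ (SimpleGraph.Walk.start_mem_support _)
        exact hI1 _ hz (hI2 _ hz a ha b hb c hac hcb)
    | @cons z₀ z₁ z₂ hadj q ih =>
        intro hsup a ha b hb c hac hcb
        have hz₀ : z₀ ∈ compOut G S u := hsup _ (SimpleGraph.Walk.start_mem_support _)
        have hz₁ : z₁ ∈ compOut G S u := hsup _ (by
          rw [SimpleGraph.Walk.support_cons]
          exact List.mem_cons_of_mem _ (SimpleGraph.Walk.start_mem_support _))
        have hsup' : ∀ y ∈ q.support, y ∈ compOut G S u := fun y hy =>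
          hsup y (by rw [SimpleGraph.Walk.support_cons]; exact List.mem_cons_of_mem _ hy)
        obtain ⟨e, he1, he2⟩ := hedge _ hz₀ _ hz₁ hadj
        rcases le_or_gt c e with hce | hce
        · exact hI1 _ hz₀ (hI2 _ hz₀ a ha e he1 c hac hce)
        · exact ih hsup' e he2 b hb c (le_of_lt hce) hcb
  intro z hz z' hz' a ha b hb c hac hcb
  obtain ⟨w, hw⟩ := compOut_conn hz hz'
  exact main z z' w hw a ha b hb c hac hcb

/-- Lift map to `Fin p`. -/
def rho (p : ℕ) (hp : 0 < p) (n : ℕ) : Fin p := ⟨n % p, Nat.mod_lt _ hp⟩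

lemma rho_modEq {p : ℕ} (hp : 0 < p) (n : ℕ) : ((rho p hp n : Fin p) : ℕ) ≡ n [MOD p] := by
  simp [rho, Nat.ModEq, Nat.mod_mod]

lemma rho_eq_iff {p : ℕ} (hp : 0 < p) {n m : ℕ} :
    rho p hp n = rho p hp m ↔ n ≡ m [MOD p] := by
  constructor
  · intro h
    have := congrArg Fin.val h
    simpa [rho, Nat.ModEq] using this
  · intro h
    apply Fin.ext
    simpa [rho, Nat.ModEq] using h

lemma rho_fin {p : ℕ} (hp : 0 < p) (i : Fin p) : rho p hp (i : ℕ) = i := by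
  apply Fin.ext
  simp [rho, Nat.mod_eq_of_lt i.isLt]

/-! ### The main counting lemma (proved below) -/

lemma coreW (k p : ℕ) (hk : 3 ≤ k) (hkp : k ≤ p) (u v : Fin p ⊕ Fin p)
    (S : Set (Fin p ⊕ Fin p)) (hS : IsMinimalSeparator (Gkp k p) u v S)
    (hNu : ¬ (Gkp k p).neighborSet u ⊆ S) (hNv : ¬ (Gkp k p).neighborSet v ⊆ S) :
    (S ∩ Set.range Sum.inr).ncard + (compOut (Gkp k p) S u ∩ Set.range Sum.inr).ncard
      = (compOut (Gkp k p) S u ∩ Set.range Sum.inl).ncard + (k - 1) := by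
  classical
  have hp : 0 < p := by omega
  have hk0 : 0 < k := by omega
  set G := Gkp k p with hG
  set A := compOut G S u with hA
  set B := compOut G S v with hB
  obtain ⟨huS, hvS, -⟩ := id hS.1
  have huA : u ∈ A := mem_compOut_self huS
  have hvB : v ∈ B := mem_compOut_self hvS
  have hAS : ∀ z ∈ A, z ∉ S := fun z hz => compOut_notMem hz
  have hBS : ∀ z ∈ B, z ∉ S := fun z hz => compOut_notMem hz
  have hAB : ∀ z ∈ A, z ∉ B := fun z hz hz' => compOut_disjoint hS.1 hz hz'
  obtain ⟨a', ha'N, ha'S⟩ := Set.not_subset.mp hNu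
  obtain ⟨b', hb'N, hb'S⟩ := Set.not_subset.mp hNv
  have hwitA : ∃ a, G.Adj u a ∧ a ∉ S := ⟨a', ha'N, ha'S⟩
  have hwitB : ∃ a, G.Adj v a ∧ a ∉ S := ⟨b', hb'N, hb'S⟩
  have hadjA : ∀ z ∈ A, ∃ z' ∈ A, G.Adj z z' := fun z hz => compOut_exists_adj hz hwitA
  have hadjB : ∀ z ∈ B, ∃ z' ∈ B, G.Adj z z' := fun z hz => compOut_exists_adj hz hwitB
  have hminA : ∀ s ∈ S, ∃ a ∈ A, G.Adj s a := fun s hs => minsep_adj hS hs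
  have hminB : ∀ s ∈ S, ∃ b ∈ B, G.Adj s b := fun s hs => minsep_adj hS.symm hs
  have hclA : ∀ z ∈ A, ∀ z', G.Adj z z' → z' ∉ S → z' ∈ A :=
    fun z hz z' h1 h2 => compOut_closed hz h1 h2
  have hclB : ∀ z ∈ B, ∀ z', G.Adj z z' → z' ∉ S → z' ∈ B :=
    fun z hz z' h1 h2 => compOut_closed hz h1 h2
  -- B contains an X-vertex
  have hb'adj : G.Adj v b' := hb'N
  have ha'adj : G.Adj u a' := ha'N
  have hBx : ∃ b : Fin p, Sum.inr b ∈ B := by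
    have hb'B : b' ∈ B := hclB _ hvB _ hb'adj hb'S
    rcases hvv : v with i | m
    · rw [hvv] at hb'adj
      obtain ⟨x, hx, hband⟩ := adj_inl_cases hb'adj
      exact ⟨x, hx ▸ hb'B⟩
    · exact ⟨m, hvv ▸ hvB⟩
  obtain ⟨β, hβ⟩ := hBx
  set g := (β : ℕ) with hg
  have hrβ : rho p hp g = β := rho_fin hp β
  -- no A-w is adjacent to x_β
  have hcut : ∀ i : Fin p, Sum.inl i ∈ A → ¬ Band k p i β := by
    intro i hi hband
    have hadj : G.Adj (Sum.inl i) (Sum.inr β) := (adj_inl_inr i β).mpr hband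
    have : (Sum.inr β : Fin p ⊕ Fin p) ∈ A := hclA _ hi _ hadj (hBS _ hβ)
    exact hAB _ this hβ
  -- representative sets
  set NT : Set ℕ := {n | g < n ∧ n ≤ g + p ∧ Sum.inl (rho p hp n) ∈ A} with hNT
  set NX : Set ℕ := {n | g < n ∧ n ≤ g + p ∧ Sum.inr (rho p hp n) ∈ A} with hNX
  -- A contains both kinds of vertices
  have ha'A : a' ∈ A := hclA _ huA _ ha'adj ha'S
  have hAw : ∃ i : Fin p, Sum.inl i ∈ A := by
    rcases huu : u with i | m
    · exact ⟨i, huu ▸ huA⟩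
    · rw [huu] at ha'adj
      obtain ⟨i, hi, hband⟩ := adj_inr_cases ha'adj
      exact ⟨i, hi ▸ ha'A⟩
  have hAx : ∃ m : Fin p, Sum.inr m ∈ A := by
    rcases huu : u with i | m
    · rw [huu] at ha'adj
      obtain ⟨x, hx, hband⟩ := adj_inl_cases ha'adj
      exact ⟨x, hx ▸ ha'A⟩
    · exact ⟨m, huu ▸ huA⟩
  have hliftT : ∀ i : Fin p, Sum.inl i ∈ A → ∃ n ∈ NT, rho p hp n = i := by
    intro i hi
    obtain ⟨n, h1, h2, h3⟩ := exists_lift hp g i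
    have hr : rho p hp n = i := by
      rw [← rho_fin hp i]
      exact (rho_eq_iff hp).mpr h3
    exact ⟨n, ⟨h1, h2, hr ▸ hi⟩, hr⟩
  have hliftX : ∀ x : Fin p, Sum.inr x ∈ A → ∃ m ∈ NX, rho p hp m = x := by
    intro x hx
    obtain ⟨n, h1, h2, h3⟩ := exists_lift hp g x
    have hr : rho p hp n = x := by
      rw [← rho_fin hp x]
      exact (rho_eq_iff hp).mpr h3
    exact ⟨n, ⟨h1, h2, hr ▸ hx⟩, hr⟩
  have hNTne : NT.Nonempty := by
    obtain ⟨i, hi⟩ := hAw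
    obtain ⟨n, hn, -⟩ := hliftT i hi
    exact ⟨n, hn⟩
  -- shadows stay in the window
  have hwin : ∀ n ∈ NT, n + (k - 1) ≤ g + p := by
    rintro n ⟨h1, h2, h3⟩
    by_contra hc
    push_neg at hc
    apply hcut _ h3
    refine ⟨g + p - n, by omega, ?_⟩
    have he : n + (g + p - n) = g + p := by omega
    have h4 : ((rho p hp n : Fin p) : ℕ) + (g + p - n) ≡ g + p [MOD p] := by
      have h4' := (rho_modEq hp n).add_right (g + p - n)
      rwa [he] at h4'
    have h5 : (β : ℕ) ≡ g + p [MOD p] := (Nat.add_mod_right g p).symm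
    exact h5.trans h4.symm
  -- edge lifting
  have hmodm : ∀ n m j : ℕ, ((rho p hp m : Fin p) : ℕ) ≡ ((rho p hp n : Fin p) : ℕ) + j [MOD p] →
      m ≡ n + j [MOD p] := by
    intro n m j h
    exact ((rho_modEq hp m).symm.trans h).trans ((rho_modEq hp n).add_right j)
  have hlift : ∀ n ∈ NT, ∀ m ∈ NX, Band k p (rho p hp n) (rho p hp m) →
      n ≤ m ∧ m ≤ n + (k - 1) := by
    rintro n hn m hm ⟨j, hj, hmod⟩
    have h1 : m ≡ n + j [MOD p] := hmodm n m j hmod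
    have hw := hwin n hn
    have hn1 := hn.1
    have hm1 := hm.1
    have hm2 := hm.2.1
    have h2 := mod_window_inj h1 hm1 hm2 (by omega) (by omega)
    omega
  have hbandpos : ∀ n j : ℕ, j < k → Band k p (rho p hp n) (rho p hp (n + j)) := by
    intro n j hj
    exact ⟨j, hj, (rho_modEq hp (n + j)).trans ((rho_modEq hp n).add_right j).symm⟩
  -- uniqueness of representatives
  have huniq : ∀ n m : ℕ, g < n → n ≤ g + p → g < m → m ≤ g + p →
      rho p hp n = rho p hp m → n = m := by
    intro n m h1 h2 h3 h4 h5
    exact mod_window_inj ((rho_eq_iff hp).mp h5) h1 h2 h3 h4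
  -- the two interval systems
  set MD : Set ℕ := {c | ∃ n ∈ NT, n ≤ c ∧ c ≤ n + (k - 1)} with hMD
  set ME : Set ℕ := {c | ∃ m ∈ NX, m ≤ c + (k - 1) ∧ c ≤ m} with hME
  set ID : (Fin p ⊕ Fin p) → Set ℕ := Sum.elim
    (fun i => {c | ∃ n ∈ NT, rho p hp n = i ∧ n ≤ c ∧ c ≤ n + (k - 1)})
    (fun x => {c | ∃ m ∈ NX, rho p hp m = x ∧ c = m}) with hID
  set IE : (Fin p ⊕ Fin p) → Set ℕ := Sum.elim
    (fun i => {c | ∃ n ∈ NT, rho p hp n = i ∧ c = n})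
    (fun x => {c | ∃ m ∈ NX, rho p hp m = x ∧ m ≤ c + (k - 1) ∧ c ≤ m}) with hIE
  -- interval-system hypotheses for MD
  have hedge_main : ∀ i x : Fin p, Sum.inl i ∈ A → Sum.inr x ∈ A → Band k p i x →
      ∃ n ∈ NT, ∃ m ∈ NX, rho p hp n = i ∧ rho p hp m = x ∧ n ≤ m ∧ m ≤ n + (k - 1) := by
    intro i x hi hx hband
    obtain ⟨n, hn, hrn⟩ := hliftT i hi
    obtain ⟨m, hm, hrm⟩ := hliftX x hx
    have := hlift n hn m hm (by rw [hrn, hrm]; exact hband)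
    exact ⟨n, hn, m, hm, hrn, hrm, this.1, this.2⟩
  have hConnD : ∀ n ∈ NT, ∀ n' ∈ NT, ∀ c, n ≤ c → c ≤ n' + (k - 1) → c ∈ MD := by
    have hI1 : ∀ z ∈ A, ID z ⊆ MD := by
      rintro (i | x) hz c hc
      · obtain ⟨n, hn, -, h2, h3⟩ := hc
        exact ⟨n, hn, h2, h3⟩
      · obtain ⟨m, hm, hrm, hcm⟩ := hc
        obtain ⟨z', hz', hadj⟩ := hadjA _ hz
        obtain ⟨i', hi', hband⟩ := adj_inr_cases hadj
        obtain ⟨n, hn, m', hm', hrn, hrm', h1, h2⟩ :=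
          hedge_main i' x (hi' ▸ hz') hz hband
        have heq : m' = m := huniq m' m hm'.1 hm'.2.1 hm.1 hm.2.1 (by rw [hrm, hrm'])
        exact ⟨n, hn, by omega, by omega⟩
    have hI2 : ∀ z ∈ A, ∀ a ∈ ID z, ∀ b ∈ ID z, ∀ c, a ≤ c → c ≤ b → c ∈ ID z := by
      rintro (i | x) hz a ha b hb c h1 h2
      · obtain ⟨n, hn, hrn, ha1, ha2⟩ := ha
        obtain ⟨n', hn', hrn', hb1, hb2⟩ := hb
        have : n = n' := huniq n n' hn.1 hn.2.1 hn'.1 hn'.2.1 (by rw [hrn, hrn'])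
        exact ⟨n, hn, hrn, by omega, by omega⟩
      · obtain ⟨m, hm, hrm, ham⟩ := ha
        obtain ⟨m', hm', hrm', hbm⟩ := hb
        have heq : m = m' := huniq m m' hm.1 hm.2.1 hm'.1 hm'.2.1 (by rw [hrm, hrm'])
        exact ⟨m, hm, hrm, by omega⟩
    have hedge : ∀ z ∈ A, ∀ z' ∈ A, G.Adj z z' → (ID z ∩ ID z').Nonempty := by
      rintro (i | x) hz (i' | x') hz' hadj
      · exact absurd hadj (not_adj_inl_inl _ _)
      · obtain ⟨n, hn, m, hm, hrn, hrm, h1, h2⟩ :=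
          hedge_main i x' hz hz' ((adj_inl_inr _ _).mp hadj)
        exact ⟨m, ⟨n, hn, hrn, h1, h2⟩, ⟨m, hm, hrm, rfl⟩⟩
      · obtain ⟨n, hn, m, hm, hrn, hrm, h1, h2⟩ :=
          hedge_main i' x hz' hz ((adj_inr_inl _ _).mp hadj)
        exact ⟨m, ⟨m, hm, hrm, rfl⟩, ⟨n, hn, hrn, h1, h2⟩⟩
      · exact absurd hadj (not_adj_inr_inr _ _)
    intro n hn n' hn' c h1 h2
    exact walk_conn_interval MD ID hI1 hI2 hedge
      (Sum.inl (rho p hp n)) hn.2.2 (Sum.inl (rho p hp n')) hn'.2.2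
      n ⟨n, hn, rfl, le_refl n, Nat.le_add_right n _⟩
      (n' + (k - 1)) ⟨n', hn', rfl, Nat.le_add_right n' _, le_refl _⟩ c h1 h2
  have hConnE : ∀ m ∈ NX, ∀ m' ∈ NX, ∀ c, m ≤ c + (k - 1) → c ≤ m' → c ∈ ME := by
    have hI1 : ∀ z ∈ A, IE z ⊆ ME := by
      rintro (i | x) hz c hc
      · obtain ⟨n, hn, hrn, hcn⟩ := hc
        obtain ⟨z', hz', hadj⟩ := hadjA _ hz
        obtain ⟨x', hx', hband⟩ := adj_inl_cases hadj
        obtain ⟨n', hn', m, hm, hrn', hrm, h1, h2⟩ :=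
          hedge_main i x' hz (hx' ▸ hz') hband
        have heq : n' = n := huniq n' n hn'.1 hn'.2.1 hn.1 hn.2.1 (by rw [hrn, hrn'])
        exact ⟨m, hm, by omega, by omega⟩
      · obtain ⟨m, hm, -, h2, h3⟩ := hc
        exact ⟨m, hm, h2, h3⟩
    have hI2 : ∀ z ∈ A, ∀ a ∈ IE z, ∀ b ∈ IE z, ∀ c, a ≤ c → c ≤ b → c ∈ IE z := by
      rintro (i | x) hz a ha b hb c h1 h2
      · obtain ⟨n, hn, hrn, han⟩ := ha
        obtain ⟨n', hn', hrn', hbn⟩ := hb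
        have heq : n = n' := huniq n n' hn.1 hn.2.1 hn'.1 hn'.2.1 (by rw [hrn, hrn'])
        exact ⟨n, hn, hrn, by omega⟩
      · obtain ⟨m, hm, hrm, ha1, ha2⟩ := ha
        obtain ⟨m', hm', hrm', hb1, hb2⟩ := hb
        have : m = m' := huniq m m' hm.1 hm.2.1 hm'.1 hm'.2.1 (by rw [hrm, hrm'])
        exact ⟨m, hm, hrm, by omega, by omega⟩
    have hedge : ∀ z ∈ A, ∀ z' ∈ A, G.Adj z z' → (IE z ∩ IE z').Nonempty := by
      rintro (i | x) hz (i' | x') hz' hadj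
      · exact absurd hadj (not_adj_inl_inl _ _)
      · obtain ⟨n, hn, m, hm, hrn, hrm, h1, h2⟩ :=
          hedge_main i x' hz hz' ((adj_inl_inr _ _).mp hadj)
        exact ⟨n, ⟨n, hn, hrn, rfl⟩, ⟨m, hm, hrm, by omega, by omega⟩⟩
      · obtain ⟨n, hn, m, hm, hrn, hrm, h1, h2⟩ :=
          hedge_main i' x hz' hz ((adj_inr_inl _ _).mp hadj)
        exact ⟨n, ⟨m, hm, hrm, by omega, by omega⟩, ⟨n, hn, hrn, rfl⟩⟩
      · exact absurd hadj (not_adj_inr_inr _ _)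
    intro m hm m' hm' c h1 h2
    rcases le_or_gt c m with hcm | hcm
    · exact ⟨m, hm, h1, hcm⟩
    · exact walk_conn_interval ME IE hI1 hI2 hedge
        (Sum.inr (rho p hp m)) hm.2.2 (Sum.inr (rho p hp m')) hm'.2.2
        m ⟨m, hm, rfl, Nat.le_add_right m _, le_refl m⟩
        m' ⟨m', hm', rfl, Nat.le_add_right m' _, le_refl m'⟩ c (le_of_lt hcm) h2
  -- extremal representatives
  have hbdd : BddAbove NT := ⟨g + p, fun n hn => hn.2.1⟩
  set tmin := sInf NT with htmin'
  set tmax := sSup NT with htmax'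
  have htmin : tmin ∈ NT := Nat.sInf_mem hNTne
  have htmax : tmax ∈ NT := Nat.sSup_mem hNTne hbdd
  have hrange : ∀ n ∈ NT, tmin ≤ n ∧ n ≤ tmax := fun n hn =>
    ⟨Nat.sInf_le hn, le_csSup hbdd hn⟩
  -- THE GAP LEMMA
  have hgap : ∀ c, tmin ≤ c → c ≤ tmax → Sum.inl (rho p hp c) ∈ A := by
    intro c h1 h2
    by_contra hcA
    have hcw1 : g < c := lt_of_lt_of_le htmin.1 h1
    have hcw2 : c + (k - 1) ≤ g + p := le_trans (by omega) (hwin tmax htmax)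
    -- every x in the shadow of c is in A ∪ S
    have hsh : ∀ j, j < k → Sum.inr (rho p hp (c + j)) ∈ A ∨ Sum.inr (rho p hp (c + j)) ∈ S := by
      intro j hj
      have hcd : c + j ∈ MD := hConnD tmin htmin tmax htmax (c + j) (by omega) (by omega)
      obtain ⟨n, hn, hn1, hn2⟩ := hcd
      have hband : Band k p (rho p hp n) (rho p hp (c + j)) := by
        have : c + j = n + (c + j - n) := by omega
        rw [this]
        exact hbandpos n _ (by omega)
      have hadj : G.Adj (Sum.inl (rho p hp n)) (Sum.inr (rho p hp (c + j))) :=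
        (adj_inl_inr _ _).mpr hband
      by_cases hxs : Sum.inr (rho p hp (c + j)) ∈ S
      · exact Or.inr hxs
      · exact Or.inl (hclA _ hn.2.2 _ hadj hxs)
    -- w_c cannot be in S or B
    have hnotSB : Sum.inl (rho p hp c) ∉ S ∧ Sum.inl (rho p hp c) ∉ B := by
      constructor
      · intro hcS
        obtain ⟨b, hb, hadj⟩ := hminB _ hcS
        obtain ⟨x, hx, hband⟩ := adj_inl_cases hadj
        obtain ⟨j, hj, hmod⟩ := hband
        have hxe : x = rho p hp (c + j) := by
          rw [← rho_fin hp x]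
          apply (rho_eq_iff hp).mpr
          exact hmod.trans ((rho_modEq hp c).add_right j)
        rcases hsh j hj with h | h
        · exact hAB _ h (hxe ▸ (hx ▸ hb))
        · exact hBS _ (hxe ▸ (hx ▸ hb)) h
      · intro hcB
        obtain ⟨z', hz', hadj⟩ := hadjB _ hcB
        obtain ⟨x, hx, hband⟩ := adj_inl_cases hadj
        obtain ⟨j, hj, hmod⟩ := hband
        have hxe : x = rho p hp (c + j) := by
          rw [← rho_fin hp x]
          apply (rho_eq_iff hp).mpr
          exact hmod.trans ((rho_modEq hp c).add_right j)
        rcases hsh j hj with h | h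
        · exact hAB _ h (hxe ▸ (hx ▸ hz'))
        · exact hBS _ (hxe ▸ (hx ▸ hz')) h
    -- so w_c has no A-neighbor at all, hence c ∉ ME
    have hnoA : ∀ j, j < k → Sum.inr (rho p hp (c + j)) ∉ A := by
      intro j hj hxA
      have hband : Band k p (rho p hp c) (rho p hp (c + j)) := hbandpos c j hj
      have hadj : G.Adj (Sum.inr (rho p hp (c + j))) (Sum.inl (rho p hp c)) :=
        (adj_inr_inl _ _).mpr hband
      exact hcA (hclA _ hxA _ hadj hnotSB.1)
    -- but c ∈ ME by connectivity
    obtain ⟨m1, hm1, hm1a, hm1b⟩ : tmin ∈ ME := by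
      obtain ⟨z', hz', hadj⟩ := hadjA _ htmin.2.2
      obtain ⟨x', hx', hband⟩ := adj_inl_cases hadj
      obtain ⟨n', hn', m, hm, hrn', hrm, hh1, hh2⟩ :=
        hedge_main _ x' htmin.2.2 (hx' ▸ hz') hband
      have : n' = tmin := huniq n' tmin hn'.1 hn'.2.1 htmin.1 htmin.2.1 hrn'
      exact ⟨m, hm, by omega, by omega⟩
    obtain ⟨m2, hm2, hm2a, hm2b⟩ : tmax ∈ ME := by
      obtain ⟨z', hz', hadj⟩ := hadjA _ htmax.2.2
      obtain ⟨x', hx', hband⟩ := adj_inl_cases hadj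
      obtain ⟨n', hn', m, hm, hrn', hrm, hh1, hh2⟩ :=
        hedge_main _ x' htmax.2.2 (hx' ▸ hz') hband
      have : n' = tmax := huniq n' tmax hn'.1 hn'.2.1 htmax.1 htmax.2.1 hrn'
      exact ⟨m, hm, by omega, by omega⟩
    have hcME : c ∈ ME := hConnE m1 hm1 m2 hm2 c (by omega) (by omega)
    obtain ⟨m, hm, hma, hmb⟩ := hcME
    have : m = c + (m - c) := by omega
    exact hnoA (m - c) (by omega) (by rw [← this]; exact hm.2.2)
  -- ============ COUNTING ============
  have htminmax : tmin ≤ tmax := (hrange tmin htmin).2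
  set TA : Set (Fin p) := {i | Sum.inl i ∈ A} with hTA
  set XA : Set (Fin p) := {x | Sum.inr x ∈ A} with hXA
  set DA : Set (Fin p) := {x | ∃ i ∈ TA, Band k p i x} with hDA
  have hTAeq : TA = rho p hp '' Set.Icc tmin tmax := by
    ext i
    constructor
    · intro hi
      obtain ⟨n, hn, hrn⟩ := hliftT i hi
      exact ⟨n, ⟨(hrange n hn).1, (hrange n hn).2⟩, hrn⟩
    · rintro ⟨n, ⟨h1, h2⟩, rfl⟩
      exact hgap n h1 h2
  have hDAeq : DA = rho p hp '' Set.Icc tmin (tmax + (k - 1)) := by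
    ext x
    constructor
    · rintro ⟨i, hi, hband⟩
      obtain ⟨n, hn, hrn⟩ := hliftT i hi
      obtain ⟨j, hj, hmod⟩ := hband
      have hxe : rho p hp (n + j) = x := by
        rw [← rho_fin hp x]
        apply (rho_eq_iff hp).mpr
        apply Nat.ModEq.symm
        apply hmod.trans
        rw [← hrn]
        exact (rho_modEq hp n).add_right j
      refine ⟨n + j, ⟨?_, ?_⟩, hxe⟩
      · have := (hrange n hn).1; omega
      · have := (hrange n hn).2; omega
    · rintro ⟨c, ⟨h1, h2⟩, rfl⟩
      obtain ⟨n, hn, hn1, hn2⟩ := hConnD tmin htmin tmax htmax c h1 h2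
      refine ⟨rho p hp n, hn.2.2, ?_⟩
      have hce : c = n + (c - n) := by omega
      rw [hce]
      exact hbandpos n _ (by omega)
  have hXA_sub : XA ⊆ DA := by
    intro x hx
    obtain ⟨z', hz', hadj⟩ := hadjA _ hx
    obtain ⟨i', hi', hband⟩ := adj_inr_cases hadj
    exact ⟨i', show Sum.inl i' ∈ A from hi' ▸ hz', hband⟩
  have hSinr : S ∩ Set.range Sum.inr = Sum.inr '' (DA \ XA) := by
    ext z
    constructor
    · rintro ⟨hzS, x, rfl⟩
      refine ⟨x, ⟨?_, ?_⟩, rfl⟩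
      · obtain ⟨a, ha, hadj⟩ := hminA _ hzS
        obtain ⟨i, hi, hband⟩ := adj_inr_cases hadj
        exact ⟨i, show Sum.inl i ∈ A from hi ▸ ha, hband⟩
      · exact fun hxA => hAS _ hxA hzS
    · rintro ⟨x, ⟨⟨i, hi, hband⟩, hxA⟩, rfl⟩
      refine ⟨?_, ⟨x, rfl⟩⟩
      by_contra hxS
      exact hxA (hclA _ hi _ ((adj_inl_inr i x).mpr hband) hxS)
  have hAinr : A ∩ Set.range Sum.inr = Sum.inr '' XA := by
    ext z
    constructor
    · rintro ⟨hzA, x, rfl⟩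
      exact ⟨x, hzA, rfl⟩
    · rintro ⟨x, hx, rfl⟩
      exact ⟨hx, ⟨x, rfl⟩⟩
  have hAinl : A ∩ Set.range Sum.inl = Sum.inl '' TA := by
    ext z
    constructor
    · rintro ⟨hzA, i, rfl⟩
      exact ⟨i, hzA, rfl⟩
    · rintro ⟨i, hi, rfl⟩
      exact ⟨hi, ⟨i, rfl⟩⟩
  have hwmax := hwin tmax htmax
  have hinj1 : Set.InjOn (rho p hp) (Set.Icc tmin (tmax + (k - 1))) := by
    rintro a ⟨ha1, ha2⟩ b ⟨hb1, hb2⟩ hab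
    have h0 := htmin.1
    exact huniq a b (by omega) (by omega) (by omega) (by omega) hab
  have hinj2 : Set.InjOn (rho p hp) (Set.Icc tmin tmax) :=
    hinj1.mono (Set.Icc_subset_Icc le_rfl (by omega))
  have hicc : ∀ a b : ℕ, (Set.Icc a b).ncard = b + 1 - a := by
    intro a b
    rw [show (Set.Icc a b) = ↑(Finset.Icc a b) by simp, Set.ncard_coe_finset, Nat.card_Icc]
  have hTcard : TA.ncard = tmax + 1 - tmin := by
    rw [hTAeq, Set.ncard_image_of_injOn hinj2, hicc]
  have hDcard : DA.ncard = tmax + (k - 1) + 1 - tmin := by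
    rw [hDAeq, Set.ncard_image_of_injOn hinj1, hicc]
  have hdiff : (DA \ XA).ncard + XA.ncard = DA.ncard :=
    Set.ncard_diff_add_ncard_of_subset hXA_sub (Set.toFinite _)
  rw [hSinr, hAinr, hAinl,
    Set.ncard_image_of_injective _ Sum.inr_injective,
    Set.ncard_image_of_injective _ Sum.inr_injective,
    Set.ncard_image_of_injective _ Sum.inl_injective]
  omega

theorem Gkp_minimal_separator_card (k p : ℕ) (hk : 3 ≤ k) (hkp : k ≤ p)
    (u v : Fin p ⊕ Fin p) (huv : u ≠ v) (hadj : ¬ (Gkp k p).Adj u v)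
    (S : Set (Fin p ⊕ Fin p)) (hS : IsMinimalSeparator (Gkp k p) u v S) :
    S.ncard = k ∨ S.ncard = 2 * k - 2 := by
  classical
  have hp : 0 < p := by omega
  have hk0 : 0 < k := by omega
  have ncard_nbhd : ∀ z : Fin p ⊕ Fin p, ((Gkp k p).neighborSet z).ncard = k := by
    rintro (i | x)
    · rw [neighborSet_inl, Set.ncard_image_of_injective _ Sum.inr_injective]
      exact ncard_band_right hk0 hkp i
    · rw [neighborSet_inr, Set.ncard_image_of_injective _ Sum.inl_injective]
      exact ncard_band_left hk0 hkp x
  by_cases hNu : (Gkp k p).neighborSet u ⊆ S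
  · left
    rw [S_eq_neighborSet hS hNu]
    exact ncard_nbhd u
  by_cases hNv : (Gkp k p).neighborSet v ⊆ S
  · left
    rw [S_eq_neighborSet hS.symm hNv]
    exact ncard_nbhd v
  right
  set G := Gkp k p
  set f := mirror k p hp with hf
  have h1 := coreW k p hk hkp u v S hS hNu hNv
  have hS' : IsMinimalSeparator G (f u) (f v) ((f : _ → _) '' S) :=
    isMinimalSeparator_image f hS
  have hNu' : ¬ G.neighborSet (f u) ⊆ (f : _ → _) '' S := by
    intro hc
    apply hNu
    intro a ha
    have : (f : _ → _) a ∈ G.neighborSet (f u) := by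
      rw [SimpleGraph.mem_neighborSet] at ha ⊢
      exact f.map_rel_iff.mpr ha
    obtain ⟨s, hs, hfs⟩ := hc this
    rwa [f.toEquiv.injective hfs] at hs
  have hNv' : ¬ G.neighborSet (f v) ⊆ (f : _ → _) '' S := by
    intro hc
    apply hNv
    intro a ha
    have : (f : _ → _) a ∈ G.neighborSet (f v) := by
      rw [SimpleGraph.mem_neighborSet] at ha ⊢
      exact f.map_rel_iff.mpr ha
    obtain ⟨s, hs, hfs⟩ := hc this
    rwa [f.toEquiv.injective hfs] at hs
  have h2 := coreW k p hk hkp (f u) (f v) ((f : _ → _) '' S) hS' hNu' hNv'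
  rw [compOut_image f S u] at h2
  rw [mirror_image_inter_inr hp, mirror_image_inter_inr hp,
    mirror_image_inter_inl hp] at h2
  have hinj : Function.Injective (f : _ → _) := f.toEquiv.injective
  rw [Set.ncard_image_of_injective _ hinj, Set.ncard_image_of_injective _ hinj,
    Set.ncard_image_of_injective _ hinj] at h2
  -- h2 : |S_l| + |A_l| = |A_r| + (k-1)
  have hsplit := ncard_split (p := p) S
  omega

end AvgConn
end

section
/- Let 3 ≤ k ≤ p and let u, v be nonadjacent vertices of G_{k,p}. If S is a minimal vertex separator of u and v with |S| = k, then S = N(u) or S = N(v). -/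
namespace AvgConn

/-! ### helpers -/


lemma modeq_close {p a b : ℕ} (h : a % p = b % p) (h1 : a ≤ b) (h2 : b < a + p) : a = b := by
  have hd : p ∣ b - a := (Nat.modEq_iff_dvd' h1).mp h
  have := Nat.eq_zero_of_dvd_of_lt hd (by omega)
  omega

def Wv (p : ℕ) (hp : 0 < p) (n : ℕ) : Fin p ⊕ Fin p := Sum.inl ⟨n % p, Nat.mod_lt n hp⟩

def Xv (p : ℕ) (hp : 0 < p) (n : ℕ) : Fin p ⊕ Fin p := Sum.inr ⟨n % p, Nat.mod_lt n hp⟩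

lemma Wv_eq_iff {p : ℕ} (hp : 0 < p) {m n : ℕ} : Wv p hp m = Wv p hp n ↔ m % p = n % p := by
  simp [Wv, Fin.ext_iff]

lemma Xv_eq_iff {p : ℕ} (hp : 0 < p) {m n : ℕ} : Xv p hp m = Xv p hp n ↔ m % p = n % p := by
  simp [Xv, Fin.ext_iff]

lemma Wv_ne_Xv {p : ℕ} (hp : 0 < p) {m n : ℕ} : Wv p hp m ≠ Xv p hp n := by
  simp [Wv, Xv]

lemma Wv_fin {p : ℕ} (hp : 0 < p) (i : Fin p) : Wv p hp (i : ℕ) = Sum.inl i := by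
  simp [Wv, Fin.ext_iff, Nat.mod_eq_of_lt i.isLt]

lemma Xv_fin {p : ℕ} (hp : 0 < p) (i : Fin p) : Xv p hp (i : ℕ) = Sum.inr i := by
  simp [Xv, Fin.ext_iff, Nat.mod_eq_of_lt i.isLt]

lemma add_cancel_mod {p t d d' : ℕ} (h : (t + d) % p = (t + d') % p)
    (hd : d < p) (hd' : d' < p) : d = d' := by
  have h' : d ≡ d' [MOD p] := Nat.ModEq.add_left_cancel' t h
  rwa [Nat.ModEq, Nat.mod_eq_of_lt hd, Nat.mod_eq_of_lt hd'] at h'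

/-! ### adjacency -/

lemma Gkp_adj_WX {k p : ℕ} (hp : 0 < p) {n j : ℕ} (hj : j < k) :
    (Gkp k p).Adj (Wv p hp n) (Xv p hp (n + j)) := by
  rw [Gkp, SimpleGraph.fromRel_adj]
  refine ⟨by simp [Wv, Xv], Or.inl ⟨_, _, rfl, rfl, j, hj, ?_⟩⟩
  show (n + j) % p = (n % p + j) % p
  rw [Nat.mod_add_mod]

lemma adj_inl_elim {k p : ℕ} {i : Fin p} {c : Fin p ⊕ Fin p}
    (h : (Gkp k p).Adj (Sum.inl i) c) :
    ∃ x : Fin p, c = Sum.inr x ∧ ∃ j, j < k ∧ (x : ℕ) = ((i : ℕ) + j) % p := by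
  rw [Gkp, SimpleGraph.fromRel_adj] at h
  rcases h.2 with ⟨i', x, h1, h2, hj⟩ | ⟨i', x, h1, h2, hj⟩
  · cases h1; exact ⟨x, h2, hj⟩
  · exact absurd h2 (by simp)

lemma adj_inr_elim {k p : ℕ} {m : Fin p} {c : Fin p ⊕ Fin p}
    (h : (Gkp k p).Adj (Sum.inr m) c) :
    ∃ i : Fin p, c = Sum.inl i ∧ ∃ j, j < k ∧ (m : ℕ) = ((i : ℕ) + j) % p := by
  rw [Gkp, SimpleGraph.fromRel_adj] at h
  rcases h.2 with ⟨i', x, h1, h2, hj⟩ | ⟨i', x, h1, h2, hj⟩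
  · exact absurd h1 (by simp)
  · cases h2; exact ⟨i', h1, hj⟩

/-! ### avoid graph -/

def AvoidG {V : Type*} (G : SimpleGraph V) (S : Set V) : SimpleGraph V where
  Adj a b := G.Adj a b ∧ a ∉ S ∧ b ∉ S
  symm := ⟨fun a b h => ⟨h.1.symm, h.2.2, h.2.1⟩⟩
  loopless := ⟨fun a h => G.loopless.irrefl a h.1⟩

lemma AvoidG_walk {V : Type*} {G : SimpleGraph V} {S : Set V} {u v : V}
    (w : (AvoidG G S).Walk u v) (hu : u ∉ S) :
    ∃ w' : G.Walk u v, ∀ z ∈ w'.support, z ∉ S := by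
  induction w with
  | nil => exact ⟨.nil, by simpa using hu⟩
  | @cons a b c h q ih =>
      obtain ⟨w', hw'⟩ := ih h.2.2
      refine ⟨.cons h.1 w', ?_⟩
      intro z hz
      rw [SimpleGraph.Walk.support_cons] at hz
      rcases List.mem_cons.mp hz with rfl | hz
      · exact h.2.1
      · exact hw' z hz




lemma walker {k p : ℕ} (hk : 3 ≤ k) (hkp : k ≤ p) (hp : 0 < p) (S : Set (Fin p ⊕ Fin p)) :
    ∀ (n t β : ℕ), β - t ≤ n → t < β →
      Wv p hp t ∉ S → Wv p hp β ∉ S →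
      (∃ a, a ≤ k - 1 ∧ Xv p hp (t + a) ∉ S) →
      ¬ (AvoidG (Gkp k p) S).Reachable (Wv p hp t) (Wv p hp β) →
      ∃ t' r, t ≤ t' ∧ t' < β ∧ r ≤ k - 1 ∧
        Wv p hp t' ∉ S ∧
        (∀ d, 1 ≤ d → d ≤ r → Wv p hp (t' + d) ∈ S) ∧
        (∀ d, r < d → d ≤ k - 1 → Xv p hp (t' + d) ∈ S) ∧
        (∃ a, a ≤ r ∧ Xv p hp (t' + a) ∉ S) := by
  intro n
  induction n with
  | zero => intro t β h hlt; omega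
  | succ n ih =>
    intro t β hn hlt htS hβS hanch hreach
    by_cases hw : ∀ d, 1 ≤ d → d ≤ k - 1 → Wv p hp (t + d) ∈ S
    · exact ⟨t, k - 1, le_refl _, hlt, le_refl _, htS, hw, fun d h1 h2 => by omega, hanch⟩
    · push_neg at hw
      have hP : ∃ d, 1 ≤ d ∧ d ≤ k - 1 ∧ Wv p hp (t + d) ∉ S := by
        obtain ⟨d, h1, h2, h3⟩ := hw; exact ⟨d, h1, h2, h3⟩
      classical
      set d₀ := Nat.find hP with hd₀def
      obtain ⟨hd₀1, hd₀k, hd₀S⟩ := Nat.find_spec hP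
      have hmin : ∀ m, m < d₀ → ¬(1 ≤ m ∧ m ≤ k - 1 ∧ Wv p hp (t + m) ∉ S) :=
        fun m hm => Nat.find_min hP hm
      set r := d₀ - 1 with hrdef
      have hrk : r ≤ k - 2 := by omega
      have hS1 : ∀ d, 1 ≤ d → d ≤ r → Wv p hp (t + d) ∈ S := by
        intro d h1 h2
        by_contra hc
        exact hmin d (by omega) ⟨h1, by omega, hc⟩
      by_cases hx : ∀ d, r < d → d ≤ k - 1 → Xv p hp (t + d) ∈ S
      · refine ⟨t, r, le_refl _, hlt, by omega, htS, hS1, hx, ?_⟩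
        obtain ⟨a, ha, haS⟩ := hanch
        refine ⟨a, ?_, haS⟩
        by_contra hc
        exact haS (hx a (by omega) ha)
      · push_neg at hx
        obtain ⟨d₁, hd₁r, hd₁k, hd₁S⟩ := hx
        have hd₀d₁ : d₀ ≤ d₁ := by omega
        have ha1 : (AvoidG (Gkp k p) S).Adj (Wv p hp t) (Xv p hp (t + d₁)) :=
          ⟨Gkp_adj_WX hp (by omega), htS, hd₁S⟩
        have ha2 : (AvoidG (Gkp k p) S).Adj (Xv p hp (t + d₁)) (Wv p hp (t + d₀)) := by
          refine ⟨?_, hd₁S, hd₀S⟩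
          have := Gkp_adj_WX (k := k) hp (n := t + d₀) (j := d₁ - d₀) (by omega)
          rw [show t + d₀ + (d₁ - d₀) = t + d₁ by omega] at this
          exact this.symm
        have hreach' : (AvoidG (Gkp k p) S).Reachable (Wv p hp t) (Wv p hp (t + d₀)) :=
          (ha1.reachable).trans ha2.reachable
        have hle : t + d₀ ≤ β := by
          by_contra hc
          have h1 : 1 ≤ β - t := by omega
          have h2 : β - t < d₀ := by omega
          have := hmin (β - t) h2
          rw [show t + (β - t) = β by omega] at this
          exact this ⟨h1, by omega, hβS⟩
        rcases eq_or_lt_of_le hle with heq | hlt'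
        · exact absurd (heq ▸ hreach') hreach
        · have hanch' : ∃ a, a ≤ k - 1 ∧ Xv p hp (t + d₀ + a) ∉ S := by
            refine ⟨d₁ - d₀, by omega, ?_⟩
            rw [show t + d₀ + (d₁ - d₀) = t + d₁ by omega]
            exact hd₁S
          have hreach'' : ¬ (AvoidG (Gkp k p) S).Reachable (Wv p hp (t + d₀)) (Wv p hp β) :=
            fun h => hreach (hreach'.trans h)
          obtain ⟨t', r', h1, h2, h3, h4, h5, h6, h7⟩ :=
            ih (t + d₀) β (by omega) hlt' hd₀S hβS hanch' hreach''
          exact ⟨t', r', by omega, h2, h3, h4, h5, h6, h7⟩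



lemma resolve {p t1 t2 δ δ' : ℕ} (h12 : t1 < t2) (h21 : t2 < t1 + p)
    (hδ : δ < p) (hδ' : δ' < p) (h : (t1 + δ) % p = (t2 + δ') % p) :
    δ = (t2 - t1) + δ' ∨ δ + p = (t2 - t1) + δ' := by
  set s := t2 - t1 with hs
  rw [show t2 + δ' = t1 + (s + δ') by omega] at h
  have h' : δ ≡ s + δ' [MOD p] := Nat.ModEq.add_left_cancel' t1 h
  rw [Nat.ModEq, Nat.mod_eq_of_lt hδ] at h'
  rcases Nat.lt_or_ge (s + δ') p with hlt | hge
  · left; rw [Nat.mod_eq_of_lt hlt] at h'; exact h'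
  · right
    rw [Nat.mod_eq_sub_mod hge, Nat.mod_eq_of_lt (by omega)] at h'
    omega

lemma counting {k p : ℕ} (hk : 3 ≤ k) (hkp : k ≤ p) (hp : 0 < p) {S : Set (Fin p ⊕ Fin p)}
    (hcard : S.ncard = k) {t1 t2 r1 r2 : ℕ}
    (h12 : t1 < t2) (h21 : t2 < t1 + p)
    (hr1 : r1 ≤ k - 1) (hr2 : r2 ≤ k - 1)
    (L1 : Wv p hp t1 ∉ S) (L2 : Wv p hp t2 ∉ S)
    (W1 : ∀ d, 1 ≤ d → d ≤ r1 → Wv p hp (t1 + d) ∈ S)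
    (X1 : ∀ d, r1 < d → d ≤ k - 1 → Xv p hp (t1 + d) ∈ S)
    (W2 : ∀ d, 1 ≤ d → d ≤ r2 → Wv p hp (t2 + d) ∈ S)
    (X2 : ∀ d, r2 < d → d ≤ k - 1 → Xv p hp (t2 + d) ∈ S)
    (A1 : ∃ a, a ≤ r1 ∧ Xv p hp (t1 + a) ∉ S)
    (A2 : ∃ a, a ≤ r2 ∧ Xv p hp (t2 + a) ∉ S) : False := by
  classical
  set s := t2 - t1 with hs
  set s' := t1 + p - t2 with hs'
  have hss' : s + s' = p := by omega
  have hs1 : 1 ≤ s := by omega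
  have hs'1 : 1 ≤ s' := by omega
  set f1 : ℕ → Fin p ⊕ Fin p :=
    fun d => if d ≤ r1 then Wv p hp (t1 + d) else Xv p hp (t1 + d) with hf1
  set f2 : ℕ → Fin p ⊕ Fin p :=
    fun d => if d ≤ r2 then Wv p hp (t2 + d) else Xv p hp (t2 + d) with hf2
  set B1 := (Finset.Icc 1 (k - 1)).image f1 with hB1
  set B2 := (Finset.Icc 1 (k - 1)).image f2 with hB2
  have hinj : ∀ (t r : ℕ),
      Set.InjOn (fun d => if d ≤ r then Wv p hp (t + d) else Xv p hp (t + d))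
        ↑(Finset.Icc 1 (k - 1)) := by
    intro t r d hd d' hd' h
    simp only [Finset.coe_Icc, Set.mem_Icc] at hd hd'
    dsimp only at h
    split_ifs at h with h1 h2 h2
    · exact add_cancel_mod ((Wv_eq_iff hp).mp h) (by omega) (by omega)
    · exact absurd h (Wv_ne_Xv hp)
    · exact absurd h.symm (Wv_ne_Xv hp)
    · exact add_cancel_mod ((Xv_eq_iff hp).mp h) (by omega) (by omega)
  have hB1card : B1.card = k - 1 := by
    rw [hB1, Finset.card_image_of_injOn (hinj t1 r1), Nat.card_Icc]; omega
  have hB2card : B2.card = k - 1 := by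
    rw [hB2, Finset.card_image_of_injOn (hinj t2 r2), Nat.card_Icc]; omega
  have hsubS : ↑(B1 ∪ B2) ⊆ S := by
    intro z hz
    simp only [Finset.coe_union, Set.mem_union, Finset.mem_coe, hB1, hB2,
      Finset.mem_image, Finset.mem_Icc] at hz
    rcases hz with ⟨d, hd, rfl⟩ | ⟨d, hd, rfl⟩
    · by_cases h : d ≤ r1
      · rw [hf1]; dsimp only; rw [if_pos h]; exact W1 d hd.1 h
      · rw [hf1]; dsimp only; rw [if_neg h]; exact X1 d (by omega) hd.2
    · by_cases h : d ≤ r2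
      · rw [hf2]; dsimp only; rw [if_pos h]; exact W2 d hd.1 h
      · rw [hf2]; dsimp only; rw [if_neg h]; exact X2 d (by omega) hd.2
  have hfin : S.Finite := by
    rcases S.finite_or_infinite with h | h
    · exact h
    · rw [Set.Infinite.ncard h] at hcard; omega
  have hcardU : (B1 ∪ B2).card ≤ k := by
    have h := Set.ncard_le_ncard hsubS hfin
    rwa [Set.ncard_coe_finset, hcard] at h
  have hUI : (B1 ∪ B2).card + (B1 ∩ B2).card = (k - 1) + (k - 1) := by
    rw [Finset.card_union_add_card_inter, hB1card, hB2card]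
  set C1 := (Finset.Icc (r2 + 1) (k - 1 - s)).image (fun δ => Xv p hp (t2 + δ)) with hC1
  set C2 := (Finset.Icc (r1 + 1) (k - 1 - s')).image (fun δ => Xv p hp (t1 + δ)) with hC2
  have hIC : B1 ∩ B2 ⊆ C1 ∪ C2 := by
    intro e he
    rw [Finset.mem_inter] at he
    obtain ⟨he1, he2⟩ := he
    rw [hB1, Finset.mem_image] at he1
    rw [hB2, Finset.mem_image] at he2
    obtain ⟨δ, hδ, hfe⟩ := he1
    obtain ⟨δ', hδ', hfe'⟩ := he2
    rw [Finset.mem_Icc] at hδ hδ'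
    have heq : (if δ ≤ r1 then Wv p hp (t1 + δ) else Xv p hp (t1 + δ)) =
        (if δ' ≤ r2 then Wv p hp (t2 + δ') else Xv p hp (t2 + δ')) := hfe.trans hfe'.symm
    split_ifs at heq with h1 h2 h2
    · -- both W
      rcases resolve h12 h21 (by omega) (by omega) ((Wv_eq_iff hp).mp heq) with hc | hc
      · have hw := W1 s hs1 (by omega)
        rw [show t1 + s = t2 by omega] at hw
        exact absurd hw L2
      · have hw := W2 s' hs'1 (by omega)
        have : Wv p hp (t2 + s') = Wv p hp t1 := by
          rw [Wv_eq_iff hp, show t2 + s' = t1 + p by omega]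
          exact Nat.add_mod_right t1 p
        rw [this] at hw
        exact absurd hw L1
    · exact absurd heq (Wv_ne_Xv hp)
    · exact absurd heq.symm (Wv_ne_Xv hp)
    · -- both X
      rcases resolve h12 h21 (by omega) (by omega) ((Xv_eq_iff hp).mp heq) with hc | hc
      · refine Finset.mem_union_left _ ?_
        rw [hC1, Finset.mem_image]
        refine ⟨δ', Finset.mem_Icc.mpr (by omega), ?_⟩
        rw [← hfe', hf2]
        dsimp only
        rw [if_neg h2]
      · refine Finset.mem_union_right _ ?_
        rw [hC2, Finset.mem_image]
        refine ⟨δ, Finset.mem_Icc.mpr (by omega), ?_⟩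
        rw [← hfe, hf1]
        dsimp only
        rw [if_neg h1]
  have hIcard : (B1 ∩ B2).card ≤ ((k - 1 - s) + 1 - (r2 + 1)) + ((k - 1 - s') + 1 - (r1 + 1)) := by
    refine le_trans (Finset.card_le_card hIC) (le_trans (Finset.card_union_le _ _) ?_)
    have h1 : C1.card ≤ (k - 1 - s) + 1 - (r2 + 1) := by
      refine le_trans Finset.card_image_le ?_
      rw [Nat.card_Icc]
    have h2 : C2.card ≤ (k - 1 - s') + 1 - (r1 + 1) := by
      refine le_trans Finset.card_image_le ?_
      rw [Nat.card_Icc]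
    omega
  have hkey : (p = k ∧ r1 = 0 ∧ r2 = 0) ∨ (s' = 1 ∧ r1 = 0) ∨ (s = 1 ∧ r2 = 0) := by
    omega
  obtain ⟨a1, ha1, ha1S⟩ := A1
  obtain ⟨a2, ha2, ha2S⟩ := A2
  rcases hkey with ⟨hpk, h10, h20⟩ | ⟨hs'one, h10⟩ | ⟨hsone, h20⟩
  · -- p = k, r1 = r2 = 0
    have hx := X2 s' (by omega) (by omega)
    have : Xv p hp (t2 + s') = Xv p hp (t1 + a1) := by
      rw [Xv_eq_iff hp, show t2 + s' = t1 + p by omega, show t1 + a1 = t1 by omega]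
      exact Nat.add_mod_right t1 p
    rw [this] at hx
    exact ha1S hx
  · -- s' = 1, r1 = 0
    rcases Nat.eq_zero_or_pos r2 with h20 | h2pos
    · have hx := X2 1 (by omega) (by omega)
      have : Xv p hp (t2 + 1) = Xv p hp (t1 + a1) := by
        rw [Xv_eq_iff hp, show t2 + 1 = t1 + p by omega, show t1 + a1 = t1 by omega]
        exact Nat.add_mod_right t1 p
      rw [this] at hx
      exact ha1S hx
    · have hw := W2 1 le_rfl h2pos
      have : Wv p hp (t2 + 1) = Wv p hp t1 := by
        rw [Wv_eq_iff hp, show t2 + 1 = t1 + p by omega]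
        exact Nat.add_mod_right t1 p
      rw [this] at hw
      exact L1 hw
  · -- s = 1, r2 = 0
    rcases Nat.eq_zero_or_pos r1 with h10 | h1pos
    · have hx := X1 1 (by omega) (by omega)
      have : Xv p hp (t1 + 1) = Xv p hp (t2 + a2) := by
        rw [Xv_eq_iff hp, show t1 + 1 = t2 by omega, show t2 + a2 = t2 by omega]
      rw [this] at hx
      exact ha2S hx
    · have hw := W1 1 le_rfl h1pos
      rw [show t1 + 1 = t2 by omega] at hw
      exact L2 hw



lemma neighborSet_inl_s9 {k p : ℕ} (hkp : k ≤ p) (hp : 0 < p) (i : Fin p) :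
    (Gkp k p).neighborSet (Sum.inl i) = (fun j => Xv p hp ((i : ℕ) + j)) '' Set.Iio k := by
  ext c
  simp only [SimpleGraph.mem_neighborSet, Set.mem_image, Set.mem_Iio]
  constructor
  · intro h
    obtain ⟨x, rfl, j, hj, hx⟩ := adj_inl_elim h
    exact ⟨j, hj, congrArg Sum.inr (Fin.ext hx.symm)⟩
  · rintro ⟨j, hj, rfl⟩
    have := Gkp_adj_WX (k := k) hp (n := (i : ℕ)) (j := j) hj
    rwa [Wv_fin hp i] at this

lemma neighborSet_inr_s9 {k p : ℕ} (hkp : k ≤ p) (hp : 0 < p) (m : Fin p) :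
    (Gkp k p).neighborSet (Sum.inr m) = (fun j => Wv p hp ((m : ℕ) + p - j)) '' Set.Iio k := by
  ext c
  simp only [SimpleGraph.mem_neighborSet, Set.mem_image, Set.mem_Iio]
  constructor
  · intro h
    obtain ⟨i, rfl, j, hj, hx⟩ := adj_inr_elim h
    refine ⟨j, hj, ?_⟩
    show Wv p hp ((m : ℕ) + p - j) = Sum.inl i
    rw [show Sum.inl i = Wv p hp (i : ℕ) from (Wv_fin hp i).symm, Wv_eq_iff hp,
      show (m : ℕ) + p - j = (((i : ℕ) + j) % p) + (p - j) by omega,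
      Nat.mod_add_mod, show (i : ℕ) + j + (p - j) = (i : ℕ) + p by omega,
      Nat.add_mod_right, Nat.mod_eq_of_lt i.isLt]
  · rintro ⟨j, hj, rfl⟩
    have h := Gkp_adj_WX (k := k) hp (n := (m : ℕ) + p - j) (j := j) hj
    rw [show (m : ℕ) + p - j + j = (m : ℕ) + p by omega] at h
    have hx : Xv p hp ((m : ℕ) + p) = Sum.inr m := by
      rw [show Xv p hp ((m : ℕ) + p) = Xv p hp (m : ℕ) from
        (Xv_eq_iff hp).mpr (Nat.add_mod_right _ _), Xv_fin]
    rw [hx] at h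
    exact h.symm

lemma ncard_neighborSet {k p : ℕ} (hk : 3 ≤ k) (hkp : k ≤ p) (hp : 0 < p)
    (u : Fin p ⊕ Fin p) : ((Gkp k p).neighborSet u).ncard = k := by
  cases u with
  | inl i =>
      rw [neighborSet_inl_s9 hkp hp, Set.ncard_image_of_injOn, ← Finset.coe_range,
        Set.ncard_coe_finset, Finset.card_range]
      intro j hj j' hj' h
      rw [Set.mem_Iio] at hj hj'
      exact add_cancel_mod ((Xv_eq_iff hp).mp h) (by omega) (by omega)
  | inr m =>
      rw [neighborSet_inr_s9 hkp hp, Set.ncard_image_of_injOn, ← Finset.coe_range,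
        Set.ncard_coe_finset, Finset.card_range]
      intro j hj j' hj' h
      rw [Set.mem_Iio] at hj hj'
      have hmod := (Wv_eq_iff hp).mp h
      rcases le_total j j' with hle | hle
      · have := modeq_close (a := (m : ℕ) + p - j') (b := (m : ℕ) + p - j)
          hmod.symm (by omega) (by omega)
        omega
      · have := modeq_close (a := (m : ℕ) + p - j) (b := (m : ℕ) + p - j')
          hmod (by omega) (by omega)
        omega

lemma exists_live_nbr {k p : ℕ} (hk : 3 ≤ k) (hkp : k ≤ p) (hp : 0 < p)
    {S : Set (Fin p ⊕ Fin p)} (hcard : S.ncard = k) (u : Fin p ⊕ Fin p)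
    (hne : S ≠ (Gkp k p).neighborSet u) :
    ∃ a, (Gkp k p).Adj u a ∧ a ∉ S := by
  by_contra hcon
  push_neg at hcon
  have hsub : (Gkp k p).neighborSet u ⊆ S := fun a ha => hcon a ha
  have hfin : S.Finite := by
    rcases S.finite_or_infinite with h | h
    · exact h
    · rw [Set.Infinite.ncard h] at hcard; omega
  have heq := Set.eq_of_subset_of_ncard_le hsub
    (by rw [hcard, ncard_neighborSet hk hkp hp]) hfin
  exact hne heq.symm

lemma anchor_of {k p : ℕ} (hk : 3 ≤ k) (hp : 0 < p) (S : Set (Fin p ⊕ Fin p))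
    {u a : Fin p ⊕ Fin p} (hadj : (Gkp k p).Adj u a) (haS : a ∉ S) (huS : u ∉ S) :
    ∃ α : ℕ, Wv p hp α ∉ S ∧ (∃ j, j ≤ k - 1 ∧ Xv p hp (α + j) ∉ S) ∧
      (AvoidG (Gkp k p) S).Reachable u (Wv p hp α) := by
  cases u with
  | inl i =>
      obtain ⟨x, rfl, j, hj, hx⟩ := adj_inl_elim hadj
      refine ⟨(i : ℕ), by rwa [Wv_fin hp], ⟨j, by omega, ?_⟩, ?_⟩
      · have hXX : Xv p hp ((i : ℕ) + j) = Sum.inr x := congrArg Sum.inr (Fin.ext hx.symm)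
        rwa [hXX]
      · rw [Wv_fin hp]
  | inr m =>
      obtain ⟨i, rfl, j, hj, hx⟩ := adj_inr_elim hadj
      refine ⟨(i : ℕ), by rwa [Wv_fin hp], ⟨j, by omega, ?_⟩, ?_⟩
      · have hXX : Xv p hp ((i : ℕ) + j) = Sum.inr m := congrArg Sum.inr (Fin.ext hx.symm)
        rwa [hXX]
      · rw [Wv_fin hp]
        exact SimpleGraph.Adj.reachable ⟨hadj, huS, haS⟩


theorem Gkp_minimal_separator_of_card_k (k p : ℕ) (hk : 3 ≤ k) (hkp : k ≤ p)
    (u v : Fin p ⊕ Fin p) (huv : u ≠ v) (hadj : ¬ (Gkp k p).Adj u v)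
    (S : Set (Fin p ⊕ Fin p)) (hS : IsMinimalSeparator (Gkp k p) u v S)
    (hcard : S.ncard = k) :
    S = (Gkp k p).neighborSet u ∨ S = (Gkp k p).neighborSet v := by
  have hp : 0 < p := by omega
  by_contra hcon
  push_neg at hcon
  obtain ⟨hne1, hne2⟩ := hcon
  obtain ⟨⟨huS, hvS, hWalks⟩, -⟩ := hS
  obtain ⟨a, haN, haS⟩ := exists_live_nbr hk hkp hp hcard u hne1
  obtain ⟨b, hbN, hbS⟩ := exists_live_nbr hk hkp hp hcard v hne2
  obtain ⟨α, hαS, hαA, hαR⟩ := anchor_of hk hp S haN haS huS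
  obtain ⟨β₀, hβS, hβA, hβR⟩ := anchor_of hk hp S hbN hbS hvS
  have hreach : (AvoidG (Gkp k p) S).Reachable (Wv p hp α) (Wv p hp β₀) := by
    by_cases heq : Wv p hp α = Wv p hp β₀
    · rw [heq]
    · by_contra hnr
      have hab : α % p ≠ β₀ % p := fun h => heq ((Wv_eq_iff hp).mpr h)
      have hαp : α % p < p := Nat.mod_lt _ hp
      have hβp : β₀ % p < p := Nat.mod_lt _ hp
      set o := if α % p ≤ β₀ % p then β₀ % p - α % p else β₀ % p + p - α % p with ho
      have ho1 : 1 ≤ o ∧ o ≤ p - 1 := by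
        rw [ho]; split_ifs with h <;> omega
      have hβ₁ : (α + o) % p = β₀ % p := by
        rw [← Nat.mod_add_mod]
        rcases le_or_gt (α % p) (β₀ % p) with h | h
        · rw [ho, if_pos h, show α % p + (β₀ % p - α % p) = β₀ % p by omega,
            Nat.mod_eq_of_lt hβp]
        · rw [ho, if_neg (by omega), show α % p + (β₀ % p + p - α % p) = β₀ % p + p by omega,
            Nat.add_mod_right, Nat.mod_eq_of_lt hβp]
      set β₁ := α + o with hβ₁def
      have hWβ : Wv p hp β₁ = Wv p hp β₀ := (Wv_eq_iff hp).mpr hβ₁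
      have hWα : Wv p hp (α + p) = Wv p hp α := (Wv_eq_iff hp).mpr (Nat.add_mod_right α p)
      obtain ⟨t1, r1, ht1α, ht1β, hr1, L1, W1, X1, A1⟩ :=
        walker hk hkp hp S (β₁ - α) α β₁ le_rfl (by omega) hαS
          (by rw [hWβ]; exact hβS) hαA (by rw [hWβ]; exact hnr)
      have hanch2 : ∃ j, j ≤ k - 1 ∧ Xv p hp (β₁ + j) ∉ S := by
        obtain ⟨j, hj, hjS⟩ := hβA
        refine ⟨j, hj, ?_⟩
        have : Xv p hp (β₁ + j) = Xv p hp (β₀ + j) :=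
          (Xv_eq_iff hp).mpr (Nat.ModEq.add_right j hβ₁)
        rwa [this]
      obtain ⟨t2, r2, ht2β, ht2α, hr2, L2, W2, X2, A2⟩ :=
        walker hk hkp hp S (α + p - β₁) β₁ (α + p) le_rfl (by omega)
          (by rw [hWβ]; exact hβS) (by rw [hWα]; exact hαS) hanch2
          (by rw [hWβ, hWα]; exact fun h => hnr h.symm)
      exact counting hk hkp hp hcard (t1 := t1) (t2 := t2) (by omega) (by omega)
        hr1 hr2 L1 L2 W1 X1 W2 X2 A1 A2
  have hfull : (AvoidG (Gkp k p) S).Reachable u v :=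
    hαR.trans (hreach.trans hβR.symm)
  obtain ⟨wlk⟩ := hfull
  obtain ⟨w', hw'⟩ := AvoidG_walk wlk huS
  obtain ⟨z, hz1, hz2⟩ := hWalks w'
  exact hw' z hz1 hz2
end AvgConn
end

section
/- For integers 3 ≤ k ≤ p, the graph G_{k,p} is minimally k-connected: κ(G_{k,p}) = k and κ(G_{k,p} − e) < k for every edge e. -/
namespace AvgConn

/-- The vertex connectivity of `G`: the least size of a set of vertices whose removal
disconnects `G` or leaves at most one vertex. -/
noncomputable def vertexConn {V : Type*} (G : SimpleGraph V) : ℕ :=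
  sInf {n | ∃ S : Set V, S.ncard = n ∧
    (¬ (G.induce Sᶜ).Connected ∨ Sᶜ.ncard ≤ 1)}

/-- `G` is minimally `k`-connected. -/
noncomputable def MinimallyKConnected {V : Type*} (G : SimpleGraph V) (k : ℕ) : Prop :=
  vertexConn G = k ∧ ∀ e ∈ G.edgeSet, vertexConn (G.deleteEdges {e}) < k

set_option linter.unusedSectionVars false
open scoped Classical
set_option maxHeartbeats 1000000

/-- On the cycle `ZMod p`, if `A` and `B` are disjoint nonempty sets, there is a pair
`a ∈ A`, `b ∈ B` such that the open arc from `a` to `b` avoids `A ∪ B`. -/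
lemma consec {p : ℕ} [NeZero p] {A B : Set (ZMod p)} (hd : Disjoint A B)
    {a0 b0 : ZMod p} (ha0 : a0 ∈ A) (hb0 : b0 ∈ B) :
    ∃ a ∈ A, ∃ b ∈ B, ∀ t : ℕ, 0 < t → t < (b - a).val → a + (t : ZMod p) ∉ A ∪ B := by
  have hab : a0 ≠ b0 := fun h => (Set.disjoint_left.mp hd ha0) (h ▸ hb0)
  set t0 := (b0 - a0).val with ht0
  have ht0p : t0 < p := (b0 - a0).val_lt
  have ht0pos : 0 < t0 := by
    rcases Nat.eq_zero_or_pos t0 with h | h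
    swap
    · exact h
    · exfalso
      have : b0 - a0 = 0 := by
        have := (ZMod.val_eq_zero _).mp h
        exact this
      have h2 : b0 = a0 := by linear_combination this
      exact hab h2.symm
  have hb0' : a0 + (t0 : ZMod p) = b0 := by
    rw [ht0, ZMod.natCast_zmod_val]; ring
  set T : Finset ℕ := (Finset.range t0).filter (fun s => a0 + (s : ZMod p) ∈ A) with hT
  have hT0 : (0 : ℕ) ∈ T := by
    simp only [hT, Finset.mem_filter, Finset.mem_range]
    exact ⟨ht0pos, by simpa using ha0⟩
  have hTne : T.Nonempty := ⟨0, hT0⟩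
  set s1 := T.max' hTne with hs1
  have hs1T : s1 ∈ T := T.max'_mem hTne
  have hs1lt : s1 < t0 := by
    have := hs1T; simp only [hT, Finset.mem_filter, Finset.mem_range] at this; exact this.1
  have hs1A : a0 + (s1 : ZMod p) ∈ A := by
    have := hs1T; simp only [hT, Finset.mem_filter, Finset.mem_range] at this; exact this.2
  set U : Finset ℕ := (Finset.Icc (s1+1) t0).filter (fun s => a0 + (s : ZMod p) ∈ A ∪ B) with hU
  have hUt0 : t0 ∈ U := by
    simp only [hU, Finset.mem_filter, Finset.mem_Icc]
    exact ⟨⟨hs1lt, le_refl _⟩, by rw [hb0']; exact Or.inr hb0⟩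
  have hUne : U.Nonempty := ⟨t0, hUt0⟩
  set s2 := U.min' hUne with hs2
  have hs2U : s2 ∈ U := U.min'_mem hUne
  have hs2mem : s1 + 1 ≤ s2 ∧ s2 ≤ t0 ∧ a0 + (s2 : ZMod p) ∈ A ∪ B := by
    have := hs2U; simp only [hU, Finset.mem_filter, Finset.mem_Icc] at this
    exact ⟨this.1.1, this.1.2, this.2⟩
  have hs2B : a0 + (s2 : ZMod p) ∈ B := by
    rcases hs2mem.2.2 with h | h
    · exfalso
      rcases eq_or_lt_of_le hs2mem.2.1 with he | hlt
      · rw [he, hb0'] at h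
        exact Set.disjoint_left.mp hd h hb0
      · have : s2 ∈ T := by
          simp only [hT, Finset.mem_filter, Finset.mem_range]; exact ⟨hlt, h⟩
        have := T.le_max' s2 this
        omega
    · exact h
  refine ⟨a0 + (s1 : ZMod p), hs1A, a0 + (s2 : ZMod p), hs2B, ?_⟩
  intro t ht htlt hmem
  have hsub : a0 + (s2 : ZMod p) - (a0 + (s1 : ZMod p)) = ((s2 - s1 : ℕ) : ZMod p) := by
    push_cast [Nat.cast_sub (le_of_lt (by omega : s1 < s2))]
    ring
  rw [hsub, ZMod.val_natCast, Nat.mod_eq_of_lt (by omega : s2 - s1 < p)] at htlt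
  have hst : a0 + (s1 : ZMod p) + (t : ZMod p) = a0 + ((s1 + t : ℕ) : ZMod p) := by
    push_cast; ring
  rw [hst] at hmem
  have : s1 + t ∈ U := by
    simp only [hU, Finset.mem_filter, Finset.mem_Icc]
    exact ⟨⟨by omega, by omega⟩, hmem⟩
  have := U.min'_le _ this
  omega

section Aux

variable {k p : ℕ} [NeZero p]

/-- vertex `w_z` -/
def wv (p : ℕ) [NeZero p] (z : ZMod p) : Fin p ⊕ Fin p := Sum.inl ⟨z.val, z.val_lt⟩
/-- vertex `x_z` -/
def xv (p : ℕ) [NeZero p] (z : ZMod p) : Fin p ⊕ Fin p := Sum.inr ⟨z.val, z.val_lt⟩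

lemma wv_inj : Function.Injective (wv p) := by
  intro a b h
  exact ZMod.val_injective p (by simpa [wv] using h)

lemma xv_inj : Function.Injective (xv p) := by
  intro a b h
  exact ZMod.val_injective p (by simpa [xv] using h)

lemma wv_ne_xv (a b : ZMod p) : wv p a ≠ xv p b := by simp [wv, xv]

lemma inl_eq_wv (a : Fin p) : Sum.inl a = wv p ((a : ℕ) : ZMod p) := by
  simp [wv, Fin.ext_iff, ZMod.val_natCast, Nat.mod_eq_of_lt a.2]

lemma inr_eq_xv (a : Fin p) : Sum.inr a = xv p ((a : ℕ) : ZMod p) := by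
  simp [xv, Fin.ext_iff, ZMod.val_natCast, Nat.mod_eq_of_lt a.2]

lemma adj_wx_iff (hkp : k ≤ p) {i x : ZMod p} :
    (Gkp k p).Adj (wv p i) (xv p x) ↔ (x - i).val < k := by
  constructor
  · rintro ⟨-, h | h⟩
    · obtain ⟨i', x', hi, hx, j, hj, hval⟩ := h
      rw [wv, Sum.inl.injEq] at hi
      rw [xv, Sum.inr.injEq] at hx
      have hx' : x = i + (j : ZMod p) := by
        apply ZMod.val_injective
        rw [ZMod.val_add, ZMod.val_natCast, Nat.mod_eq_of_lt (lt_of_lt_of_le hj hkp)]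
        rw [← hi, ← hx] at hval
        exact hval
      have : x - i = (j : ZMod p) := by rw [hx']; ring
      rw [this, ZMod.val_natCast, Nat.mod_eq_of_lt (lt_of_lt_of_le hj hkp)]
      exact hj
    · obtain ⟨i', x', hi, hx, -⟩ := h
      exact absurd hi (by simp [xv])
  · intro h
    refine ⟨wv_ne_xv i x, Or.inl ⟨⟨i.val, i.val_lt⟩, ⟨x.val, x.val_lt⟩, rfl, rfl,
      (x - i).val, h, ?_⟩⟩
    show x.val = (i.val + (x - i).val) % p
    have : x = i + ((x - i).val : ZMod p) := by rw [ZMod.natCast_zmod_val]; ring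
    conv_lhs => rw [this]
    rw [ZMod.val_add, ZMod.val_natCast, Nat.mod_eq_of_lt (x - i).val_lt]

lemma not_adj_ww (a b : ZMod p) : ¬ (Gkp k p).Adj (wv p a) (wv p b) := by
  rintro ⟨-, h | h⟩ <;> obtain ⟨i', x', hi, hx, -⟩ := h <;>
    exact absurd hx (by simp [wv])

lemma not_adj_xx (a b : ZMod p) : ¬ (Gkp k p).Adj (xv p a) (xv p b) := by
  rintro ⟨-, h | h⟩ <;> obtain ⟨i', x', hi, hx, -⟩ := h <;>
    exact absurd hi (by simp [xv])

/-- Reachability in the graph induced on `Sᶜ`. -/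
def Rch (k p : ℕ) (S : Set (Fin p ⊕ Fin p)) (u v : Fin p ⊕ Fin p) : Prop :=
  ∃ (hu : u ∈ Sᶜ) (hv : v ∈ Sᶜ), ((Gkp k p).induce Sᶜ).Reachable ⟨u, hu⟩ ⟨v, hv⟩

variable {S : Set (Fin p ⊕ Fin p)}

lemma rch_refl {u : Fin p ⊕ Fin p} (hu : u ∉ S) : Rch k p S u u :=
  ⟨hu, hu, SimpleGraph.Reachable.refl _⟩

lemma rch_symm {u v : Fin p ⊕ Fin p} (h : Rch k p S u v) : Rch k p S v u := by
  obtain ⟨hu, hv, r⟩ := h; exact ⟨hv, hu, r.symm⟩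

lemma rch_trans {u v w : Fin p ⊕ Fin p} (h : Rch k p S u v) (h' : Rch k p S v w) :
    Rch k p S u w := by
  obtain ⟨hu, hv, r⟩ := h; obtain ⟨hv', hw, r'⟩ := h'
  exact ⟨hu, hw, r.trans r'⟩

lemma rch_of_adj {u v : Fin p ⊕ Fin p} (hu : u ∉ S) (hv : v ∉ S)
    (h : (Gkp k p).Adj u v) : Rch k p S u v := by
  refine ⟨hu, hv, SimpleGraph.Adj.reachable ?_⟩
  exact (SimpleGraph.comap_adj).mpr h

lemma ncard_eq_toFinset (S : Set (Fin p ⊕ Fin p)) : S.ncard = S.toFinite.toFinset.card :=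
  Set.ncard_eq_toFinset_card S

/-- every remaining w has a remaining x-neighbour -/
lemma exists_x_nbr (hk3 : 3 ≤ k) (hkp : k ≤ p) (hS : S.ncard ≤ k - 1) (i : ZMod p) :
    ∃ x : ZMod p, xv p x ∉ S ∧ (x - i).val < k := by
  by_contra hcon
  push_neg at hcon
  set N : Finset (Fin p ⊕ Fin p) := (Finset.range k).image (fun j : ℕ => xv p (i + (j : ZMod p))) with hN
  have hcard : N.card = k := by
    rw [hN, Finset.card_image_of_injOn, Finset.card_range]
    intro t1 h1 t2 h2 he
    simp only [Finset.coe_range, Set.mem_Iio] at h1 h2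
    have := xv_inj he
    have : (t1 : ZMod p) = t2 := by
      have := add_left_cancel this; exact this
    have := congrArg ZMod.val this
    rwa [ZMod.val_natCast, ZMod.val_natCast, Nat.mod_eq_of_lt (lt_of_lt_of_le h1 hkp),
      Nat.mod_eq_of_lt (lt_of_lt_of_le h2 hkp)] at this
  have hsub : N ⊆ S.toFinite.toFinset := by
    intro v hv
    rw [hN, Finset.mem_image] at hv
    obtain ⟨j, hj, rfl⟩ := hv
    rw [Finset.mem_range] at hj
    rw [Set.Finite.mem_toFinset]
    by_contra hvS
    have hge := hcon (i + (j : ZMod p)) hvS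
    have h0 : i + (j : ZMod p) - i = (j : ZMod p) := by ring
    rw [h0, ZMod.val_natCast, Nat.mod_eq_of_lt (lt_of_lt_of_le hj hkp)] at hge
    omega
  have := Finset.card_le_card hsub
  rw [hcard, ← ncard_eq_toFinset] at this
  omega

/-- every remaining x has a remaining w-neighbour -/
lemma exists_w_nbr (hk3 : 3 ≤ k) (hkp : k ≤ p) (hS : S.ncard ≤ k - 1) (x : ZMod p) :
    ∃ i : ZMod p, wv p i ∉ S ∧ (x - i).val < k := by
  by_contra hcon
  push_neg at hcon
  set N : Finset (Fin p ⊕ Fin p) := (Finset.range k).image (fun j : ℕ => wv p (x - (j : ZMod p))) with hN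
  have hcard : N.card = k := by
    rw [hN, Finset.card_image_of_injOn, Finset.card_range]
    intro t1 h1 t2 h2 he
    simp only [Finset.coe_range, Set.mem_Iio] at h1 h2
    have h2' : (t1 : ZMod p) = t2 := sub_right_inj.mp (wv_inj he)
    have := congrArg ZMod.val h2'
    rwa [ZMod.val_natCast, ZMod.val_natCast, Nat.mod_eq_of_lt (lt_of_lt_of_le h1 hkp),
      Nat.mod_eq_of_lt (lt_of_lt_of_le h2 hkp)] at this
  have hsub : N ⊆ S.toFinite.toFinset := by
    intro v hv
    rw [hN, Finset.mem_image] at hv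
    obtain ⟨j, hj, rfl⟩ := hv
    rw [Finset.mem_range] at hj
    rw [Set.Finite.mem_toFinset]
    by_contra hvS
    have hge := hcon (x - (j : ZMod p)) hvS
    have h0 : x - (x - (j : ZMod p)) = (j : ZMod p) := by ring
    rw [h0, ZMod.val_natCast, Nat.mod_eq_of_lt (lt_of_lt_of_le hj hkp)] at hge
    omega
  have := Finset.card_le_card hsub
  rw [hcard, ← ncard_eq_toFinset] at this
  omega

lemma card_image_xshift (c : ZMod p) {F : Finset ℕ} (hF : ∀ t ∈ F, t < p) :
    (F.image (fun t : ℕ => xv p (c + t))).card = F.card := by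
  rw [Finset.card_image_of_injOn]
  intro t1 h1 t2 h2 he
  have h3 : (t1 : ZMod p) = t2 := add_left_cancel (xv_inj he)
  have h4 := congrArg ZMod.val h3
  rwa [ZMod.val_natCast, ZMod.val_natCast, Nat.mod_eq_of_lt (hF t1 h1),
    Nat.mod_eq_of_lt (hF t2 h2)] at h4

lemma card_image_wshift (c : ZMod p) {F : Finset ℕ} (hF : ∀ t ∈ F, t < p) :
    (F.image (fun t : ℕ => wv p (c - t))).card = F.card := by
  rw [Finset.card_image_of_injOn]
  intro t1 h1 t2 h2 he
  have h3 : (t1 : ZMod p) = t2 := sub_right_inj.mp (wv_inj he)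
  have h4 := congrArg ZMod.val h3
  rwa [ZMod.val_natCast, ZMod.val_natCast, Nat.mod_eq_of_lt (hF t1 h1),
    Nat.mod_eq_of_lt (hF t2 h2)] at h4

/-- The core lemma: all remaining `x` vertices are mutually reachable. -/
lemma rch_xx (hk3 : 3 ≤ k) (hkp : k ≤ p) (hS : S.ncard ≤ k - 1)
    {a b : ZMod p} (ha : xv p a ∉ S) (hb : xv p b ∉ S) : Rch k p S (xv p a) (xv p b) := by
  by_contra hnot
  set A : Set (ZMod p) := {x | xv p x ∉ S ∧ Rch k p S (xv p a) (xv p x)} with hA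
  set B : Set (ZMod p) := {x | xv p x ∉ S ∧ ¬ Rch k p S (xv p a) (xv p x)} with hB
  have hd : Disjoint A B := by
    rw [Set.disjoint_left]; rintro x ⟨-, h1⟩ ⟨-, h2⟩; exact h2 h1
  have haA : a ∈ A := ⟨ha, rch_refl ha⟩
  have hbB : b ∈ B := ⟨hb, hnot⟩
  have hunion : ∀ x : ZMod p, x ∈ A ∪ B ↔ xv p x ∉ S := by
    intro x
    constructor
    · rintro (h | h) <;> exact h.1
    · intro h
      by_cases hr : Rch k p S (xv p a) (xv p x)
      · exact Or.inl ⟨h, hr⟩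
      · exact Or.inr ⟨h, hr⟩
  have hunion2 : ∀ x : ZMod p, x ∈ B ∪ A ↔ xv p x ∉ S := by
    intro x; rw [Set.union_comm]; exact hunion x
  have bridge : ∀ a' ∈ A, ∀ b' ∈ B, ∀ w : ZMod p,
      (a' - w).val < k → (b' - w).val < k → wv p w ∈ S := by
    intro a' ha' b' hb' w h1 h2
    by_contra hw
    refine hb'.2 (rch_trans ha'.2 (rch_trans (v := wv p w) ?_ ?_))
    · exact rch_of_adj ha'.1 hw ((adj_wx_iff hkp).mpr h1).symm
    · exact rch_of_adj hw hb'.1 ((adj_wx_iff hkp).mpr h2)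
  obtain ⟨a1, ha1, b1, hb1, hgap1⟩ := consec hd haA hbB
  obtain ⟨b2, hb2, a2, ha2, hgap2⟩ := consec hd.symm hbB haA
  set d1 := (b1 - a1).val with hd1
  set d2 := (a2 - b2).val with hd2
  have hne1 : a1 ≠ b1 := fun h => Set.disjoint_left.mp hd ha1 (h ▸ hb1)
  have hne2 : b2 ≠ a2 := fun h => Set.disjoint_left.mp hd (h ▸ ha2) hb2
  have hne3 : a1 ≠ b2 := fun h => Set.disjoint_left.mp hd ha1 (h ▸ hb2)
  have d1pos : 0 < d1 := by
    rcases Nat.eq_zero_or_pos d1 with h | h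
    · exfalso
      have h0 : b1 - a1 = 0 := (ZMod.val_eq_zero _).mp h
      have : b1 = a1 := by linear_combination h0
      exact hne1 this.symm
    · exact h
  have d2pos : 0 < d2 := by
    rcases Nat.eq_zero_or_pos d2 with h | h
    · exfalso
      have h0 : a2 - b2 = 0 := (ZMod.val_eq_zero _).mp h
      have : a2 = b2 := by linear_combination h0
      exact hne2 this.symm
    · exact h
  have d1ltp : d1 < p := (b1 - a1).val_lt
  have d2ltp : d2 < p := (a2 - b2).val_lt
  have hkp' : k - 1 < p := by omega
  set Gap1 : Finset (Fin p ⊕ Fin p) := (Finset.Ioo 0 d1).image (fun t : ℕ => xv p (a1 + t)) with hG1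
  set Gap2 : Finset (Fin p ⊕ Fin p) := (Finset.Ioo 0 d2).image (fun t : ℕ => xv p (b2 + t)) with hG2
  set W1 : Finset (Fin p ⊕ Fin p) := (Finset.range (k - d1)).image (fun t : ℕ => wv p (a1 - t)) with hW1
  set W2 : Finset (Fin p ⊕ Fin p) := (Finset.range (k - d2)).image (fun t : ℕ => wv p (b2 - t)) with hW2
  have cG1 : Gap1.card = d1 - 1 := by
    rw [hG1, card_image_xshift _ (fun t ht => by rw [Finset.mem_Ioo] at ht; omega),
      Nat.card_Ioo]
    omega
  have cG2 : Gap2.card = d2 - 1 := by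
    rw [hG2, card_image_xshift _ (fun t ht => by rw [Finset.mem_Ioo] at ht; omega),
      Nat.card_Ioo]
    omega
  have cW1 : W1.card = k - d1 := by
    rw [hW1, card_image_wshift _ (fun t ht => by rw [Finset.mem_range] at ht; omega),
      Finset.card_range]
  have cW2 : W2.card = k - d2 := by
    rw [hW2, card_image_wshift _ (fun t ht => by rw [Finset.mem_range] at ht; omega),
      Finset.card_range]
  set SF := S.toFinite.toFinset with hSF
  have hG1S : Gap1 ⊆ SF := by
    intro v hv
    rw [hG1, Finset.mem_image] at hv
    obtain ⟨t, ht, rfl⟩ := hv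
    rw [Finset.mem_Ioo] at ht
    have := hgap1 t ht.1 ht.2
    rw [hunion] at this
    rw [Set.Finite.mem_toFinset]
    by_contra hc
    exact this hc
  have hG2S : Gap2 ⊆ SF := by
    intro v hv
    rw [hG2, Finset.mem_image] at hv
    obtain ⟨t, ht, rfl⟩ := hv
    rw [Finset.mem_Ioo] at ht
    have := hgap2 t ht.1 ht.2
    rw [hunion2] at this
    rw [Set.Finite.mem_toFinset]
    by_contra hc
    exact this hc
  have hW1S : W1 ⊆ SF := by
    intro v hv
    rw [hW1, Finset.mem_image] at hv
    obtain ⟨t, ht, rfl⟩ := hv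
    rw [Finset.mem_range] at ht
    have e1 : (a1 - (a1 - (t : ZMod p))).val = t := by
      have h0 : a1 - (a1 - (t : ZMod p)) = (t : ZMod p) := by ring
      rw [h0, ZMod.val_natCast, Nat.mod_eq_of_lt (by omega)]
    have e2 : (b1 - (a1 - (t : ZMod p))).val = d1 + t := by
      have h0 : b1 - (a1 - (t : ZMod p)) = ((d1 + t : ℕ) : ZMod p) := by
        push_cast
        rw [hd1, ZMod.natCast_zmod_val]
        ring
      rw [h0, ZMod.val_natCast, Nat.mod_eq_of_lt (by omega)]
    rw [Set.Finite.mem_toFinset]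
    exact bridge a1 ha1 b1 hb1 _ (by omega) (by omega)
  have hW2S : W2 ⊆ SF := by
    intro v hv
    rw [hW2, Finset.mem_image] at hv
    obtain ⟨t, ht, rfl⟩ := hv
    rw [Finset.mem_range] at ht
    have e1 : (b2 - (b2 - (t : ZMod p))).val = t := by
      have h0 : b2 - (b2 - (t : ZMod p)) = (t : ZMod p) := by ring
      rw [h0, ZMod.val_natCast, Nat.mod_eq_of_lt (by omega)]
    have e2 : (a2 - (b2 - (t : ZMod p))).val = d2 + t := by
      have h0 : a2 - (b2 - (t : ZMod p)) = ((d2 + t : ℕ) : ZMod p) := by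
        push_cast
        rw [hd2, ZMod.natCast_zmod_val]
        ring
      rw [h0, ZMod.val_natCast, Nat.mod_eq_of_lt (by omega)]
    rw [Set.Finite.mem_toFinset]
    exact bridge a2 ha2 b2 hb2 _ (by omega) (by omega)
  have hGG : Disjoint Gap1 Gap2 := by
    rw [Finset.disjoint_left]
    intro v hv1 hv2
    rw [hG1, Finset.mem_image] at hv1
    rw [hG2, Finset.mem_image] at hv2
    obtain ⟨t1, ht1, rfl⟩ := hv1
    obtain ⟨t2, ht2, he⟩ := hv2
    rw [Finset.mem_Ioo] at ht1 ht2
    have heq : b2 + (t2 : ZMod p) = a1 + (t1 : ZMod p) := xv_inj he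
    rcases lt_trichotomy t1 t2 with h | h | h
    · have h5 : a1 = b2 + ((t2 - t1 : ℕ) : ZMod p) := by
        push_cast [Nat.cast_sub h.le]
        linear_combination -heq
      have := hgap2 (t2 - t1) (by omega) (by omega)
      rw [hunion2] at this
      rw [← h5] at this
      exact this ha1.1
    · subst h
      have h5 : a1 = b2 := by linear_combination -heq
      exact hne3 h5
    · have h5 : b2 = a1 + ((t1 - t2 : ℕ) : ZMod p) := by
        push_cast [Nat.cast_sub h.le]
        linear_combination heq
      have := hgap1 (t1 - t2) (by omega) (by omega)
      rw [hunion] at this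
      rw [← h5] at this
      exact this hb2.1
  have hGW : Disjoint (Gap1 ∪ Gap2) (W1 ∪ W2) := by
    rw [Finset.disjoint_left]
    intro v hv1 hv2
    rw [Finset.mem_union, hG1, hG2, Finset.mem_image, Finset.mem_image] at hv1
    rw [Finset.mem_union, hW1, hW2, Finset.mem_image, Finset.mem_image] at hv2
    obtain (⟨t, -, rfl⟩ | ⟨t, -, rfl⟩) := hv1 <;>
      obtain (⟨s, -, he⟩ | ⟨s, -, he⟩) := hv2 <;> exact wv_ne_xv _ _ he
  have hsubS : (Gap1 ∪ Gap2) ∪ (W1 ∪ W2) ⊆ SF :=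
    Finset.union_subset (Finset.union_subset hG1S hG2S) (Finset.union_subset hW1S hW2S)
  have hcard1 : ((Gap1 ∪ Gap2) ∪ (W1 ∪ W2)).card = (d1 - 1) + (d2 - 1) + (W1 ∪ W2).card := by
    rw [Finset.card_union_of_disjoint hGW, Finset.card_union_of_disjoint hGG, cG1, cG2]
  have hSFcard : SF.card ≤ k - 1 := by
    rw [← ncard_eq_toFinset]; exact hS
  have hle : (d1 - 1) + (d2 - 1) + (W1 ∪ W2).card ≤ k - 1 := by
    rw [← hcard1]
    exact le_trans (Finset.card_le_card hsubS) hSFcard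
  have hiu : (W1 ∪ W2).card + (W1 ∩ W2).card = W1.card + W2.card :=
    Finset.card_union_add_card_inter W1 W2
  have hi1 : (W1 ∩ W2).card ≤ W1.card := Finset.card_le_card (Finset.inter_subset_left)
  have hi2 : (W1 ∩ W2).card ≤ W2.card := Finset.card_le_card (Finset.inter_subset_right)
  have hd1eq : d1 = 1 := by omega
  have hd2eq : d2 = 1 := by omega
  have hWc : W1.card ≤ (W1 ∩ W2).card := by omega
  have hW12 : W1 = W2 := by
    have e1 : W1 ∩ W2 = W1 :=
      Finset.eq_of_subset_of_card_le (Finset.inter_subset_left) hWc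
    have e2 : W1 ∩ W2 = W2 :=
      Finset.eq_of_subset_of_card_le (Finset.inter_subset_right) (by omega)
    rw [← e1, e2]
  -- derive a1 = b2
  have hmem1 : wv p a1 ∈ W1 := by
    rw [hW1, Finset.mem_image]
    refine ⟨0, by rw [Finset.mem_range]; omega, ?_⟩
    norm_num
  rw [hW12, hW2, Finset.mem_image] at hmem1
  obtain ⟨t, ht, hte⟩ := hmem1
  rw [Finset.mem_range] at ht
  have hteq : a1 = b2 - (t : ZMod p) := (wv_inj hte).symm
  rcases Nat.eq_zero_or_pos t with h0 | h0
  · subst h0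
    simp only [Nat.cast_zero, sub_zero] at hteq
    exact hne3 hteq
  · have hmem2 : wv p (b2 - ((t - 1 : ℕ) : ZMod p)) ∈ W2 := by
      rw [hW2, Finset.mem_image]
      exact ⟨t - 1, by rw [Finset.mem_range]; omega, rfl⟩
    rw [← hW12, hW1, Finset.mem_image] at hmem2
    obtain ⟨s, hs, hse⟩ := hmem2
    rw [Finset.mem_range] at hs
    have heq2 : a1 - (s : ZMod p) = b2 - ((t - 1 : ℕ) : ZMod p) := wv_inj hse
    have hc : ((s + 1 : ℕ) : ZMod p) = 0 := by
      push_cast [Nat.cast_sub (by omega : 1 ≤ t)] at heq2 ⊢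
      linear_combination hteq - heq2
    have hdvd := (ZMod.natCast_eq_zero_iff _ _).mp hc
    have := Nat.le_of_dvd (by omega) hdvd
    omega

/-- in an induced graph `u` can reach some remaining `x`-vertex -/
lemma rch_to_x (hk3 : 3 ≤ k) (hkp : k ≤ p) (hS : S.ncard ≤ k - 1)
    {u : Fin p ⊕ Fin p} (hu : u ∉ S) :
    ∃ x : ZMod p, xv p x ∉ S ∧ Rch k p S u (xv p x) := by
  cases u with
  | inl a =>
    rw [inl_eq_wv a] at hu ⊢
    obtain ⟨x, hx, hadj⟩ := exists_x_nbr hk3 hkp hS ((a : ℕ) : ZMod p)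
    exact ⟨x, hx, rch_of_adj hu hx ((adj_wx_iff hkp).mpr hadj)⟩
  | inr a =>
    rw [inr_eq_xv a] at hu ⊢
    exact ⟨_, hu, rch_refl hu⟩

lemma rch_all (hk3 : 3 ≤ k) (hkp : k ≤ p) (hS : S.ncard ≤ k - 1)
    {u v : Fin p ⊕ Fin p} (hu : u ∉ S) (hv : v ∉ S) : Rch k p S u v := by
  obtain ⟨x, hx, hrx⟩ := rch_to_x hk3 hkp hS hu
  obtain ⟨y, hy, hry⟩ := rch_to_x hk3 hkp hS hv
  exact rch_trans hrx (rch_trans (rch_xx hk3 hkp hS hx hy) (rch_symm hry))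

/-- `G_{k,p}` minus at most `k-1` vertices is connected -/
lemma conn_of_small (hk3 : 3 ≤ k) (hkp : k ≤ p) (hS : S.ncard ≤ k - 1) :
    ((Gkp k p).induce Sᶜ).Connected := by
  rw [SimpleGraph.connected_iff]
  constructor
  · rintro ⟨u, hu⟩ ⟨v, hv⟩
    obtain ⟨hu', hv', r⟩ := rch_all (S := S) hk3 hkp hS hu hv
    exact r
  · obtain ⟨x, hx, -⟩ := exists_x_nbr (S := S) hk3 hkp hS 0
    exact ⟨⟨xv p x, hx⟩⟩

lemma not_connected_of_isolated {V : Type*} {G : SimpleGraph V} {u v : V} (huv : u ≠ v)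
    (h : ∀ w, ¬ G.Adj u w) : ¬ G.Connected := by
  intro hc
  obtain ⟨w⟩ := hc.preconnected u v
  cases w with
  | nil => exact huv rfl
  | cons h' _ => exact h _ h'

lemma card_V : Nat.card (Fin p ⊕ Fin p) = p + p := by
  simp [Nat.card_sum]

/-- shape of any adjacency -/
lemma adj_shape {u v : Fin p ⊕ Fin p} (hkp : k ≤ p) (h : (Gkp k p).Adj u v) :
    ∃ i x : ZMod p, (x - i).val < k ∧
      ((u = wv p i ∧ v = xv p x) ∨ (u = xv p x ∧ v = wv p i)) := by
  cases u with
  | inl a =>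
    cases v with
    | inl b =>
      rw [inl_eq_wv a, inl_eq_wv b] at h
      exact absurd h (not_adj_ww _ _)
    | inr b =>
      rw [inl_eq_wv a, inr_eq_xv b] at h ⊢
      exact ⟨_, _, (adj_wx_iff hkp).mp h, Or.inl ⟨rfl, rfl⟩⟩
  | inr a =>
    cases v with
    | inl b =>
      rw [inr_eq_xv a, inl_eq_wv b] at h ⊢
      exact ⟨_, _, (adj_wx_iff hkp).mp h.symm, Or.inr ⟨rfl, rfl⟩⟩
    | inr b =>
      rw [inr_eq_xv a, inr_eq_xv b] at h
      exact absurd h (not_adj_xx _ _)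

lemma one_ne_zero' (hp : 3 ≤ p) : (1 : ZMod p) ≠ 0 := by
  intro h
  have h1 : ((1 : ℕ) : ZMod p) = 0 := by exact_mod_cast h
  have h2 := (ZMod.natCast_eq_zero_iff _ _).mp h1
  have := Nat.le_of_dvd one_pos h2
  omega

end Aux

theorem Gkp_minimally_k_connected (k p : ℕ) (hk : 3 ≤ k) (hkp : k ≤ p) :
    MinimallyKConnected (Gkp k p) k := by
  haveI : NeZero p := ⟨by omega⟩
  have hp3 : 3 ≤ p := by omega
  constructor
  · -- vertexConn = k
    apply le_antisymm
    · -- upper bound: remove the k neighbours of w_0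
      apply Nat.sInf_le
      refine ⟨↑((Finset.range k).image (fun j : ℕ => xv p ((0 : ZMod p) + j))), ?_, Or.inl ?_⟩
      · rw [Set.ncard_coe_finset, card_image_xshift _ (fun t ht => by
          rw [Finset.mem_range] at ht; omega), Finset.card_range]
      · have hwm : ∀ z : ZMod p,
            wv p z ∈ (↑((Finset.range k).image (fun j : ℕ => xv p ((0 : ZMod p) + j))) : Set (Fin p ⊕ Fin p))ᶜ := by
          intro z
          simp only [Set.mem_compl_iff, Finset.coe_image, Set.mem_image, Finset.mem_coe]
          rintro ⟨j, -, hj⟩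
          exact wv_ne_xv _ _ hj.symm
        apply not_connected_of_isolated (u := ⟨wv p 0, hwm 0⟩) (v := ⟨wv p 1, hwm 1⟩)
        · intro hcon
          rw [Subtype.mk.injEq] at hcon
          have := wv_inj hcon
          exact one_ne_zero' hp3 this.symm
        · rintro ⟨vv, hvv⟩ hadj
          have hadj' : (Gkp k p).Adj (wv p 0) vv := hadj
          obtain ⟨i, x, hix, hc⟩ := adj_shape hkp hadj'
          rcases hc with ⟨he1, he2⟩ | ⟨he1, he2⟩
          · -- vv = xv x, a neighbour of w 0, so in the removed set
            have hi0 : i = 0 := wv_inj he1.symm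
            subst hi0
            apply hvv
            rw [he2]
            simp only [Finset.coe_image, Set.mem_image, Finset.mem_coe, Finset.mem_range]
            refine ⟨(x - 0).val, by omega, ?_⟩
            congr 1
            rw [ZMod.natCast_zmod_val]
            ring
          · exact (wv_ne_xv _ _ he1).elim
    · -- lower bound
      apply le_csInf
      · refine ⟨p + p, Set.univ, ?_, Or.inr ?_⟩
        · rw [Set.ncard_univ, card_V]
        · simp [Set.ncard_empty]
      · rintro n ⟨S, hn, hbad⟩
        by_contra hlt
        push_neg at hlt
        have hS : S.ncard ≤ k - 1 := by omega
        rcases hbad with hbad | hbad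
        · exact hbad (conn_of_small hk hkp hS)
        · have h1 : S.ncard + Sᶜ.ncard = p + p := by
            rw [← card_V (p := p)]
            exact Set.ncard_add_ncard_compl S
          omega
  · -- minimality
    rintro e he
    induction e using Sym2.ind with
    | _ u v =>
    rw [SimpleGraph.mem_edgeSet] at he
    obtain ⟨i, x, hix, hc⟩ := adj_shape hkp he
    have hmain : ∀ i x : ZMod p, (x - i).val < k →
        vertexConn ((Gkp k p).deleteEdges {s(wv p i, xv p x)}) < k := by
      intro i x hix
      have hlt : k - 1 < k := by omega
      apply lt_of_le_of_lt _ hlt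
      apply Nat.sInf_le
      refine ⟨↑((((Finset.range k).image (fun j : ℕ => xv p (i + j))).erase (xv p x))), ?_,
        Or.inl ?_⟩
      · rw [Set.ncard_coe_finset, Finset.card_erase_of_mem, card_image_xshift _ (fun t ht => by
          rw [Finset.mem_range] at ht; omega), Finset.card_range]
        rw [Finset.mem_image]
        refine ⟨(x - i).val, by rw [Finset.mem_range]; omega, ?_⟩
        congr 1
        rw [ZMod.natCast_zmod_val]
        ring
      · have hwm : ∀ z : ZMod p,
            wv p z ∈ (↑((((Finset.range k).image (fun j : ℕ => xv p (i + j))).erase (xv p x))) : Set (Fin p ⊕ Fin p))ᶜ := by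
          intro z
          simp only [Set.mem_compl_iff, Finset.coe_erase, Set.mem_diff, Finset.mem_coe,
            Finset.mem_image]
          rintro ⟨⟨j, -, hj⟩, -⟩
          exact wv_ne_xv _ _ hj.symm
        apply not_connected_of_isolated (u := ⟨wv p i, hwm i⟩) (v := ⟨wv p (i + 1), hwm (i + 1)⟩)
        · intro hcon
          rw [Subtype.mk.injEq] at hcon
          have h2 := wv_inj hcon
          have : (1 : ZMod p) = 0 := by linear_combination -h2
          exact one_ne_zero' hp3 this
        · rintro ⟨vv, hvv⟩ hadj
          have hadj' : ((Gkp k p).deleteEdges {s(wv p i, xv p x)}).Adj (wv p i) vv := hadj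
          rw [SimpleGraph.deleteEdges_adj] at hadj'
          obtain ⟨hadjG, hne⟩ := hadj'
          obtain ⟨i', x', hix', hc'⟩ := adj_shape hkp hadjG
          rcases hc' with ⟨he1, he2⟩ | ⟨he1, he2⟩
          · have hi0 : i' = i := wv_inj he1.symm
            subst hi0
            by_cases hxx : x' = x
            · subst hxx
              rw [he2] at hne
              simp at hne
            · apply hvv
              rw [he2]
              simp only [Finset.coe_erase, Set.mem_diff, Finset.mem_coe, Finset.mem_image,
                Set.mem_singleton_iff]
              constructor
              · refine ⟨(x' - i').val, by rw [Finset.mem_range]; omega, ?_⟩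
                congr 1
                rw [ZMod.natCast_zmod_val]
                ring
              · intro hcon
                exact hxx (xv_inj hcon)
          · exact (wv_ne_xv _ _ he1).elim
    rcases hc with ⟨he1, he2⟩ | ⟨he1, he2⟩
    · rw [he1, he2]
      exact hmain i x hix
    · rw [he1, he2, Sym2.eq_swap]
      exact hmain i x hix

end AvgConn
end

section
/- For integers 3 ≤ k ≤ p, the graph G_{k,p} is minimally k-edge-connected: λ(G_{k,p}) = k and λ(G_{k,p} − e) < k for every edge e. -/
namespace AvgConn

open Finset
open Fin.CommRing
section Shift
variable {p : ℕ} [NeZero p]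

theorem val_add_cast (i : Fin p) (j : ℕ) : (i + (j:Fin p)).val = (i.val + j) % p := by
  rw [Fin.add_def, Fin.val_natCast, Nat.add_mod i.val j p, Nat.mod_eq_of_lt i.isLt]

def ShiftNat (B : Finset (Fin p)) (n : ℕ) : Prop := ∀ i, i ∈ B ↔ i + (n : Fin p) ∈ B

theorem shiftNat_zero (B : Finset (Fin p)) : ShiftNat B 0 := by simp [ShiftNat]

theorem shiftNat_p (B : Finset (Fin p)) : ShiftNat B p := by
  simp [ShiftNat, Fin.natCast_self]

theorem shiftNat_add {B : Finset (Fin p)} {a b : ℕ} (ha : ShiftNat B a) (hb : ShiftNat B b) :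
    ShiftNat B (a + b) := by
  intro i
  rw [ha i, hb (i + (a : Fin p)), Nat.cast_add, add_assoc]

theorem shiftNat_sub {B : Finset (Fin p)} {a b : ℕ} (hle : b ≤ a) (ha : ShiftNat B a)
    (hb : ShiftNat B b) : ShiftNat B (a - b) := by
  intro i
  have h1 := hb (i + ((a - b : ℕ) : Fin p))
  have h2 := ha i
  have h3 : ((a - b : ℕ) : Fin p) + ((b : ℕ) : Fin p) = ((a : ℕ) : Fin p) := by
    rw [← Nat.cast_add]; congr 1; omega
  rw [add_assoc, h3] at h1
  tauto

theorem shiftNat_mul {B : Finset (Fin p)} {a : ℕ} (ha : ShiftNat B a) (m : ℕ) :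
    ShiftNat B (m * a) := by
  induction m with
  | zero => simpa using shiftNat_zero B
  | succ n ih =>
    have := shiftNat_add ih ha
    simpa [Nat.succ_mul] using this

theorem shiftNat_mod {B : Finset (Fin p)} {a b : ℕ} (ha : ShiftNat B a) (hb : ShiftNat B b) :
    ShiftNat B (a % b) := by
  have h1 : ShiftNat B (a / b * b) := shiftNat_mul hb (a / b)
  have h2 : a % b = a - a / b * b := by
    have := Nat.mod_add_div' a b; omega
  rw [h2]
  exact shiftNat_sub (by have := Nat.mod_add_div' a b; omega) ha h1

theorem eq_univ_of_shift_one {B : Finset (Fin p)} (h : ShiftNat B 1) (hne : B.Nonempty) :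
    B = univ := by
  obtain ⟨i₀, hi₀⟩ := hne
  have key : ∀ n : ℕ, i₀ + (n : Fin p) ∈ B := by
    intro n
    induction n with
    | zero => simpa using hi₀
    | succ m ih =>
      have h1 := (h (i₀ + (m : Fin p))).mp ih
      rwa [add_assoc, ← Nat.cast_add] at h1
  apply Finset.eq_univ_of_forall
  intro i
  have := key (i - i₀).val
  rwa [Fin.cast_val_eq_self, add_sub_cancel] at this

theorem card_of_shift {B : Finset (Fin p)} {g : ℕ} (hg : 0 < g) (hgp : g ∣ p)
    (hinv : ShiftNat B g) (hne : B.Nonempty) : p / g ≤ B.card := by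
  obtain ⟨i₀, hi₀⟩ := hne
  have hmem : ∀ m : ℕ, i₀ + ((m * g : ℕ) : Fin p) ∈ B := by
    intro m
    induction m with
    | zero => simpa using hi₀
    | succ n ih =>
      have h1 := (hinv _).mp ih
      rwa [add_assoc, ← Nat.cast_add, show n * g + g = (n+1)*g by ring] at h1
  have key : (Finset.range (p / g)).card ≤ B.card := by
    apply Finset.card_le_card_of_injOn (fun m => i₀ + ((m * g : ℕ) : Fin p)) (fun m _ => hmem m)
    intro m₁ hm₁ m₂ hm₂ heq
    simp only [Finset.mem_coe, Finset.mem_range] at hm₁ hm₂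
    have hlt : ∀ m, m < p / g → m * g < p := by
      intro m hm
      calc m * g < (m+1) * g := by nlinarith
        _ ≤ (p/g) * g := Nat.mul_le_mul_right g hm
        _ = p := Nat.div_mul_cancel hgp
    have := add_right_injective i₀ heq
    have hv : ((m₁ * g : ℕ) : Fin p).val = ((m₂ * g : ℕ) : Fin p).val := by rw [this]
    rw [Fin.val_natCast, Fin.val_natCast, Nat.mod_eq_of_lt (hlt _ hm₁),
      Nat.mod_eq_of_lt (hlt _ hm₂)] at hv
    exact Nat.eq_of_mul_eq_mul_right hg hv
  simpa using key

open scoped Classical in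
/-- number of crossing edges in matching `j` for the cut `(A, B)` -/
noncomputable def cutf (A B : Finset (Fin p)) (j : ℕ) : ℕ :=
  (univ.filter fun i : Fin p => ¬((i ∈ A) ↔ (i + (j : Fin p) ∈ B))).card

open scoped Classical in
noncomputable def Dp (B : Finset (Fin p)) (d : Fin p) : Finset (Fin p) :=
  univ.filter fun i => i ∈ B ∧ i + d ∉ B

open scoped Classical in
noncomputable def Dm (B : Finset (Fin p)) (d : Fin p) : Finset (Fin p) :=
  univ.filter fun i => i ∉ B ∧ i + d ∈ B

theorem shift_of_Dp_empty {B : Finset (Fin p)} {d : Fin p} (h : Dp B d = ∅) :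
    ShiftNat B d.val := by
  classical
  have hsub : ∀ i, i ∈ B → i + d ∈ B := by
    intro i hi
    by_contra hcon
    have : i ∈ Dp B d := by simp [Dp, hi, hcon]
    simp [h] at this
  set C := B.image (fun i => i - d) with hC
  have hmemC : ∀ i, i ∈ C ↔ i + d ∈ B := by
    intro i
    constructor
    · rintro hi
      obtain ⟨b, hb, rfl⟩ := Finset.mem_image.mp hi
      rwa [sub_add_cancel]
    · intro hi
      exact Finset.mem_image.mpr ⟨i + d, hi, by rw [add_sub_cancel_right]⟩
  have hcard : C.card = B.card := Finset.card_image_of_injective _ (sub_left_injective)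
  have hBC : B ⊆ C := fun i hi => (hmemC i).mpr (hsub i hi)
  have hBeq : B = C := Finset.eq_of_subset_of_card_le hBC (le_of_eq hcard)
  intro i
  rw [Fin.cast_val_eq_self]
  refine ⟨hsub i, fun hi => ?_⟩
  rw [hBeq]
  exact (hmemC i).mpr hi

theorem shift_of_Dm_empty {B : Finset (Fin p)} {d : Fin p} (h : Dm B d = ∅) :
    ShiftNat B d.val := by
  classical
  have hsub : ∀ i, i + d ∈ B → i ∈ B := by
    intro i hi
    by_contra hcon
    have : i ∈ Dm B d := by simp [Dm, hi, hcon]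
    simp [h] at this
  set C := B.image (fun i => i - d) with hC
  have hmemC : ∀ i, i ∈ C ↔ i + d ∈ B := by
    intro i
    constructor
    · rintro hi
      obtain ⟨b, hb, rfl⟩ := Finset.mem_image.mp hi
      rwa [sub_add_cancel]
    · intro hi
      exact Finset.mem_image.mpr ⟨i + d, hi, by rw [add_sub_cancel_right]⟩
  have hcard : C.card = B.card := Finset.card_image_of_injective _ (sub_left_injective)
  have hCB : C ⊆ B := fun i hi => hsub i ((hmemC i).mp hi)
  have hBeq : C = B := Finset.eq_of_subset_of_card_le hCB (le_of_eq hcard.symm)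
  intro i
  rw [Fin.cast_val_eq_self]
  refine ⟨fun hi => ?_, hsub i⟩
  have hiC : i ∈ C := by rw [hBeq]; exact hi
  exact (hmemC i).mp hiC


open scoped Classical in
theorem hsplit_lemma (B : Finset (Fin p)) (d : Fin p) :
    (univ.filter fun i : Fin p => ¬((i ∈ B) ↔ i + d ∈ B)).card
      = (Dp B d).card + (Dm B d).card := by
  rw [← Finset.card_union_of_disjoint]
  · congr 1
    ext i
    simp only [Dp, Dm, Finset.mem_filter, Finset.mem_univ, true_and, Finset.mem_union]
    tauto
  · rw [Finset.disjoint_left]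
    intro a ha hb
    simp only [Dp, Dm, Finset.mem_filter, Finset.mem_univ, true_and] at ha hb
    tauto

theorem cut_lower {k : ℕ} (hk : 3 ≤ k) (hkp : k ≤ p)
    (A B : Finset (Fin p)) (hne : A.Nonempty ∨ B.Nonempty)
    (hnf : A ≠ univ ∨ B ≠ univ) :
    k ≤ ∑ j ∈ range k, cutf A B j := by
  classical
  by_cases hall : ∀ j ∈ range k, 1 ≤ cutf A B j
  · calc k = ∑ _j ∈ range k, 1 := by simp
      _ ≤ _ := Finset.sum_le_sum hall
  push_neg at hall
  obtain ⟨j₀, hj₀mem, hj₀⟩ := hall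
  rw [Finset.mem_range] at hj₀mem
  have hj₀0 : cutf A B j₀ = 0 := by omega
  have hA : ∀ i, i ∈ A ↔ i + ((j₀ : ℕ) : Fin p) ∈ B := by
    intro i
    unfold cutf at hj₀0
    rw [Finset.card_eq_zero, Finset.filter_eq_empty_iff] at hj₀0
    have := hj₀0 (Finset.mem_univ i)
    tauto
  -- B is nonempty and proper
  have hBne : B.Nonempty := by
    rcases hne with h | h
    · obtain ⟨a, ha⟩ := h; exact ⟨_, (hA a).mp ha⟩
    · exact h
  have hBnu : B ≠ univ := by
    rcases hnf with h | h
    · intro hBu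
      exact h (Finset.eq_univ_of_forall fun i => (hA i).mpr (hBu ▸ Finset.mem_univ _))
    · exact h
  -- reindexing: cutf A B j in terms of B only
  have hstep : ∀ j : ℕ, cutf A B j =
      (univ.filter fun i : Fin p =>
        ¬((i ∈ B) ↔ i + (((j:ℕ) : Fin p) - ((j₀:ℕ) : Fin p)) ∈ B)).card := by
    intro j
    unfold cutf
    apply Finset.card_bij' (fun i _ => i + ((j₀ : ℕ) : Fin p)) (fun i _ => i - ((j₀ : ℕ) : Fin p))
    · intro i hi
      simp only [Finset.mem_filter, Finset.mem_univ, true_and] at hi ⊢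
      rw [hA i] at hi
      rwa [show i + ((j₀:ℕ):Fin p) + (((j:ℕ):Fin p) - ((j₀:ℕ):Fin p)) = i + ((j:ℕ):Fin p) by ring]
    · intro i hi
      simp only [Finset.mem_filter, Finset.mem_univ, true_and] at hi ⊢
      rw [hA (i - ((j₀:ℕ):Fin p))]
      rwa [show i - ((j₀:ℕ):Fin p) + ((j₀:ℕ):Fin p) = i by ring,
        show i - ((j₀:ℕ):Fin p) + ((j:ℕ):Fin p) = i + (((j:ℕ):Fin p) - ((j₀:ℕ):Fin p)) by ring]
    · intro i _; ring
    · intro i _; ring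
  by_cases h2 : ∀ j ∈ range k, j ≠ j₀ → 2 ≤ cutf A B j
  · have hsub : ∑ j ∈ (range k).erase j₀, cutf A B j ≤ ∑ j ∈ range k, cutf A B j :=
      Finset.sum_le_sum_of_subset (Finset.erase_subset _ _)
    have h2' : 2 * (k-1) ≤ ∑ j ∈ (range k).erase j₀, cutf A B j := by
      calc 2*(k-1) = ∑ _j ∈ (range k).erase j₀, 2 := by
            rw [Finset.sum_const, Finset.card_erase_of_mem (Finset.mem_range.mpr hj₀mem),
              Finset.card_range, smul_eq_mul, mul_comm]
        _ ≤ _ := Finset.sum_le_sum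
            (fun j hj => h2 j (Finset.mem_of_mem_erase hj) (Finset.ne_of_mem_erase hj))
    omega
  push_neg at h2
  obtain ⟨j₁, hj₁mem, hj₁ne, hj₁2⟩ := h2
  rw [Finset.mem_range] at hj₁mem
  -- from cutf A B j₁ < 2, B is shift-invariant by d₁
  have hshift₁ : ShiftNat B (((j₁:ℕ):Fin p) - ((j₀:ℕ):Fin p)).val := by
    rw [hstep j₁, hsplit_lemma] at hj₁2
    rcases Nat.eq_zero_or_pos (Dp B (((j₁:ℕ):Fin p) - ((j₀:ℕ):Fin p))).card with h | h
    · exact shift_of_Dp_empty (Finset.card_eq_zero.mp h)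
    · have : (Dm B (((j₁:ℕ):Fin p) - ((j₀:ℕ):Fin p))).card = 0 := by omega
      exact shift_of_Dm_empty (Finset.card_eq_zero.mp this)
  -- the minimal positive period g
  have hppos : 0 < p := Nat.pos_of_ne_zero (NeZero.ne p)
  have hex : ∃ n, 0 < n ∧ ShiftNat B n := ⟨p, hppos, shiftNat_p B⟩
  obtain ⟨g, hgpos, hgshift, hgmin⟩ :
      ∃ g, 0 < g ∧ ShiftNat B g ∧ ∀ n, 0 < n → ShiftNat B n → g ≤ n :=
    ⟨Nat.find hex, (Nat.find_spec hex).1, (Nat.find_spec hex).2,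
      fun n h1 h2 => Nat.find_le ⟨h1, h2⟩⟩
  have hgdvd : ∀ n, ShiftNat B n → g ∣ n := by
    intro n hn
    have hmod : ShiftNat B (n % g) := shiftNat_mod hn hgshift
    rcases Nat.eq_zero_or_pos (n % g) with h | h
    · exact Nat.dvd_of_mod_eq_zero h
    · have hle : g ≤ n % g := hgmin _ h hmod
      have := Nat.mod_lt n hgpos
      omega
  have hgp : g ∣ p := hgdvd p (shiftNat_p B)
  have hg2 : 2 ≤ g := by
    rcases (show g = 1 ∨ 2 ≤ g by omega) with h | h
    · exact absurd (eq_univ_of_shift_one (h ▸ hgshift) hBne) hBnu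
    · exact h
  -- divisibility of Fin-subtraction values vs residues
  have hdist : ∀ j j' : ℕ, j < p → j' < p →
      (g ∣ (((j:ℕ):Fin p) - ((j':ℕ):Fin p)).val ↔ j % g = j' % g) := by
    intro j j' hj hj'
    obtain ⟨t, ht⟩ := id hgp
    have hval : (((j:ℕ):Fin p) - ((j':ℕ):Fin p)).val = (j + (p - j')) % p := by
      rw [Fin.sub_def]
      simp [Fin.val_natCast, Nat.mod_eq_of_lt hj, Nat.mod_eq_of_lt hj', Nat.add_comm]
    rw [hval, Nat.dvd_mod_iff hgp]
    have e : j + p - j' = j + (p - j') := by omega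
    have h1 : (j' ≡ j + p [MOD g]) ↔ (g ∣ j + (p - j')) := by
      rw [← e]
      exact Nat.modEq_iff_dvd' (by omega)
    rw [← h1]
    unfold Nat.ModEq
    rw [ht, Nat.add_mul_mod_self_left]
    exact ⟨fun hh => hh.symm, fun hh => hh.symm⟩
  -- g < k
  have hgd : g ∣ (((j₁:ℕ):Fin p) - ((j₀:ℕ):Fin p)).val := hgdvd _ hshift₁
  have hmodeq : j₁ % g = j₀ % g := (hdist j₁ j₀ (lt_of_lt_of_le hj₁mem hkp)
    (lt_of_lt_of_le hj₀mem hkp)).mp hgd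
  have hgk : g < k := by
    rcases Nat.lt_or_ge j₀ j₁ with h | h
    · have : g ∣ j₁ - j₀ := (Nat.modEq_iff_dvd' (le_of_lt h)).mp hmodeq.symm
      have := Nat.le_of_dvd (by omega) this
      omega
    · have hlt : j₁ < j₀ := by omega
      have : g ∣ j₀ - j₁ := (Nat.modEq_iff_dvd' (le_of_lt hlt)).mp hmodeq
      have := Nat.le_of_dvd (by omega) this
      omega
  -- bound for good j
  have hgood : ∀ j ∈ range k, j % g ≠ j₀ % g → 2 * (p / g) ≤ cutf A B j := by
    intro j hjmem hmodne
    rw [Finset.mem_range] at hjmem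
    set d : Fin p := ((j:ℕ):Fin p) - ((j₀:ℕ):Fin p) with hd
    have hns : ¬ ShiftNat B d.val := fun hs =>
      hmodne ((hdist j j₀ (lt_of_lt_of_le hjmem hkp) (lt_of_lt_of_le hj₀mem hkp)).mp (hgdvd _ hs))
    have hDpne : (Dp B d).Nonempty := by
      rw [Finset.nonempty_iff_ne_empty]
      exact fun h => hns (shift_of_Dp_empty h)
    have hDmne : (Dm B d).Nonempty := by
      rw [Finset.nonempty_iff_ne_empty]
      exact fun h => hns (shift_of_Dm_empty h)
    have hinvp : ShiftNat (Dp B d) g := by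
      intro i
      simp only [Dp, Finset.mem_filter, Finset.mem_univ, true_and]
      rw [add_right_comm]
      constructor
      · rintro ⟨h1, h2⟩
        exact ⟨(hgshift i).mp h1, fun hc => h2 ((hgshift (i+d)).mpr hc)⟩
      · rintro ⟨h1, h2⟩
        exact ⟨(hgshift i).mpr h1, fun hc => h2 ((hgshift (i+d)).mp hc)⟩
    have hinvm : ShiftNat (Dm B d) g := by
      intro i
      simp only [Dm, Finset.mem_filter, Finset.mem_univ, true_and]
      rw [add_right_comm]
      constructor
      · rintro ⟨h1, h2⟩
        exact ⟨fun hc => h1 ((hgshift i).mpr hc), (hgshift (i+d)).mp h2⟩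
      · rintro ⟨h1, h2⟩
        exact ⟨fun hc => h1 ((hgshift i).mp hc), (hgshift (i+d)).mpr h2⟩
    have hc1 : p / g ≤ (Dp B d).card := card_of_shift hgpos hgp hinvp hDpne
    have hc2 : p / g ≤ (Dm B d).card := card_of_shift hgpos hgp hinvm hDmne
    rw [hstep j, hsplit_lemma, ← hd]
    omega
  -- count bad j's
  have hbadcard : ((range k).filter (fun j => j % g = j₀ % g)).card ≤ (k-1)/g + 1 := by
    have key : ((range k).filter (fun j => j % g = j₀ % g)).card
        ≤ (range ((k-1)/g + 1)).card := by
      apply Finset.card_le_card_of_injOn (fun j => j / g)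
      · intro j hj
        simp only [Finset.mem_coe, Finset.mem_filter, Finset.mem_range] at hj ⊢
        have h1 : j ≤ k - 1 := by omega
        have := Nat.div_le_div_right (c := g) h1
        omega
      · intro a ha b hb hab
        simp only [Finset.mem_coe, Finset.mem_filter, Finset.mem_range] at ha hb
        dsimp only at hab
        have h1 := Nat.mod_add_div a g
        have h2 := Nat.mod_add_div b g
        have h3 : g * (a / g) = g * (b / g) := by rw [hab]
        omega
    simpa using key
  set good := (range k).filter (fun j => ¬ (j % g = j₀ % g)) with hgooddef
  have hcards : ((range k).filter (fun j => j % g = j₀ % g)).card + good.card = k := by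
    rw [hgooddef, ← Finset.card_union_of_disjoint (Finset.disjoint_filter_filter_not _ _ _),
      Finset.filter_union_filter_not_eq, Finset.card_range]
  have hgoodcard : k - 1 - (k-1)/g ≤ good.card := by omega
  have hsum : good.card * (2 * (p/g)) ≤ ∑ j ∈ good, cutf A B j := by
    calc good.card * (2*(p/g)) = ∑ _j ∈ good, 2*(p/g) := by
          rw [Finset.sum_const, smul_eq_mul]
      _ ≤ _ := Finset.sum_le_sum (fun j hj =>
          hgood j (Finset.mem_of_mem_filter j hj) (by
            have := Finset.mem_filter.mp hj; exact this.2))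
  have hsub2 : ∑ j ∈ good, cutf A B j ≤ ∑ j ∈ range k, cutf A B j :=
    Finset.sum_le_sum_of_subset (Finset.filter_subset _ _)
  -- final arithmetic
  set q := (k-1)/g with hq
  set t := p / g with htdef
  have hq1 : 1 ≤ q := (Nat.one_le_div_iff hgpos).mpr (by omega)
  have hqg : q * g + (k-1) % g = k - 1 := by rw [hq, mul_comm]; exact Nat.div_add_mod _ _
  have hrl : (k-1) % g < g := Nat.mod_lt _ hgpos
  have e1 : q ≤ q * g := Nat.le_mul_of_pos_right q hgpos
  have e2 : (g - 1) ≤ q * (g - 1) := Nat.le_mul_of_pos_left (g-1) hq1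
  have e3 : q * (g-1) + q = q * g := by
    rw [Nat.mul_sub, mul_one]; omega
  have h1 : g - 1 ≤ k - 1 - q := by omega
  have h2 : g ≤ 2 * (k - 1 - q) := by omega
  have hgt : g * t = p := Nat.mul_div_cancel' hgp
  have h3 : g * t ≤ (2 * (k-1-q)) * t := Nat.mul_le_mul_right t h2
  have h4 : (2*(k-1-q)) * t = (k-1-q) * (2*t) := by ring
  have h5 : k ≤ (k-1-q) * (2*t) := by omega
  have h6 : (k-1-q) * (2*t) ≤ good.card * (2*t) := Nat.mul_le_mul_right _ hgoodcard
  omega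

end Shift

section Graph

variable {k p : ℕ} [NeZero p]

theorem gkp_adj {a b : Fin p ⊕ Fin p} :
    (Gkp k p).Adj a b ↔ ∃ (i : Fin p) (j : ℕ), j < k ∧
      ((a = Sum.inl i ∧ b = Sum.inr (i + (j : Fin p))) ∨
       (b = Sum.inl i ∧ a = Sum.inr (i + (j : Fin p)))) := by
  rw [Gkp, SimpleGraph.fromRel_adj]
  constructor
  · rintro ⟨hne, h | h⟩
    · obtain ⟨i, x, rfl, rfl, j, hj, hx⟩ := h
      refine ⟨i, j, hj, Or.inl ⟨rfl, ?_⟩⟩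
      congr 1
      apply Fin.val_injective
      rw [val_add_cast]
      exact hx
    · obtain ⟨i, x, rfl, rfl, j, hj, hx⟩ := h
      refine ⟨i, j, hj, Or.inr ⟨rfl, ?_⟩⟩
      congr 1
      apply Fin.val_injective
      rw [val_add_cast]
      exact hx
  · rintro ⟨i, j, hj, ⟨rfl, rfl⟩ | ⟨rfl, rfl⟩⟩
    · exact ⟨by simp, Or.inl ⟨i, _, rfl, rfl, j, hj, (val_add_cast i j).symm ▸ rfl⟩⟩
    · exact ⟨by simp, Or.inr ⟨i, _, rfl, rfl, j, hj, (val_add_cast i j).symm ▸ rfl⟩⟩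

/-- the star of edges at `w_i` -/
def starW (k : ℕ) (i : Fin p) : Finset (Sym2 (Fin p ⊕ Fin p)) :=
  (range k).image (fun j : ℕ => s(Sum.inl i, Sum.inr (i + ((j:ℕ) : Fin p))))

theorem starW_card (hkp : k ≤ p) (i : Fin p) : (starW k i).card = k := by
  rw [starW, Finset.card_image_of_injOn, Finset.card_range]
  intro a ha b hb hab
  simp only [Finset.mem_coe, Finset.mem_range] at ha hb
  simp only [Sym2.eq, Sym2.rel_iff', Prod.mk.injEq, Prod.swap_prod_mk] at hab
  rcases hab with ⟨-, h⟩ | ⟨h, -⟩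
  · have h2 : (i + ((a:ℕ) : Fin p)).val = (i + ((b:ℕ) : Fin p)).val := by
      rw [Sum.inr.injEq] at h; rw [h]
    rw [val_add_cast, val_add_cast] at h2
    have h3 : a % p = b % p := Nat.ModEq.add_left_cancel' i.val h2
    rw [Nat.mod_eq_of_lt (by omega), Nat.mod_eq_of_lt (by omega)] at h3
    exact h3
  · simp at h

theorem starW_subset (i : Fin p) : ↑(starW k i) ⊆ (Gkp k p).edgeSet := by
  intro f hf
  simp only [starW, Finset.coe_image, Set.mem_image, Finset.mem_coe, Finset.mem_range] at hf
  obtain ⟨j, hj, rfl⟩ := hf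
  rw [SimpleGraph.mem_edgeSet, gkp_adj]
  exact ⟨i, j, hj, Or.inl ⟨rfl, rfl⟩⟩

theorem isolated_not_connected {V : Type*} (G : SimpleGraph V) (v u : V)
    (hiso : ∀ b, ¬ G.Adj v b) (hne : v ≠ u) : ¬ G.Connected := by
  intro hconn
  obtain ⟨w⟩ := hconn.preconnected v u
  cases w with
  | nil => exact hne rfl
  | cons h _ => exact hiso _ h

theorem starW_isolates (i : Fin p) (b : Fin p ⊕ Fin p) :
    ¬ ((Gkp k p).deleteEdges (↑(starW k i) : Set (Sym2 (Fin p ⊕ Fin p)))).Adj (Sum.inl i) b := by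
  intro h
  rw [SimpleGraph.deleteEdges_adj] at h
  obtain ⟨hadj, hmem⟩ := h
  rw [gkp_adj] at hadj
  obtain ⟨i', j, hj, ⟨hi', rfl⟩ | ⟨hb, hi'⟩⟩ := hadj
  · rw [Sum.inl.injEq] at hi'
    subst hi'
    exact hmem (by
      simp only [starW, Finset.coe_image, Set.mem_image, Finset.mem_coe, Finset.mem_range]
      exact ⟨j, hj, rfl⟩)
  · exact Sum.inl_ne_inr hi'


theorem cut_ge (hk : 3 ≤ k) (hkp : k ≤ p) (F : Set (Sym2 (Fin p ⊕ Fin p)))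
    (hF : F ⊆ (Gkp k p).edgeSet) (hdis : ¬ ((Gkp k p).deleteEdges F).Connected) :
    k ≤ F.ncard := by
  classical
  haveI : Nonempty (Fin p ⊕ Fin p) := ⟨Sum.inl ⟨0, Nat.pos_of_ne_zero (NeZero.ne p)⟩⟩
  set G' := (Gkp k p).deleteEdges F with hG'
  have hpre : ¬ G'.Preconnected := fun hp => hdis ⟨hp⟩
  unfold SimpleGraph.Preconnected at hpre
  push_neg at hpre
  obtain ⟨u, v, huv⟩ := hpre
  set S : Set (Fin p ⊕ Fin p) := {w | G'.Reachable u w} with hS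
  set A := univ.filter (fun i : Fin p => Sum.inl i ∈ S) with hA
  set B := univ.filter (fun x : Fin p => Sum.inr x ∈ S) with hB
  have hcross : ∀ (i : Fin p) (j : ℕ), j < k → ¬((i ∈ A) ↔ (i + ((j:ℕ):Fin p) ∈ B)) →
      s(Sum.inl i, Sum.inr (i + ((j:ℕ):Fin p))) ∈ F := by
    intro i j hj hx
    by_contra hnF
    have hadj : G'.Adj (Sum.inl i) (Sum.inr (i + ((j:ℕ):Fin p))) := by
      rw [hG', SimpleGraph.deleteEdges_adj]
      exact ⟨gkp_adj.mpr ⟨i, j, hj, Or.inl ⟨rfl, rfl⟩⟩, hnF⟩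
    apply hx
    simp only [hA, hB, Finset.mem_filter, Finset.mem_univ, true_and, hS, Set.mem_setOf_eq]
    exact ⟨fun h => h.trans hadj.reachable, fun h => h.trans hadj.symm.reachable⟩
  -- nontriviality of (A, B)
  have hne : A.Nonempty ∨ B.Nonempty := by
    cases hu : u with
    | inl i => exact Or.inl ⟨i, by simp only [hA, Finset.mem_filter, Finset.mem_univ, true_and,
        hS, Set.mem_setOf_eq, ← hu]; exact SimpleGraph.Reachable.refl u⟩
    | inr x => exact Or.inr ⟨x, by simp only [hB, Finset.mem_filter, Finset.mem_univ, true_and,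
        hS, Set.mem_setOf_eq, ← hu]; exact SimpleGraph.Reachable.refl u⟩
  have hnf : A ≠ univ ∨ B ≠ univ := by
    by_contra hcon
    push_neg at hcon
    obtain ⟨hAu, hBu⟩ := hcon
    apply huv
    cases hv : v with
    | inl i =>
      have : i ∈ A := hAu ▸ Finset.mem_univ i
      simp only [hA, Finset.mem_filter, hS, Set.mem_setOf_eq] at this
      exact this.2
    | inr x =>
      have : x ∈ B := hBu ▸ Finset.mem_univ x
      simp only [hB, Finset.mem_filter, hS, Set.mem_setOf_eq] at this
      exact this.2
  have hmain : k ≤ ∑ j ∈ range k, cutf A B j := cut_lower hk hkp A B hne hnf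
  -- the sigma finset of crossing pairs
  set P := (range k).sigma (fun j : ℕ =>
    univ.filter (fun i : Fin p => ¬((i ∈ A) ↔ (i + ((j:ℕ):Fin p) ∈ B)))) with hP
  have hPcard : P.card = ∑ j ∈ range k, cutf A B j := by
    rw [hP, Finset.card_sigma]
    apply Finset.sum_congr rfl
    intro j _
    unfold cutf
    congr 1
  -- injection of P into F
  set φ : (Σ _ : ℕ, Fin p) → Sym2 (Fin p ⊕ Fin p) :=
    fun q => s(Sum.inl q.2, Sum.inr (q.2 + ((q.1:ℕ) : Fin p))) with hφ
  have hmaps : ∀ q ∈ P, φ q ∈ F := by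
    rintro ⟨j, i⟩ hq
    rw [hP, Finset.mem_sigma] at hq
    obtain ⟨hj, hi⟩ := hq
    rw [Finset.mem_range] at hj
    rw [Finset.mem_filter] at hi
    exact hcross i j hj hi.2
  have hinj : Set.InjOn φ ↑P := by
    rintro ⟨j, i⟩ hq ⟨j', i'⟩ hq' heq
    simp only [Finset.mem_coe, hP, Finset.mem_sigma, Finset.mem_range] at hq hq'
    simp only [hφ, Sym2.eq, Sym2.rel_iff', Prod.mk.injEq, Prod.swap_prod_mk] at heq
    rcases heq with ⟨h1, h2⟩ | ⟨h1, -⟩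
    · rw [Sum.inl.injEq] at h1
      subst h1
      rw [Sum.inr.injEq] at h2
      have h3 : (i + ((j:ℕ):Fin p)).val = (i + ((j':ℕ):Fin p)).val := by rw [h2]
      rw [val_add_cast, val_add_cast] at h3
      have h4 : j % p = j' % p := Nat.ModEq.add_left_cancel' i.val h3
      rw [Nat.mod_eq_of_lt (by omega), Nat.mod_eq_of_lt (by omega)] at h4
      subst h4
      rfl
    · exact absurd h1 (Sum.inl_ne_inr)
  calc k ≤ P.card := hPcard ▸ hmain
    _ = (↑P : Set (Σ _ : ℕ, Fin p)).ncard := (Set.ncard_coe_finset _).symm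
    _ = (φ '' ↑P).ncard := (Set.ncard_image_of_injOn hinj).symm
    _ ≤ F.ncard := Set.ncard_le_ncard (fun f hf => by
        obtain ⟨q, hq, rfl⟩ := hf
        exact hmaps q hq) (Set.toFinite F)

end Graph

theorem Gkp_minimally_k_edge_connected (k p : ℕ) (hk : 3 ≤ k) (hkp : k ≤ p) :
    MinimallyKEdgeConnected (Gkp k p) k := by
  haveI : NeZero p := ⟨by omega⟩
  haveI : Nonempty (Fin p ⊕ Fin p) := ⟨Sum.inl ⟨0, by omega⟩⟩
  have hmem : ∀ i : Fin p,
      ¬ ((Gkp k p).deleteEdges (↑(starW k i) : Set (Sym2 (Fin p ⊕ Fin p)))).Connected := fun i =>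
    isolated_not_connected _ (Sum.inl i) (Sum.inr i) (starW_isolates i) (by simp)
  have hwit : k ∈ {n | ∃ F : Set (Sym2 (Fin p ⊕ Fin p)), F ⊆ (Gkp k p).edgeSet ∧ F.ncard = n ∧
      ¬ ((Gkp k p).deleteEdges F).Connected} :=
    ⟨↑(starW k (0:Fin p)), starW_subset _,
      by rw [Set.ncard_coe_finset, starW_card hkp], hmem 0⟩
  constructor
  · apply le_antisymm
    · exact Nat.sInf_le hwit
    · apply le_csInf ⟨k, hwit⟩
      rintro n ⟨F, hF, rfl, hdis⟩
      exact cut_ge hk hkp F hF hdis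
  · intro e he
    obtain ⟨i, j, hj, rfl⟩ : ∃ (i : Fin p) (j : ℕ), j < k ∧
        e = s(Sum.inl i, Sum.inr (i + ((j:ℕ):Fin p))) := by
      induction e using Sym2.ind with
      | _ a b =>
        rw [SimpleGraph.mem_edgeSet, gkp_adj] at he
        obtain ⟨i, j, hj, ⟨rfl, rfl⟩ | ⟨rfl, rfl⟩⟩ := he
        · exact ⟨i, j, hj, rfl⟩
        · exact ⟨i, j, hj, Sym2.eq_swap⟩
    set e := s(Sum.inl i, Sum.inr (i + ((j:ℕ):Fin p))) with hedef
    have hestar : e ∈ starW k i := by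
      simp only [starW, Finset.mem_image, Finset.mem_range]
      exact ⟨j, hj, rfl⟩
    have hle : edgeConn ((Gkp k p).deleteEdges {e}) ≤ k - 1 := by
      apply Nat.sInf_le
      refine ⟨↑((starW k i).erase e), ?_, ?_, ?_⟩
      · intro f hf
        simp only [Finset.coe_erase, Set.mem_diff, Finset.mem_coe,
          Set.mem_singleton_iff] at hf
        rw [SimpleGraph.edgeSet_deleteEdges]
        exact ⟨starW_subset i hf.1, hf.2⟩
      · rw [Set.ncard_coe_finset, Finset.card_erase_of_mem hestar, starW_card hkp]
      · rw [SimpleGraph.deleteEdges_deleteEdges]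
        have hU : ({e} : Set (Sym2 (Fin p ⊕ Fin p))) ∪ ↑((starW k i).erase e)
            = ↑(starW k i) := by
          ext f
          simp only [Set.mem_union, Set.mem_singleton_iff, Finset.coe_erase, Set.mem_diff,
            Finset.mem_coe]
          constructor
          · rintro (rfl | ⟨h, -⟩)
            · exact hestar
            · exact h
          · intro h
            by_cases hfe : f = e
            · exact Or.inl hfe
            · exact Or.inr ⟨h, hfe⟩
        rw [hU]
        exact hmem i
    omega


end AvgConn
end

section
/- Let 3 ≤ k ≤ p and let Γ_{k,p} be the graph on vertex set W ∪ X_1 ∪ X_2 ∪ X_3, where W = {w_0,…,w_{p−1}} and each X_m = {x^m_0,…,x^m_{p−1}}, and where w_i is adjacent to x^m_{i+j mod p} for all m ∈ {1,2,3} and 0 ≤ j ≤ k−1. Then Γ_{k,p} is minimally k-edge-connected. -/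
namespace AvgConn

/-- The graph `Γ_{k,p}`: three copies of `G_{k,p}` sharing the vertex set `W`.  The vertices of
`W` are given by `Sum.inl`, and the vertex `x^m_t` by `Sum.inr (m, t)`; `w_i` is adjacent to
`x^m_{(i+j) mod p}` for all `m` and `0 ≤ j ≤ k-1`. -/
def Gamma (k p : ℕ) : SimpleGraph (Fin p ⊕ Fin 3 × Fin p) :=
  SimpleGraph.fromRel (fun a b => ∃ (i : Fin p) (m : Fin 3) (x : Fin p),
    a = Sum.inl i ∧ b = Sum.inr (m, x) ∧ ∃ j, j < k ∧ (x : ℕ) = ((i : ℕ) + j) % p)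

private lemma eq_of_mod_eq' {p a b : ℕ} (ha : 0 < a) (ha' : a ≤ p) (hb : 0 < b) (hb' : b ≤ p)
    (h : a % p = b % p) : a = b := by
  rcases eq_or_lt_of_le ha' with rfl | hap
  · rcases eq_or_lt_of_le hb' with rfl | hbp
    · rfl
    · rw [Nat.mod_self, Nat.mod_eq_of_lt hbp] at h; omega
  · rcases eq_or_lt_of_le hb' with rfl | hbp
    · rw [Nat.mod_self, Nat.mod_eq_of_lt hap] at h; omega
    · rwa [Nat.mod_eq_of_lt hap, Nat.mod_eq_of_lt hbp] at h

private lemma cancel_mod {p t a b : ℕ} (h : (t + a) % p = (t + b) % p) : a % p = b % p :=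
  Nat.ModEq.add_left_cancel' t h

variable {k p : ℕ}

private lemma gamma_adj {i x : Fin p} {m : Fin 3} :
    (Gamma k p).Adj (Sum.inl i) (Sum.inr (m, x)) ↔ ∃ j, j < k ∧ (x : ℕ) = ((i : ℕ) + j) % p := by
  simp [Gamma, SimpleGraph.fromRel_adj]

private lemma adj_inr {y : Fin 3 × Fin p} {c : Fin p ⊕ Fin 3 × Fin p}
    (h : (Gamma k p).Adj (Sum.inr y) c) :
    ∃ i : Fin p, c = Sum.inl i ∧ ∃ j, j < k ∧ ((y.2 : ℕ) = ((i : ℕ) + j) % p) := by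
  rw [Gamma, SimpleGraph.fromRel_adj] at h
  obtain ⟨-, h | h⟩ := h <;>
    obtain ⟨i, m, x, h1, h2, j, hj, hx⟩ := h
  · exact absurd h1 (by simp)
  · cases h1
    cases h2
    exact ⟨i, rfl, j, hj, hx⟩

private def wAt (p : ℕ) (hp : 0 < p) (t : Fin p) (j : ℕ) : Fin p :=
  ⟨((t : ℕ) + (p - j)) % p, Nat.mod_lt _ hp⟩

private def exF (k p : ℕ) (hp : 0 < p) (m : Fin 3) (t : Fin p) :
    Set (Sym2 (Fin p ⊕ Fin 3 × Fin p)) :=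
  Set.range (fun j : Fin k => s(Sum.inl (wAt p hp t (j : ℕ)), Sum.inr (m, t)))

private lemma adj_wAt (hkp : k ≤ p) (hp : 0 < p) {m : Fin 3} {t : Fin p} {j : ℕ} (hj : j < k) :
    (Gamma k p).Adj (Sum.inl (wAt p hp t j)) (Sum.inr (m, t)) := by
  rw [gamma_adj]
  refine ⟨j, hj, ?_⟩
  show (t : ℕ) = (((t : ℕ) + (p - j)) % p + j) % p
  rw [Nat.mod_add_mod, Nat.add_assoc, Nat.sub_add_cancel (le_trans (le_of_lt hj) hkp),
    Nat.add_mod_right, Nat.mod_eq_of_lt t.isLt]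

private lemma exF_subset_edgeSet (hkp : k ≤ p) (hp : 0 < p) {m : Fin 3} {t : Fin p} :
    exF k p hp m t ⊆ (Gamma k p).edgeSet := by
  rintro e ⟨j, rfl⟩
  exact adj_wAt hkp hp j.isLt

private lemma mem_exF_of_adj (hkp : k ≤ p) (hp : 0 < p) {m : Fin 3} {t : Fin p}
    {c : Fin p ⊕ Fin 3 × Fin p} (h : (Gamma k p).Adj (Sum.inr (m, t)) c) :
    s(Sum.inr (m, t), c) ∈ exF k p hp m t := by
  obtain ⟨i, rfl, j, hj, hx⟩ := adj_inr h
  refine ⟨⟨j, hj⟩, ?_⟩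
  have hw : wAt p hp t j = i := by
    apply Fin.ext
    show ((t : ℕ) + (p - j)) % p = (i : ℕ)
    rw [hx, Nat.mod_add_mod, Nat.add_assoc, Nat.add_comm (j : ℕ), Nat.sub_add_cancel
      (le_trans (le_of_lt hj) hkp), Nat.add_mod_right, Nat.mod_eq_of_lt i.isLt]
  show s(Sum.inl (wAt p hp t j), Sum.inr (m, t)) = _
  rw [hw, Sym2.eq_swap]

private lemma ncard_exF (hkp : k ≤ p) (hp : 0 < p) {m : Fin 3} {t : Fin p} :
    (exF k p hp m t).ncard = k := by
  have hinj : Function.Injective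
      (fun j : Fin k => s(Sum.inl (wAt p hp t (j : ℕ)), Sum.inr (m, t))) := by
    intro j1 j2 h
    simp only [Sym2.eq_iff] at h
    rcases h with ⟨h1, -⟩ | ⟨h1, h2⟩
    · have hw : wAt p hp t (j1 : ℕ) = wAt p hp t (j2 : ℕ) := by
        injection h1
      have hv : ((t : ℕ) + (p - (j1 : ℕ))) % p = ((t : ℕ) + (p - (j2 : ℕ))) % p :=
        congrArg Fin.val hw
      have := cancel_mod hv
      have h1' : (j1 : ℕ) < p := lt_of_lt_of_le j1.isLt hkp
      have h2' : (j2 : ℕ) < p := lt_of_lt_of_le j2.isLt hkp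
      have := eq_of_mod_eq' (by omega) (by omega) (by omega) (by omega) this
      exact Fin.ext (by omega)
    · exact absurd h1 (by simp)
  rw [exF, ← Set.image_univ, Set.ncard_image_of_injective _ hinj, Set.ncard_univ,
    Nat.card_eq_fintype_card, Fintype.card_fin]

private lemma not_connected_of_isolated_s13 {V : Type*} {H : SimpleGraph V} {v u : V} (hne : u ≠ v)
    (h : ∀ y, ¬ H.Adj v y) : ¬ H.Connected := by
  intro hc
  obtain ⟨w⟩ := hc.preconnected v u
  cases w with
  | nil => exact hne rfl
  | cons h' _ => exact h _ h'

private lemma not_connected_of_exF_subset (hk : 3 ≤ k) (hkp : k ≤ p) (hp : 0 < p)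
    {m : Fin 3} {t : Fin p} {S : Set (Sym2 (Fin p ⊕ Fin 3 × Fin p))}
    (hS : exF k p hp m t ⊆ S) : ¬ ((Gamma k p).deleteEdges S).Connected := by
  refine not_connected_of_isolated_s13 (v := Sum.inr (m, t)) (u := Sum.inl ⟨0, hp⟩) (by simp) ?_
  intro y hy
  rw [SimpleGraph.deleteEdges_adj] at hy
  exact hy.2 (hS (mem_exF_of_adj hkp hp hy.1))

private lemma sym2_key {a b : Fin p} {y1 y2 : Fin 3 × Fin p}
    (h : s(Sum.inl a, Sum.inr y1) = s((Sum.inl b : Fin p ⊕ Fin 3 × Fin p), Sum.inr y2)) :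
    y1 = y2 := by
  rw [Sym2.eq_iff] at h
  rcases h with ⟨-, h⟩ | ⟨h, -⟩
  · injection h
  · exact absurd h (by simp)

private lemma connected_del (hk : 3 ≤ k) (hkp : k ≤ p)
    (F : Set (Sym2 (Fin p ⊕ Fin 3 × Fin p))) (hF : F.ncard < k) :
    ((Gamma k p).deleteEdges F).Connected := by
  classical
  have hp : 0 < p := by omega
  set H := (Gamma k p).deleteEdges F with hH
  have step3 : ∀ (m : Fin 3) (t : Fin p), ∃ i : Fin p, H.Adj (Sum.inr (m, t)) (Sum.inl i) := by
    intro m t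
    by_contra hcon
    push_neg at hcon
    have hsub : exF k p hp m t ⊆ F := by
      rintro e ⟨j, rfl⟩
      have hadj := adj_wAt (k := k) hkp hp (m := m) (t := t) j.isLt
      by_contra hnot
      refine hcon (wAt p hp t (j : ℕ)) ((SimpleGraph.deleteEdges_adj).mpr ⟨hadj.symm, ?_⟩)
      rwa [Sym2.eq_swap]
    have hle := Set.ncard_le_ncard hsub (Set.toFinite F)
    rw [ncard_exF hkp hp] at hle
    omega
  have step1 : ∀ i : Fin p,
      H.Reachable (Sum.inl i) (Sum.inl ⟨((i : ℕ) + 1) % p, Nat.mod_lt _ hp⟩) := by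
    intro i
    set i1 : Fin p := ⟨((i : ℕ) + 1) % p, Nat.mod_lt _ hp⟩ with hi1
    by_cases hex : ∃ (m : Fin 3) (j : ℕ), 0 < j ∧ j < k ∧
        s(Sum.inl i, Sum.inr (m, (⟨((i : ℕ) + j) % p, Nat.mod_lt _ hp⟩ : Fin p))) ∉ F ∧
        s(Sum.inl i1, Sum.inr (m, (⟨((i : ℕ) + j) % p, Nat.mod_lt _ hp⟩ : Fin p))) ∉ F
    · obtain ⟨m, j, hj0, hjk, hn1, hn2⟩ := hex
      set x : Fin p := ⟨((i : ℕ) + j) % p, Nat.mod_lt _ hp⟩ with hx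
      have a1 : H.Adj (Sum.inl i) (Sum.inr (m, x)) :=
        (SimpleGraph.deleteEdges_adj).mpr ⟨gamma_adj.mpr ⟨j, hjk, rfl⟩, hn1⟩
      have a2 : H.Adj (Sum.inl i1) (Sum.inr (m, x)) := by
        refine (SimpleGraph.deleteEdges_adj).mpr ⟨gamma_adj.mpr ⟨j - 1, by omega, ?_⟩, hn2⟩
        show ((i : ℕ) + j) % p = (((i : ℕ) + 1) % p + (j - 1)) % p
        rw [Nat.mod_add_mod]
        congr 1
        omega
      exact a1.reachable.trans a2.symm.reachable
    · exfalso
      push_neg at hex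
      set g : Fin 3 × Fin (k - 1) → Sym2 (Fin p ⊕ Fin 3 × Fin p) := fun q =>
        if s(Sum.inl i, Sum.inr (q.1,
            (⟨((i : ℕ) + ((q.2 : ℕ) + 1)) % p, Nat.mod_lt _ hp⟩ : Fin p))) ∈ F
        then s(Sum.inl i, Sum.inr (q.1,
            (⟨((i : ℕ) + ((q.2 : ℕ) + 1)) % p, Nat.mod_lt _ hp⟩ : Fin p)))
        else s(Sum.inl i1, Sum.inr (q.1,
            (⟨((i : ℕ) + ((q.2 : ℕ) + 1)) % p, Nat.mod_lt _ hp⟩ : Fin p))) with hg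
      have hshape : ∀ q : Fin 3 × Fin (k - 1), ∃ a : Fin p, g q = s(Sum.inl a, Sum.inr (q.1,
          (⟨((i : ℕ) + ((q.2 : ℕ) + 1)) % p, Nat.mod_lt _ hp⟩ : Fin p))) := by
        intro q
        rw [hg]
        dsimp only
        split_ifs
        · exact ⟨i, rfl⟩
        · exact ⟨i1, rfl⟩
      have hmemF : ∀ q, g q ∈ F := by
        intro q
        rw [hg]
        dsimp only
        split_ifs with h
        · exact h
        · exact hex q.1 ((q.2 : ℕ) + 1) (Nat.succ_pos _) (by have := q.2.isLt; omega) h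
      have hinj : Function.Injective g := by
        intro q1 q2 hq
        obtain ⟨a1, he1⟩ := hshape q1
        obtain ⟨a2, he2⟩ := hshape q2
        rw [he1, he2] at hq
        have hpair := sym2_key hq
        rw [Prod.mk.injEq] at hpair
        obtain ⟨hm, hxx⟩ := hpair
        have hv := congrArg Fin.val hxx
        have hc := cancel_mod hv
        have hlt1 : (q1.2 : ℕ) + 1 < p := by have := q1.2.isLt; omega
        have hlt2 : (q2.2 : ℕ) + 1 < p := by have := q2.2.isLt; omega
        rw [Nat.mod_eq_of_lt hlt1, Nat.mod_eq_of_lt hlt2] at hc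
        exact Prod.ext hm (Fin.ext (by omega))
      have hsub : g '' Set.univ ⊆ F := by
        rintro e ⟨q, -, rfl⟩
        exact hmemF q
      have hle := Set.ncard_le_ncard hsub (Set.toFinite F)
      rw [Set.ncard_image_of_injective _ hinj, Set.ncard_univ, Nat.card_eq_fintype_card] at hle
      simp only [Fintype.card_prod, Fintype.card_fin] at hle
      omega
  have reachn : ∀ n : ℕ,
      H.Reachable (Sum.inl ⟨0, hp⟩) (Sum.inl ⟨n % p, Nat.mod_lt _ hp⟩) := by
    intro n
    induction n with
    | zero =>
      have : (⟨0 % p, Nat.mod_lt _ hp⟩ : Fin p) = ⟨0, hp⟩ := Fin.ext (Nat.zero_mod p)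
      rw [this]
    | succ n ih =>
      refine ih.trans ?_
      have h := step1 ⟨n % p, Nat.mod_lt _ hp⟩
      convert h using 2
      exact Fin.ext (by simp [Nat.mod_add_mod])
  have reach0 : ∀ u, H.Reachable (Sum.inl ⟨0, hp⟩) u := by
    intro u
    have reachl : ∀ i : Fin p, H.Reachable (Sum.inl ⟨0, hp⟩) (Sum.inl i) := by
      intro i
      have := reachn (i : ℕ)
      have he : (⟨(i : ℕ) % p, Nat.mod_lt _ hp⟩ : Fin p) = i := Fin.ext (Nat.mod_eq_of_lt i.isLt)
      rwa [he] at this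
    match u with
    | Sum.inl i => exact reachl i
    | Sum.inr (m, t) =>
      obtain ⟨i, ha⟩ := step3 m t
      exact (reachl i).trans ha.symm.reachable
  haveI : Nonempty (Fin p ⊕ Fin 3 × Fin p) := ⟨Sum.inl ⟨0, hp⟩⟩
  exact SimpleGraph.Connected.mk (fun u v => (reach0 u).symm.trans (reach0 v))

private lemma edge_mem_exF (hkp : k ≤ p) (hp : 0 < p) {e : Sym2 (Fin p ⊕ Fin 3 × Fin p)}
    (he : e ∈ (Gamma k p).edgeSet) : ∃ (m : Fin 3) (t : Fin p), e ∈ exF k p hp m t := by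
  induction e with
  | _ a b =>
    rw [SimpleGraph.mem_edgeSet, Gamma, SimpleGraph.fromRel_adj] at he
    obtain ⟨-, h | h⟩ := he <;> obtain ⟨i, m, x, rfl, rfl, hrel⟩ := h
    · refine ⟨m, x, ?_⟩
      rw [Sym2.eq_swap]
      exact mem_exF_of_adj hkp hp ((gamma_adj.mpr hrel).symm)
    · exact ⟨m, x, mem_exF_of_adj hkp hp ((gamma_adj.mpr hrel).symm)⟩

theorem Gamma_minimally_k_edge_connected (k p : ℕ) (hk : 3 ≤ k) (hkp : k ≤ p) :
    MinimallyKEdgeConnected (Gamma k p) k := by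
  have hp : 0 < p := by omega
  have hmemk : k ∈ {n | ∃ F : Set (Sym2 (Fin p ⊕ Fin 3 × Fin p)),
      F ⊆ (Gamma k p).edgeSet ∧ F.ncard = n ∧ ¬ ((Gamma k p).deleteEdges F).Connected} :=
    ⟨exF k p hp 0 ⟨0, hp⟩, exF_subset_edgeSet hkp hp, ncard_exF hkp hp,
      not_connected_of_exF_subset hk hkp hp (subset_refl _)⟩
  constructor
  · refine le_antisymm (Nat.sInf_le hmemk) ?_
    refine le_csInf ⟨k, hmemk⟩ ?_
    rintro n ⟨F, hFsub, hFcard, hFcon⟩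
    by_contra hlt
    push_neg at hlt
    exact hFcon (connected_del hk hkp F (by omega))
  · intro e he
    obtain ⟨m, t, hmem⟩ := edge_mem_exF hkp hp he
    have hle : edgeConn ((Gamma k p).deleteEdges {e}) ≤ k - 1 := by
      apply Nat.sInf_le
      refine ⟨exF k p hp m t \ {e}, ?_, ?_, ?_⟩
      · rw [SimpleGraph.edgeSet_deleteEdges]
        exact Set.diff_subset_diff_left (exF_subset_edgeSet hkp hp)
      · rw [Set.ncard_diff_singleton_of_mem hmem, ncard_exF hkp hp]
      · rw [SimpleGraph.deleteEdges_deleteEdges,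
          Set.union_diff_cancel (Set.singleton_subset_iff.mpr hmem)]
        exact not_connected_of_exF_subset hk hkp hp (subset_refl _)
    omega


end AvgConn
end
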